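/- arXiv:2406.15532 — 3 statements merged into one kernel-verified Lean document; each statement's English description precedes it below -/
import Mathlib

section
/- Let G be a nontrivial additive subgroup of ℂ and let λ ∈ ℂ with λ ∉ {0, 1, −1, −2}. Then every transposed Poisson structure on the deformed generalized Heisenberg–Virasoro algebra g(G,λ) is trivial: any commutative associative bilinear multiplication · on g(G,λ) satisfying 2 z·[x,y] = [z·x, y] + [x, z·y] for all x, y, z is identically zero. -/
set_option linter.unusedSectionVars false


open scoped Classical

/-- Index set for the basis of the deformed generalized Heisenberg–Virasoro
algebra `g(G, λ)` (for `λ ∉ {0, 1, -2}`). -/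
inductive DGHVIdx (G : AddSubgroup ℂ) : Type
  | L : G → DGHVIdx G
  | I : G → DGHVIdx G
  | CL : DGHVIdx G

section Aux
variable {G : AddSubgroup ℂ} {lam : ℂ} {Lg : Type*} [LieRing Lg] [LieAlgebra ℂ Lg]
  (bas : Module.Basis (DGHVIdx G) ℂ Lg)

variable
    (hLL : ∀ a b : G, ⁅bas (DGHVIdx.L a), bas (DGHVIdx.L b)⁆ =
      ((b : ℂ) - (a : ℂ)) • bas (DGHVIdx.L (a + b)) +
        (if a + b = 0 then ((a : ℂ) ^ 3 - (a : ℂ)) / 12 else 0) • bas DGHVIdx.CL)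
    (hLI : ∀ a b : G, ⁅bas (DGHVIdx.L a), bas (DGHVIdx.I b)⁆ =
      ((b : ℂ) - lam * (a : ℂ)) • bas (DGHVIdx.I (a + b)))
    (hII : ∀ a b : G, ⁅bas (DGHVIdx.I a), bas (DGHVIdx.I b)⁆ = 0)
    (hCL : ∀ x : Lg, ⁅bas DGHVIdx.CL, x⁆ = 0)

include hLL hLI hII hCL

theorem reprEL (a i : G) (w : Lg) :
    bas.repr ⁅bas (DGHVIdx.L a), w⁆ (DGHVIdx.L i)
      = ((i : ℂ) - 2 * a) * bas.repr w (DGHVIdx.L (i - a)) := by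
  suffices h : (Finsupp.lapply (DGHVIdx.L i)).comp
      ((bas.repr : Lg →ₗ[ℂ] (DGHVIdx G →₀ ℂ)).comp (LieAlgebra.ad ℂ Lg (bas (DGHVIdx.L a))))
      = ((i : ℂ) - 2 * a) • ((Finsupp.lapply (DGHVIdx.L (i - a))).comp
      (bas.repr : Lg →ₗ[ℂ] (DGHVIdx G →₀ ℂ))) by
    simpa using LinearMap.congr_fun h w
  refine bas.ext fun j => ?_
  cases j with
  | L b =>
    simp only [LinearMap.comp_apply, LieAlgebra.ad_apply, LinearMap.smul_apply,
      LinearEquiv.coe_coe, Finsupp.lapply_apply, hLL a b, map_add, map_smul,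
      Module.Basis.repr_self, Finsupp.smul_apply, Finsupp.single_apply, smul_eq_mul]
    rcases eq_or_ne b (i - a) with hb | hb
    · subst hb
      have h1 : a + (i - a) = i := by abel
      have h2 : ((i - a : G) : ℂ) = (i : ℂ) - a := by push_cast; ring
      simp only [h1, if_true, if_false, mul_zero, mul_one, h2, if_pos rfl]
      ring_nf
      simp
    · have h1 : ¬ (a + b = i) := fun h => hb (by rw [← h]; abel)
      simp [h1, hb]
  | I b =>
    simp [LieAlgebra.ad_apply, hLI a b, Finsupp.single_apply]
  | CL =>
    have : ⁅bas (DGHVIdx.L a), bas DGHVIdx.CL⁆ = 0 := by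
      rw [← lie_skew, hCL, neg_zero]
    simp [LieAlgebra.ad_apply, this]

theorem reprEI (a i : G) (w : Lg) :
    bas.repr ⁅bas (DGHVIdx.L a), w⁆ (DGHVIdx.I i)
      = ((i : ℂ) - (1 + lam) * a) * bas.repr w (DGHVIdx.I (i - a)) := by
  suffices h : (Finsupp.lapply (DGHVIdx.I i)).comp
      ((bas.repr : Lg →ₗ[ℂ] (DGHVIdx G →₀ ℂ)).comp (LieAlgebra.ad ℂ Lg (bas (DGHVIdx.L a))))
      = ((i : ℂ) - (1 + lam) * a) • ((Finsupp.lapply (DGHVIdx.I (i - a))).comp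
      (bas.repr : Lg →ₗ[ℂ] (DGHVIdx G →₀ ℂ))) by
    simpa using LinearMap.congr_fun h w
  refine bas.ext fun j => ?_
  cases j with
  | L b =>
    rcases eq_or_ne (a + b) 0 with h | h <;>
      simp [LieAlgebra.ad_apply, hLL a b, h, Finsupp.single_apply]
  | I b =>
    simp only [LinearMap.comp_apply, LieAlgebra.ad_apply, LinearMap.smul_apply,
      LinearEquiv.coe_coe, Finsupp.lapply_apply, hLI a b, map_smul,
      Module.Basis.repr_self, Finsupp.smul_apply, Finsupp.single_apply, smul_eq_mul]
    rcases eq_or_ne b (i - a) with hb | hb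
    · subst hb
      have h1 : a + (i - a) = i := by abel
      have h2 : ((i - a : G) : ℂ) = (i : ℂ) - a := by push_cast; ring
      simp only [h1, if_pos rfl, h2, mul_one]
      ring
    · have h1 : ¬ (a + b = i) := fun h => hb (by rw [← h]; abel)
      simp [h1, hb]
  | CL =>
    have : ⁅bas (DGHVIdx.L a), bas DGHVIdx.CL⁆ = 0 := by
      rw [← lie_skew, hCL, neg_zero]
    simp [LieAlgebra.ad_apply, this]

theorem reprEC (a : G) (w : Lg) :
    bas.repr ⁅bas (DGHVIdx.L a), w⁆ DGHVIdx.CL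
      = ((a : ℂ) ^ 3 - (a : ℂ)) / 12 * bas.repr w (DGHVIdx.L (-a)) := by
  suffices h : (Finsupp.lapply (DGHVIdx.CL : DGHVIdx G)).comp
      ((bas.repr : Lg →ₗ[ℂ] (DGHVIdx G →₀ ℂ)).comp (LieAlgebra.ad ℂ Lg (bas (DGHVIdx.L a))))
      = (((a : ℂ) ^ 3 - (a : ℂ)) / 12) • ((Finsupp.lapply (DGHVIdx.L (-a))).comp
      (bas.repr : Lg →ₗ[ℂ] (DGHVIdx G →₀ ℂ))) by
    simpa using LinearMap.congr_fun h w
  refine bas.ext fun j => ?_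
  cases j with
  | L b =>
    simp only [LinearMap.comp_apply, LieAlgebra.ad_apply, LinearMap.smul_apply,
      LinearEquiv.coe_coe, Finsupp.lapply_apply, hLL a b, map_add, map_smul,
      Module.Basis.repr_self, Finsupp.smul_apply, Finsupp.single_apply, smul_eq_mul]
    rcases eq_or_ne b (-a) with hb | hb
    · subst hb
      have h1 : a + (-a) = 0 := by abel
      simp [h1]
    · have h1 : ¬ (a + b = 0) := fun h => hb (by rw [← neg_eq_of_add_eq_zero_right h])
      simp [h1, hb]
  | I b =>
    simp [LieAlgebra.ad_apply, hLI a b, Finsupp.single_apply]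
  | CL =>
    have : ⁅bas (DGHVIdx.L a), bas DGHVIdx.CL⁆ = 0 := by
      rw [← lie_skew, hCL, neg_zero]
    simp [LieAlgebra.ad_apply, this]

theorem reprFL (a i : G) (w : Lg) :
    bas.repr ⁅bas (DGHVIdx.I a), w⁆ (DGHVIdx.L i) = 0 := by
  suffices h : (Finsupp.lapply (DGHVIdx.L i)).comp
      ((bas.repr : Lg →ₗ[ℂ] (DGHVIdx G →₀ ℂ)).comp (LieAlgebra.ad ℂ Lg (bas (DGHVIdx.I a))))
      = 0 by
    simpa using LinearMap.congr_fun h w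
  refine bas.ext fun j => ?_
  cases j with
  | L b =>
    have : ⁅bas (DGHVIdx.I a), bas (DGHVIdx.L b)⁆
        = -(((a : ℂ) - lam * b) • bas (DGHVIdx.I (b + a))) := by
      rw [← lie_skew, hLI b a]
    simp [LieAlgebra.ad_apply, this, Finsupp.single_apply]
  | I b =>
    simp [LieAlgebra.ad_apply, hII a b]
  | CL =>
    have : ⁅bas (DGHVIdx.I a), bas DGHVIdx.CL⁆ = 0 := by
      rw [← lie_skew, hCL, neg_zero]
    simp [LieAlgebra.ad_apply, this]

theorem reprFC (a : G) (w : Lg) :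
    bas.repr ⁅bas (DGHVIdx.I a), w⁆ DGHVIdx.CL = 0 := by
  suffices h : (Finsupp.lapply (DGHVIdx.CL : DGHVIdx G)).comp
      ((bas.repr : Lg →ₗ[ℂ] (DGHVIdx G →₀ ℂ)).comp (LieAlgebra.ad ℂ Lg (bas (DGHVIdx.I a))))
      = 0 by
    simpa using LinearMap.congr_fun h w
  refine bas.ext fun j => ?_
  cases j with
  | L b =>
    have : ⁅bas (DGHVIdx.I a), bas (DGHVIdx.L b)⁆
        = -(((a : ℂ) - lam * b) • bas (DGHVIdx.I (b + a))) := by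
      rw [← lie_skew, hLI b a]
    simp [LieAlgebra.ad_apply, this, Finsupp.single_apply]
  | I b =>
    simp [LieAlgebra.ad_apply, hII a b]
  | CL =>
    have : ⁅bas (DGHVIdx.I a), bas DGHVIdx.CL⁆ = 0 := by
      rw [← lie_skew, hCL, neg_zero]
    simp [LieAlgebra.ad_apply, this]

theorem reprFI (a i : G) (w : Lg) :
    bas.repr ⁅bas (DGHVIdx.I a), w⁆ (DGHVIdx.I i)
      = (lam * ((i : ℂ) - a) - a) * bas.repr w (DGHVIdx.L (i - a)) := by
  suffices h : (Finsupp.lapply (DGHVIdx.I i)).comp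
      ((bas.repr : Lg →ₗ[ℂ] (DGHVIdx G →₀ ℂ)).comp (LieAlgebra.ad ℂ Lg (bas (DGHVIdx.I a))))
      = (lam * ((i : ℂ) - a) - a) • ((Finsupp.lapply (DGHVIdx.L (i - a))).comp
      (bas.repr : Lg →ₗ[ℂ] (DGHVIdx G →₀ ℂ))) by
    simpa using LinearMap.congr_fun h w
  refine bas.ext fun j => ?_
  cases j with
  | L b =>
    have hba : ⁅bas (DGHVIdx.I a), bas (DGHVIdx.L b)⁆
        = -(((a : ℂ) - lam * b) • bas (DGHVIdx.I (b + a))) := by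
      rw [← lie_skew, hLI b a]
    simp only [LinearMap.comp_apply, LieAlgebra.ad_apply, LinearMap.smul_apply,
      LinearEquiv.coe_coe, Finsupp.lapply_apply, hba, map_neg, map_smul,
      Module.Basis.repr_self, Finsupp.neg_apply, Finsupp.smul_apply, Finsupp.single_apply,
      smul_eq_mul]
    rcases eq_or_ne b (i - a) with hb | hb
    · subst hb
      have h1 : (i - a) + a = i := by abel
      have h2 : ((i - a : G) : ℂ) = (i : ℂ) - a := by push_cast; ring
      simp only [h1, if_pos rfl, h2, mul_one]
      ring
    · have h1 : ¬ (b + a = i) := fun h => hb (by rw [← h]; abel)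
      simp [h1, hb]
  | I b =>
    simp [LieAlgebra.ad_apply, hII a b, Finsupp.single_apply]
  | CL =>
    have : ⁅bas (DGHVIdx.I a), bas DGHVIdx.CL⁆ = 0 := by
      rw [← lie_skew, hCL, neg_zero]
    simp [LieAlgebra.ad_apply, this]

variable (mul : Lg →ₗ[ℂ] Lg →ₗ[ℂ] Lg)
  (hcompat : ∀ x y z : Lg,
      (2 : ℂ) • mul z ⁅x, y⁆ = ⁅mul z x, y⁆ + ⁅x, mul z y⁆)

/-- coefficient of `mul z (bas j)` at basis index `i` -/
noncomputable def dd (z : Lg) (j i : DGHVIdx G) : ℂ := bas.repr (mul z (bas j)) i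

omit hLL hLI hII hCL in
theorem reprSkew (w : Lg) (j : DGHVIdx G) (i : DGHVIdx G) :
    bas.repr ⁅w, bas j⁆ i = - bas.repr ⁅bas j, w⁆ i := by
  rw [← lie_skew w (bas j), map_neg, Finsupp.neg_apply]

include hcompat in
theorem eqLL (z : Lg) (a b : G) (i : DGHVIdx G) :
    2 * (((b : ℂ) - a) * dd bas mul z (DGHVIdx.L (a + b)) i
        + (if a + b = 0 then ((a : ℂ) ^ 3 - (a : ℂ)) / 12 else 0) * dd bas mul z DGHVIdx.CL i)
      = bas.repr ⁅mul z (bas (DGHVIdx.L a)), bas (DGHVIdx.L b)⁆ i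
        + bas.repr ⁅bas (DGHVIdx.L a), mul z (bas (DGHVIdx.L b))⁆ i := by
  have h := hcompat (bas (DGHVIdx.L a)) (bas (DGHVIdx.L b)) z
  rw [hLL a b] at h
  split_ifs at h with hab
  · rw [if_pos hab]
    have h2 := congrArg (fun v => bas.repr v i) h
    simp only [map_add, map_smul, smul_eq_mul, Finsupp.add_apply, Finsupp.smul_apply] at h2
    dsimp only [dd]
    linear_combination h2
  · rw [if_neg hab]
    rw [zero_smul, add_zero] at h
    have h2 := congrArg (fun v => bas.repr v i) h
    simp only [map_add, map_smul, smul_eq_mul, Finsupp.add_apply, Finsupp.smul_apply] at h2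
    dsimp only [dd]
    linear_combination h2

include hcompat in
theorem eqLI (z : Lg) (a b : G) (i : DGHVIdx G) :
    2 * (((b : ℂ) - lam * a) * dd bas mul z (DGHVIdx.I (a + b)) i)
      = bas.repr ⁅mul z (bas (DGHVIdx.L a)), bas (DGHVIdx.I b)⁆ i
        + bas.repr ⁅bas (DGHVIdx.L a), mul z (bas (DGHVIdx.I b))⁆ i := by
  have h := hcompat (bas (DGHVIdx.L a)) (bas (DGHVIdx.I b)) z
  rw [hLI a b] at h
  have h2 := congrArg (fun v => bas.repr v i) h
  simp only [map_smul, smul_eq_mul, Finsupp.add_apply, Finsupp.smul_apply, map_add] at h2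
  dsimp only [dd]
  linear_combination h2

include hcompat hCL in
theorem eqLC (z : Lg) (a : G) (i : DGHVIdx G) :
    bas.repr ⁅bas (DGHVIdx.L a), mul z (bas DGHVIdx.CL)⁆ i = 0 := by
  have h := hcompat (bas (DGHVIdx.L a)) (bas DGHVIdx.CL) z
  have hz : ⁅bas (DGHVIdx.L a), bas (DGHVIdx.CL : DGHVIdx G)⁆ = 0 := by
    rw [← lie_skew, hCL, neg_zero]
  have hz2 : ⁅mul z (bas (DGHVIdx.L a)), bas (DGHVIdx.CL : DGHVIdx G)⁆ = 0 := by
    rw [← lie_skew, hCL, neg_zero]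
  rw [hz, hz2] at h
  simp only [map_zero, smul_zero, zero_add] at h
  rw [← h]
  simp

include hcompat in
theorem mLLL (z : Lg) (a b i : G) :
    2 * (((b : ℂ) - a) * dd bas mul z (DGHVIdx.L (a + b)) (DGHVIdx.L i)
        + (if a + b = 0 then ((a : ℂ) ^ 3 - (a : ℂ)) / 12 else 0)
            * dd bas mul z DGHVIdx.CL (DGHVIdx.L i))
      = -(((i : ℂ) - 2 * b) * dd bas mul z (DGHVIdx.L a) (DGHVIdx.L (i - b)))
        + ((i : ℂ) - 2 * a) * dd bas mul z (DGHVIdx.L b) (DGHVIdx.L (i - a)) := by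
  have h := eqLL bas hLL hLI hII hCL mul hcompat z a b (DGHVIdx.L i)
  rw [reprSkew bas (mul z (bas (DGHVIdx.L a))) (DGHVIdx.L b) (DGHVIdx.L i),
    reprEL bas hLL hLI hII hCL b i (mul z (bas (DGHVIdx.L a))),
    reprEL bas hLL hLI hII hCL a i (mul z (bas (DGHVIdx.L b)))] at h
  exact h

include hcompat in
theorem mLLI (z : Lg) (a b i : G) :
    2 * (((b : ℂ) - a) * dd bas mul z (DGHVIdx.L (a + b)) (DGHVIdx.I i)
        + (if a + b = 0 then ((a : ℂ) ^ 3 - (a : ℂ)) / 12 else 0)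
            * dd bas mul z DGHVIdx.CL (DGHVIdx.I i))
      = -(((i : ℂ) - (1 + lam) * b) * dd bas mul z (DGHVIdx.L a) (DGHVIdx.I (i - b)))
        + ((i : ℂ) - (1 + lam) * a) * dd bas mul z (DGHVIdx.L b) (DGHVIdx.I (i - a)) := by
  have h := eqLL bas hLL hLI hII hCL mul hcompat z a b (DGHVIdx.I i)
  rw [reprSkew bas (mul z (bas (DGHVIdx.L a))) (DGHVIdx.L b) (DGHVIdx.I i),
    reprEI bas hLL hLI hII hCL b i (mul z (bas (DGHVIdx.L a))),
    reprEI bas hLL hLI hII hCL a i (mul z (bas (DGHVIdx.L b)))] at h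
  exact h

include hcompat in
theorem mLLC (z : Lg) (a b : G) :
    2 * (((b : ℂ) - a) * dd bas mul z (DGHVIdx.L (a + b)) DGHVIdx.CL
        + (if a + b = 0 then ((a : ℂ) ^ 3 - (a : ℂ)) / 12 else 0)
            * dd bas mul z DGHVIdx.CL DGHVIdx.CL)
      = -(((b : ℂ) ^ 3 - (b : ℂ)) / 12 * dd bas mul z (DGHVIdx.L a) (DGHVIdx.L (-b)))
        + ((a : ℂ) ^ 3 - (a : ℂ)) / 12 * dd bas mul z (DGHVIdx.L b) (DGHVIdx.L (-a)) := by
  have h := eqLL bas hLL hLI hII hCL mul hcompat z a b DGHVIdx.CL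
  rw [reprSkew bas (mul z (bas (DGHVIdx.L a))) (DGHVIdx.L b) DGHVIdx.CL,
    reprEC bas hLL hLI hII hCL b (mul z (bas (DGHVIdx.L a))),
    reprEC bas hLL hLI hII hCL a (mul z (bas (DGHVIdx.L b)))] at h
  exact h

include hcompat in
theorem mLIL (z : Lg) (a b i : G) :
    2 * (((b : ℂ) - lam * a) * dd bas mul z (DGHVIdx.I (a + b)) (DGHVIdx.L i))
      = ((i : ℂ) - 2 * a) * dd bas mul z (DGHVIdx.I b) (DGHVIdx.L (i - a)) := by
  have h := eqLI bas hLL hLI hII hCL mul hcompat z a b (DGHVIdx.L i)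
  rw [reprSkew bas (mul z (bas (DGHVIdx.L a))) (DGHVIdx.I b) (DGHVIdx.L i),
    reprFL bas hLL hLI hII hCL b i (mul z (bas (DGHVIdx.L a))),
    reprEL bas hLL hLI hII hCL a i (mul z (bas (DGHVIdx.I b)))] at h
  dsimp only [dd] at h ⊢
  linear_combination h

include hcompat in
theorem mLII (z : Lg) (a b i : G) :
    2 * (((b : ℂ) - lam * a) * dd bas mul z (DGHVIdx.I (a + b)) (DGHVIdx.I i))
      = -((lam * ((i : ℂ) - b) - b) * dd bas mul z (DGHVIdx.L a) (DGHVIdx.L (i - b)))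
        + ((i : ℂ) - (1 + lam) * a) * dd bas mul z (DGHVIdx.I b) (DGHVIdx.I (i - a)) := by
  have h := eqLI bas hLL hLI hII hCL mul hcompat z a b (DGHVIdx.I i)
  rw [reprSkew bas (mul z (bas (DGHVIdx.L a))) (DGHVIdx.I b) (DGHVIdx.I i),
    reprFI bas hLL hLI hII hCL b i (mul z (bas (DGHVIdx.L a))),
    reprEI bas hLL hLI hII hCL a i (mul z (bas (DGHVIdx.I b)))] at h
  exact h

include hcompat in
theorem mLIC (z : Lg) (a b : G) :
    2 * (((b : ℂ) - lam * a) * dd bas mul z (DGHVIdx.I (a + b)) DGHVIdx.CL)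
      = ((a : ℂ) ^ 3 - (a : ℂ)) / 12 * dd bas mul z (DGHVIdx.I b) (DGHVIdx.L (-a)) := by
  have h := eqLI bas hLL hLI hII hCL mul hcompat z a b DGHVIdx.CL
  rw [reprSkew bas (mul z (bas (DGHVIdx.L a))) (DGHVIdx.I b) DGHVIdx.CL,
    reprFC bas hLL hLI hII hCL b (mul z (bas (DGHVIdx.L a))),
    reprEC bas hLL hLI hII hCL a (mul z (bas (DGHVIdx.I b)))] at h
  dsimp only [dd] at h ⊢
  linear_combination h

include hcompat in
theorem mLCL (z : Lg) (a i : G) :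
    ((i : ℂ) - 2 * a) * dd bas mul z DGHVIdx.CL (DGHVIdx.L (i - a)) = 0 := by
  have h := eqLC bas hLL hLI hII hCL mul hcompat z a (DGHVIdx.L i)
  rw [reprEL bas hLL hLI hII hCL a i (mul z (bas DGHVIdx.CL))] at h
  exact h

include hcompat in
theorem mLCI (z : Lg) (a i : G) :
    ((i : ℂ) - (1 + lam) * a) * dd bas mul z DGHVIdx.CL (DGHVIdx.I (i - a)) = 0 := by
  have h := eqLC bas hLL hLI hII hCL mul hcompat z a (DGHVIdx.I i)
  rw [reprEI bas hLL hLI hII hCL a i (mul z (bas DGHVIdx.CL))] at h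
  exact h

omit hLL hLI hII hCL in
theorem exG [Nontrivial G] (s : Finset ℂ) : ∃ b : G, (b : ℂ) ∉ s := by
  obtain ⟨g, hg⟩ := exists_ne (0 : G)
  have hgC : (g : ℂ) ≠ 0 := by
    simpa using hg
  have hinj : Function.Injective (fun n : ℕ => (n : ℂ) * g) := by
    intro m n h
    simp only [mul_eq_mul_right_iff, hgC, or_false] at h
    exact_mod_cast h
  have hinf : (Set.range fun n : ℕ => (n : ℂ) * g).Infinite :=
    Set.infinite_range_of_injective hinj
  obtain ⟨x, hx, hxs⟩ := hinf.exists_notMem_finset s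
  obtain ⟨n, rfl⟩ := hx
  refine ⟨n • g, ?_⟩
  have : ((n • g : G) : ℂ) = (n : ℂ) * g := by
    push_cast
    simp [nsmul_eq_mul]
  rw [this]; exact hxs
end Aux

/-- for `λ ∉ {0, 1, -1, -2}`, every transposed Poisson structure
on `g(G, λ)` is trivial. -/
theorem transposedPoisson_dgHV_trivial
    (G : AddSubgroup ℂ) [Nontrivial G]
    (lam : ℂ) (hlam0 : lam ≠ 0) (hlam1 : lam ≠ 1) (hlamm1 : lam ≠ -1)
    (hlam2 : lam ≠ -2)
    (Lg : Type*) [LieRing Lg] [LieAlgebra ℂ Lg]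
    (bas : Module.Basis (DGHVIdx G) ℂ Lg)
    (hLL : ∀ a b : G, ⁅bas (DGHVIdx.L a), bas (DGHVIdx.L b)⁆ =
      ((b : ℂ) - (a : ℂ)) • bas (DGHVIdx.L (a + b)) +
        (if a + b = 0 then ((a : ℂ) ^ 3 - (a : ℂ)) / 12 else 0) • bas DGHVIdx.CL)
    (hLI : ∀ a b : G, ⁅bas (DGHVIdx.L a), bas (DGHVIdx.I b)⁆ =
      ((b : ℂ) - lam * (a : ℂ)) • bas (DGHVIdx.I (a + b)))
    (hII : ∀ a b : G, ⁅bas (DGHVIdx.I a), bas (DGHVIdx.I b)⁆ = 0)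
    (hCL : ∀ x : Lg, ⁅bas DGHVIdx.CL, x⁆ = 0)
    (mul : Lg →ₗ[ℂ] Lg →ₗ[ℂ] Lg)
    (hcomm : ∀ x y : Lg, mul x y = mul y x)
    (hassoc : ∀ x y z : Lg, mul (mul x y) z = mul x (mul y z))
    (hcompat : ∀ x y z : Lg,
      (2 : ℂ) • mul z ⁅x, y⁆ = ⁅mul z x, y⁆ + ⁅x, mul z y⁆) :
    mul = 0 := by
  classical
  obtain ⟨g, hg0⟩ := exists_ne (0 : G)
  have hgC : (g : ℂ) ≠ 0 := by simpa using hg0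
  have hinj : ∀ x y : G, (x : ℂ) = (y : ℂ) → x = y := fun x y h => Subtype.ext h
  have cz : ∀ t : G, t ≠ 0 → (t : ℂ) ≠ 0 := fun t ht => by simpa using ht
  have h1l : (1 : ℂ) + lam ≠ 0 := fun h => hlamm1 (by linear_combination h)
  have hl2 : lam + 2 ≠ 0 := fun h => hlam2 (by linear_combination h)
  have hl1 : lam - 1 ≠ 0 := sub_ne_zero.mpr hlam1
  have pick : ∀ s : Finset ℂ, ∃ b : G, (b : ℂ) ∉ s := fun s => exG s
  have LLL := mLLL bas hLL hLI hII hCL mul hcompat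
  have LLI := mLLI bas hLL hLI hII hCL mul hcompat
  have LLC := mLLC bas hLL hLI hII hCL mul hcompat
  have LIL := mLIL bas hLL hLI hII hCL mul hcompat
  have LII := mLII bas hLL hLI hII hCL mul hcompat
  have LIC := mLIC bas hLL hLI hII hCL mul hcompat
  have LCL := mLCL bas hLL hLI hII hCL mul hcompat
  have LCI := mLCI bas hLL hLI hII hCL mul hcompat
  -- Step A : mul z C has only a CL component
  have DcL : ∀ (z : Lg) (t : G), dd bas mul z DGHVIdx.CL (DGHVIdx.L t) = 0 := by
    intro z t
    have e1 := LCL z g (t + g)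
    have e2 := LCL z (g + g) (t + (g + g))
    rw [show t + g - g = t by abel] at e1
    rw [show t + (g + g) - (g + g) = t by abel] at e2
    push_cast at e1 e2
    rcases mul_eq_zero.mp e1 with h | h
    · rcases mul_eq_zero.mp e2 with h2 | h2
      · exact absurd (by linear_combination h - h2) hgC
      · exact h2
    · exact h
  have DcI : ∀ (z : Lg) (t : G), dd bas mul z DGHVIdx.CL (DGHVIdx.I t) = 0 := by
    intro z t
    have e1 := LCI z g (t + g)
    have e2 := LCI z (g + g) (t + (g + g))
    rw [show t + g - g = t by abel] at e1
    rw [show t + (g + g) - (g + g) = t by abel] at e2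
    push_cast at e1 e2
    rcases mul_eq_zero.mp e1 with h | h
    · rcases mul_eq_zero.mp e2 with h2 | h2
      · exact absurd (by linear_combination h - h2) (mul_ne_zero hlam0 hgC)
      · exact h2
    · exact h
  -- Step B : L-components of mul z (I b) vanish
  have fLgen : ∀ (z : Lg) (b i : G), (i : ℂ) ≠ 2 * b →
      dd bas mul z (DGHVIdx.I b) (DGHVIdx.L i) = 0 := by
    intro z b i hi
    have e := LIL z 0 b i
    rw [show (0 : G) + b = b by abel, show i - (0 : G) = i by abel] at e
    push_cast at e
    have e2 : ((2 : ℂ) * b - i) * dd bas mul z (DGHVIdx.I b) (DGHVIdx.L i) = 0 := by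
      linear_combination e
    rcases mul_eq_zero.mp e2 with h | h
    · exact absurd (by linear_combination -h) hi
    · exact h
  have fL : ∀ (z : Lg) (b i : G), dd bas mul z (DGHVIdx.I b) (DGHVIdx.L i) = 0 := by
    intro z b i
    by_cases hi : (i : ℂ) = 2 * b
    · obtain ⟨a, ha⟩ := pick {0, (b : ℂ) / (1 + lam)}
      simp only [Finset.mem_insert, Finset.mem_singleton, not_or] at ha
      obtain ⟨ha0, hab⟩ := ha
      have hcoef : (b : ℂ) - (1 + lam) * a ≠ 0 := by
        intro h
        exact hab (by field_simp; linear_combination -h)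
      have e := LIL z a (b - a) i
      rw [show a + (b - a) = b by abel] at e
      have hz : dd bas mul z (DGHVIdx.I (b - a)) (DGHVIdx.L (i - a)) = 0 := by
        apply fLgen
        push_cast
        intro h
        exact ha0 (by linear_combination h - hi)
      rw [hz, mul_zero] at e
      push_cast at e
      have e2 : ((b : ℂ) - (1 + lam) * a) *
          dd bas mul z (DGHVIdx.I b) (DGHVIdx.L i) = 0 := by
        linear_combination e / 2
      rcases mul_eq_zero.mp e2 with h | h
      · exact absurd h hcoef
      · exact h
    · exact fLgen z b i hi
  -- Step C : CL-component of mul z (I b) vanishes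
  have fC : ∀ (z : Lg) (b : G), dd bas mul z (DGHVIdx.I b) DGHVIdx.CL = 0 := by
    intro z b
    obtain ⟨a, ha⟩ := pick {(b : ℂ) / (1 + lam)}
    simp only [Finset.mem_singleton] at ha
    have hcoef : (b : ℂ) - (1 + lam) * a ≠ 0 := by
      intro h
      exact ha (by field_simp; linear_combination -h)
    have e := LIC z a (b - a)
    rw [show a + (b - a) = b by abel, fL z (b - a) (-a), mul_zero] at e
    push_cast at e
    have e2 : ((b : ℂ) - (1 + lam) * a) *
        dd bas mul z (DGHVIdx.I b) DGHVIdx.CL = 0 := by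
      linear_combination e / 2
    rcases mul_eq_zero.mp e2 with h | h
    · exact absurd h hcoef
    · exact h
  -- Step D : L-components of mul z (L b) are a shift of those of mul z (L 0)
  have dLLgen : ∀ (z : Lg) (b i : G), (i : ℂ) ≠ 2 * b →
      dd bas mul z (DGHVIdx.L b) (DGHVIdx.L i)
        = dd bas mul z (DGHVIdx.L 0) (DGHVIdx.L (i - b)) := by
    intro z b i hi
    have e := LLL z 0 b i
    rw [show (0 : G) + b = b by abel, show i - (0 : G) = i by abel,
      DcL z i, mul_zero] at e
    push_cast at e
    have e2 : (2 * (b : ℂ) - i) * (dd bas mul z (DGHVIdx.L b) (DGHVIdx.L i)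
        - dd bas mul z (DGHVIdx.L 0) (DGHVIdx.L (i - b))) = 0 := by
      linear_combination e
    rcases mul_eq_zero.mp e2 with h | h
    · exact absurd (by linear_combination -h) hi
    · linear_combination h
  have dLL : ∀ (z : Lg) (b i : G),
      dd bas mul z (DGHVIdx.L b) (DGHVIdx.L i)
        = dd bas mul z (DGHVIdx.L 0) (DGHVIdx.L (i - b)) := by
    intro z b i
    by_cases hi : (i : ℂ) = 2 * b
    · have hib : i = b + b := hinj _ _ (by push_cast; linear_combination hi)
      subst hib
      rw [show b + b - b = b by abel]
      obtain ⟨v, hv⟩ := pick {0, (b : ℂ), 2 * (b : ℂ), -(b : ℂ)}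
      simp only [Finset.mem_insert, Finset.mem_singleton, not_or] at hv
      obtain ⟨hv0, hvb, hv2b, hvnb⟩ := hv
      have hbv : b + v ≠ 0 := fun h => hvnb (by
        have := congrArg (fun x : G => (x : ℂ)) h
        push_cast at this
        linear_combination this)
      have e := LLL z b v (b + b + v)
      rw [if_neg hbv, zero_mul, add_zero] at e
      rw [show b + b + v - v = b + b by abel, show b + b + v - b = b + v by abel] at e
      have r1 : dd bas mul z (DGHVIdx.L (b + v)) (DGHVIdx.L (b + b + v))
          = dd bas mul z (DGHVIdx.L 0) (DGHVIdx.L b) := by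
        rw [dLLgen z (b + v) (b + b + v) (by push_cast; intro h; exact hv0 (by
          linear_combination -h)), show b + b + v - (b + v) = b by abel]
      have r2 : dd bas mul z (DGHVIdx.L v) (DGHVIdx.L (b + v))
          = dd bas mul z (DGHVIdx.L 0) (DGHVIdx.L b) := by
        rw [dLLgen z v (b + v) (by push_cast; intro h; exact hvb (by
          linear_combination -h)), show b + v - v = b by abel]
      rw [r1, r2] at e
      push_cast at e
      have e2 : ((v : ℂ) - 2 * b) * (dd bas mul z (DGHVIdx.L 0) (DGHVIdx.L b)
          - dd bas mul z (DGHVIdx.L b) (DGHVIdx.L (b + b))) = 0 := by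
        linear_combination e
      rcases mul_eq_zero.mp e2 with h | h
      · exact absurd (by linear_combination h) hv2b
      · linear_combination -h
    · exact dLLgen z b i hi
  -- Cc : CL-component equation
  have Cc : ∀ (z : Lg) (b : G), 2 * (b : ℂ) * dd bas mul z (DGHVIdx.L b) DGHVIdx.CL
      = -(((b : ℂ) ^ 3 - b) / 12 * dd bas mul z (DGHVIdx.L 0) (DGHVIdx.L (-b))) := by
    intro z b
    have e := LLC z 0 b
    rw [show (0 : G) + b = b by abel, show -(0 : G) = 0 from neg_zero] at e
    have hz : (if b = 0 then (((0 : G) : ℂ) ^ 3 - ((0 : G) : ℂ)) / 12 else 0) = 0 := by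
      split <;> simp
    rw [hz, zero_mul, add_zero] at e
    push_cast at e
    linear_combination e
  -- Step E : off-diagonal coefficients of mul z (L 0) on L-part vanish
  have A0 : ∀ (z : Lg) (t : G), t ≠ 0 →
      dd bas mul z (DGHVIdx.L 0) (DGHVIdx.L t) = 0 := by
    intro z t ht
    have htC : (t : ℂ) ≠ 0 := cz t ht
    obtain ⟨a, ha⟩ := pick {0, -(t : ℂ), -(t : ℂ) / 2}
    simp only [Finset.mem_insert, Finset.mem_singleton, not_or] at ha
    obtain ⟨ha0, hant, hant2⟩ := ha
    set b : G := -t - a with hbdef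
    have hbC : (b : ℂ) = -(t : ℂ) - a := by rw [hbdef]; push_cast; ring
    have hbne : (b : ℂ) ≠ 0 := by rw [hbC]; intro h; exact hant (by linear_combination -h)
    have hba : (b : ℂ) - a ≠ 0 := by
      rw [hbC]; intro h; exact hant2 (by linear_combination -h / 2)
    have habs : a + b ≠ 0 := by
      intro h
      have := congrArg (fun x : G => (x : ℂ)) h
      push_cast [hbC] at this
      exact htC (by linear_combination -this)
    have e2 := LLC z a b
    rw [if_neg habs, zero_mul, add_zero] at e2
    rw [dLL z a (-b), dLL z b (-a), show -b - a = t by rw [hbdef]; abel,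
      show -a - b = t by rw [hbdef]; abel] at e2
    have e1 := Cc z (a + b)
    rw [show -(a + b) = t by rw [hbdef]; abel] at e1
    push_cast at e1 e2
    have key : dd bas mul z (DGHVIdx.L 0) (DGHVIdx.L t)
        * (((a : ℂ) + b) * ((b : ℂ) - a) * a * b) = 0 := by
      linear_combination (12 * ((b : ℂ) - a)) * e1 - (12 * ((a : ℂ) + b)) * e2
    have hsne : (a : ℂ) + b ≠ 0 := fun h => habs (hinj _ _ (by push_cast; linear_combination h))
    rcases mul_eq_zero.mp key with h | h
    · exact h
    · exact absurd h (by
        apply mul_ne_zero (mul_ne_zero (mul_ne_zero hsne hba) ha0) hbne)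
  -- diagonal abbreviation facts
  have dLLdiag : ∀ (z : Lg) (b : G),
      dd bas mul z (DGHVIdx.L b) (DGHVIdx.L b)
        = dd bas mul z (DGHVIdx.L 0) (DGHVIdx.L 0) := by
    intro z b
    rw [dLL z b b, sub_self]
  have dLLoff : ∀ (z : Lg) (b i : G), i ≠ b →
      dd bas mul z (DGHVIdx.L b) (DGHVIdx.L i) = 0 := by
    intro z b i hib
    rw [dLL z b i]
    exact A0 z (i - b) (sub_ne_zero.mpr hib)
  -- Step F : CL-component of mul z (L b), b ≠ 0, vanishes
  have LC0 : ∀ (z : Lg) (b : G), b ≠ 0 →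
      dd bas mul z (DGHVIdx.L b) DGHVIdx.CL = 0 := by
    intro z b hb
    have e := Cc z b
    rw [A0 z (-b) (neg_ne_zero.mpr hb), mul_zero, neg_zero] at e
    have := mul_eq_zero.mp e
    rcases this with h | h
    · exact absurd (by linear_combination h / 2) (cz b hb)
    · exact h
  -- Step G : I-components of mul z (I b)
  have fIgen : ∀ (z : Lg) (b i : G), i ≠ b → (i : ℂ) ≠ 2 * b →
      dd bas mul z (DGHVIdx.I b) (DGHVIdx.I i) = 0 := by
    intro z b i hib hi2
    have e := LII z 0 b i
    rw [show (0 : G) + b = b by abel, show i - (0 : G) = i by abel,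
      A0 z (i - b) (sub_ne_zero.mpr hib), mul_zero, neg_zero, zero_add] at e
    push_cast at e
    have e2 : (2 * (b : ℂ) - i) * dd bas mul z (DGHVIdx.I b) (DGHVIdx.I i) = 0 := by
      linear_combination e
    rcases mul_eq_zero.mp e2 with h | h
    · exact absurd (by linear_combination -h) hi2
    · exact h
  have fIdiag : ∀ (z : Lg) (b : G), b ≠ 0 →
      dd bas mul z (DGHVIdx.I b) (DGHVIdx.I b)
        = dd bas mul z (DGHVIdx.L 0) (DGHVIdx.L 0) := by
    intro z b hb
    have e := LII z 0 b b
    rw [show (0 : G) + b = b by abel, show b - (0 : G) = b by abel,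
      show b - b = (0 : G) from sub_self b] at e
    push_cast at e
    have e2 : (b : ℂ) * (dd bas mul z (DGHVIdx.I b) (DGHVIdx.I b)
        - dd bas mul z (DGHVIdx.L 0) (DGHVIdx.L 0)) = 0 := by
      linear_combination e
    rcases mul_eq_zero.mp e2 with h | h
    · exact absurd h (cz b hb)
    · linear_combination h
  have fI2b : ∀ (z : Lg) (b i : G), b ≠ 0 → (i : ℂ) = 2 * b →
      dd bas mul z (DGHVIdx.I b) (DGHVIdx.I i) = 0 := by
    intro z b i hb hi
    have hib : i = b + b := hinj _ _ (by push_cast; linear_combination hi)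
    subst hib
    obtain ⟨a, ha⟩ := pick {0, (b : ℂ), (b : ℂ) / (1 + lam)}
    simp only [Finset.mem_insert, Finset.mem_singleton, not_or] at ha
    obtain ⟨ha0, hab, habl⟩ := ha
    have e := LII z a (b - a) (b + b)
    rw [show a + (b - a) = b by abel] at e
    have r1 : dd bas mul z (DGHVIdx.L a) (DGHVIdx.L (b + b - (b - a))) = 0 := by
      apply dLLoff
      intro h
      have := congrArg (fun x : G => (x : ℂ)) h
      push_cast at this
      exact cz b hb (by linear_combination this)
    have r2 : dd bas mul z (DGHVIdx.I (b - a)) (DGHVIdx.I (b + b - a)) = 0 := by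
      apply fIgen
      · intro h
        have := congrArg (fun x : G => (x : ℂ)) h
        push_cast at this
        exact cz b hb (by linear_combination this)
      · push_cast
        intro h
        exact ha0 (by linear_combination h)
    rw [r1, r2, mul_zero, mul_zero, neg_zero, zero_add] at e
    push_cast at e
    have e2 : ((b : ℂ) - (1 + lam) * a) *
        dd bas mul z (DGHVIdx.I b) (DGHVIdx.I (b + b)) = 0 := by
      linear_combination e / 2
    rcases mul_eq_zero.mp e2 with h | h
    · exact absurd (by
        field_simp
        linear_combination -h : (a : ℂ) = (b : ℂ) / (1 + lam)) habl
    · exact h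
  have fI0 : ∀ z : Lg, dd bas mul z (DGHVIdx.I 0) (DGHVIdx.I 0)
      = dd bas mul z (DGHVIdx.L 0) (DGHVIdx.L 0) := by
    intro z
    have e := LII z (-g) g 0
    rw [show -g + g = (0 : G) by abel, show (0 : G) - g = -g by abel,
      show (0 : G) - -g = g by abel] at e
    rw [dLLdiag z (-g), fIdiag z g hg0] at e
    push_cast at e
    have e2 : (2 * (1 + lam) * (g : ℂ)) * (dd bas mul z (DGHVIdx.I 0) (DGHVIdx.I 0)
        - dd bas mul z (DGHVIdx.L 0) (DGHVIdx.L 0)) = 0 := by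
      linear_combination e
    rcases mul_eq_zero.mp e2 with h | h
    · rcases mul_eq_zero.mp h with h2 | h2
      · rcases mul_eq_zero.mp h2 with h3 | h3
        · norm_num at h3
        · exact absurd h3 h1l
      · exact absurd h2 hgC
    · linear_combination h
  have fIfull : ∀ (z : Lg) (b i : G), dd bas mul z (DGHVIdx.I b) (DGHVIdx.I i)
      = if i = b then dd bas mul z (DGHVIdx.L 0) (DGHVIdx.L 0) else 0 := by
    intro z b i
    by_cases hib : i = b
    · subst hib
      rw [if_pos rfl]
      by_cases hb : i = 0
      · subst hb; exact fI0 z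
      · exact fIdiag z i hb
    · rw [if_neg hib]
      by_cases hi2 : (i : ℂ) = 2 * b
      · have hb : b ≠ 0 := by
          intro h
          subst h
          apply hib
          apply hinj
          simpa using hi2
        exact fI2b z b i hb hi2
      · exact fIgen z b i hib hi2
  -- Step H : vector forms
  have Mf : ∀ (z : Lg) (b : G), mul z (bas (DGHVIdx.I b))
      = dd bas mul z (DGHVIdx.L 0) (DGHVIdx.L 0) • bas (DGHVIdx.I b) := by
    intro z b
    apply bas.repr.injective
    rw [map_smul, Module.Basis.repr_self]
    ext j
    rw [Finsupp.smul_apply, Finsupp.single_apply, smul_eq_mul]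
    cases j with
    | L i =>
      rw [if_neg (by simp), mul_zero]
      exact fL z b i
    | I i =>
      have := fIfull z b i
      rw [show dd bas mul z (DGHVIdx.I b) (DGHVIdx.I i)
          = bas.repr (mul z (bas (DGHVIdx.I b))) (DGHVIdx.I i) from rfl] at this
      rw [this]
      by_cases h : i = b
      · subst h; simp
      · rw [if_neg h, if_neg (by simpa [eq_comm] using h), mul_zero]
    | CL =>
      rw [if_neg (by simp), mul_zero]
      exact fC z b
  have Mc : ∀ z : Lg, mul z (bas DGHVIdx.CL)
      = dd bas mul z DGHVIdx.CL DGHVIdx.CL • bas DGHVIdx.CL := by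
    intro z
    apply bas.repr.injective
    rw [map_smul, Module.Basis.repr_self]
    ext j
    rw [Finsupp.smul_apply, Finsupp.single_apply, smul_eq_mul]
    cases j with
    | L i =>
      rw [if_neg (by simp), mul_zero]
      exact DcL z i
    | I i =>
      rw [if_neg (by simp), mul_zero]
      exact DcI z i
    | CL => simp [dd]
  -- transfer lemmas via commutativity
  have TfE : ∀ (r x : G) (j : DGHVIdx G),
      dd bas mul (bas (DGHVIdx.I r)) (DGHVIdx.L x) j
        = dd bas mul (bas (DGHVIdx.L x)) (DGHVIdx.L 0) (DGHVIdx.L 0)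
          * (if DGHVIdx.I r = j then 1 else 0) := by
    intro r x j
    simp only [dd]
    rw [hcomm (bas (DGHVIdx.I r)) (bas (DGHVIdx.L x)), Mf (bas (DGHVIdx.L x)) r]
    simp [dd, Finsupp.single_apply]
  have TfC : ∀ (r : G) (j : DGHVIdx G),
      dd bas mul (bas (DGHVIdx.I r)) DGHVIdx.CL j
        = dd bas mul (bas (DGHVIdx.I r)) DGHVIdx.CL DGHVIdx.CL
          * (if (DGHVIdx.CL : DGHVIdx G) = j then 1 else 0) := by
    intro r j
    simp only [dd]
    rw [Mc (bas (DGHVIdx.I r))]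
    simp [dd, Finsupp.single_apply]
  have TcE : ∀ (x : G) (j : DGHVIdx G),
      dd bas mul (bas DGHVIdx.CL) (DGHVIdx.L x) j
        = dd bas mul (bas (DGHVIdx.L x)) DGHVIdx.CL DGHVIdx.CL
          * (if (DGHVIdx.CL : DGHVIdx G) = j then 1 else 0) := by
    intro x j
    simp only [dd]
    rw [hcomm (bas DGHVIdx.CL) (bas (DGHVIdx.L x)), Mc (bas (DGHVIdx.L x))]
    simp [dd, Finsupp.single_apply]
  -- Step I : alpha vanishes on basis vectors
  have hceq : ∀ b : G, dd bas mul (bas DGHVIdx.CL) (DGHVIdx.L 0) (DGHVIdx.L 0)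
      • bas (DGHVIdx.I b)
      = dd bas mul (bas (DGHVIdx.I b)) DGHVIdx.CL DGHVIdx.CL • bas DGHVIdx.CL := by
    intro b
    rw [← Mf (bas DGHVIdx.CL) b, hcomm, Mc]
  have alc : dd bas mul (bas DGHVIdx.CL) (DGHVIdx.L 0) (DGHVIdx.L 0) = 0 := by
    have e := congrArg (fun v => bas.repr v (DGHVIdx.I 0)) (hceq 0)
    simpa [Finsupp.single_apply] using e
  have psiI : ∀ b : G, dd bas mul (bas (DGHVIdx.I b)) DGHVIdx.CL DGHVIdx.CL = 0 := by
    intro b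
    have e := congrArg (fun v => bas.repr v DGHVIdx.CL) (hceq b)
    simpa [Finsupp.single_apply] using e.symm
  have alI : ∀ t : G, dd bas mul (bas (DGHVIdx.I t)) (DGHVIdx.L 0) (DGHVIdx.L 0) = 0 := by
    intro t
    have hne : DGHVIdx.I t ≠ DGHVIdx.I (t + g) := by
      simp only [ne_eq, DGHVIdx.I.injEq]
      intro h
      have := congrArg (fun x : G => (x : ℂ)) h
      push_cast at this
      exact hgC (by linear_combination -this)
    have e : mul (bas (DGHVIdx.I t)) (bas (DGHVIdx.I (t + g)))
        = mul (bas (DGHVIdx.I (t + g))) (bas (DGHVIdx.I t)) := hcomm _ _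
    rw [Mf (bas (DGHVIdx.I t)) (t + g), Mf (bas (DGHVIdx.I (t + g))) t] at e
    have e2 := congrArg (fun v => bas.repr v (DGHVIdx.I (t + g))) e
    simpa [Finsupp.single_apply, hne, (by simpa [eq_comm] using hne :
      DGHVIdx.I (t + g) ≠ DGHVIdx.I t)] using e2
  have alE : ∀ s : G, dd bas mul (bas (DGHVIdx.L s)) (DGHVIdx.L 0) (DGHVIdx.L 0) = 0 := by
    intro s
    by_cases hs : s = 0
    · subst hs
      have hcl : dd bas mul (bas (DGHVIdx.I g)) DGHVIdx.CL (DGHVIdx.I g) = 0 := by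
        rw [TfC]; simp
      have e := LLI (bas (DGHVIdx.I g)) g (-g) g
      rw [show g + -g = (0 : G) by abel, if_pos rfl, hcl, mul_zero, add_zero] at e
      have r1 : dd bas mul (bas (DGHVIdx.I g)) (DGHVIdx.L g) (DGHVIdx.I (g - -g)) = 0 := by
        rw [TfE]
        rw [if_neg (by
          simp only [ne_eq, DGHVIdx.I.injEq]
          intro h
          have := congrArg (fun x : G => (x : ℂ)) h
          push_cast at this
          exact hgC (by linear_combination -this)), mul_zero]
      have r2 : dd bas mul (bas (DGHVIdx.I g)) (DGHVIdx.L (-g)) (DGHVIdx.I (g - g)) = 0 := by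
        rw [TfE]
        rw [if_neg (by
          simp only [DGHVIdx.I.injEq]
          intro h
          apply hg0
          have := congrArg (fun x : G => (x : ℂ)) h
          push_cast at this
          exact hinj g 0 (by push_cast; linear_combination this)), mul_zero]
      have r0 : dd bas mul (bas (DGHVIdx.I g)) (DGHVIdx.L 0) (DGHVIdx.I g)
          = dd bas mul (bas (DGHVIdx.L 0)) (DGHVIdx.L 0) (DGHVIdx.L 0) := by
        rw [TfE]; simp
      rw [r1, r2, r0, mul_zero, mul_zero, neg_zero, zero_add] at e
      push_cast at e
      have e2 : (4 * (g : ℂ)) *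
          dd bas mul (bas (DGHVIdx.L 0)) (DGHVIdx.L 0) (DGHVIdx.L 0) = 0 := by
        linear_combination -e
      rcases mul_eq_zero.mp e2 with h | h
      · exact absurd (by linear_combination h / 4) hgC
      · exact h
    · obtain ⟨a, ha⟩ := pick {0, (s : ℂ), (s : ℂ) / 2}
      simp only [Finset.mem_insert, Finset.mem_singleton, not_or] at ha
      obtain ⟨ha0, has, has2⟩ := ha
      have e := LLI (bas (DGHVIdx.I g)) a (s - a) g
      rw [show a + (s - a) = s by abel, if_neg hs, zero_mul, add_zero] at e
      have r1 : dd bas mul (bas (DGHVIdx.I g)) (DGHVIdx.L a)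
          (DGHVIdx.I (g - (s - a))) = 0 := by
        rw [TfE]
        rw [if_neg (by
          simp only [DGHVIdx.I.injEq]
          intro h
          have := congrArg (fun x : G => (x : ℂ)) h
          push_cast at this
          exact has (by linear_combination -this)), mul_zero]
      have r2 : dd bas mul (bas (DGHVIdx.I g)) (DGHVIdx.L (s - a))
          (DGHVIdx.I (g - a)) = 0 := by
        rw [TfE]
        rw [if_neg (by
          simp only [DGHVIdx.I.injEq]
          intro h
          have := congrArg (fun x : G => (x : ℂ)) h
          push_cast at this
          exact ha0 (by linear_combination this)), mul_zero]
      have r0 : dd bas mul (bas (DGHVIdx.I g)) (DGHVIdx.L s) (DGHVIdx.I g)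
          = dd bas mul (bas (DGHVIdx.L s)) (DGHVIdx.L 0) (DGHVIdx.L 0) := by
        rw [TfE]; simp
      rw [r1, r2, r0, mul_zero, mul_zero, neg_zero, zero_add] at e
      push_cast at e
      have e2 : ((s : ℂ) - 2 * a) *
          dd bas mul (bas (DGHVIdx.L s)) (DGHVIdx.L 0) (DGHVIdx.L 0) = 0 := by
        linear_combination e / 2
      rcases mul_eq_zero.mp e2 with h | h
      · exact absurd (by linear_combination -h / 2) has2
      · exact h
  -- Step J : psi vanishes on basis vectors
  have r0c : ∀ x : G, dd bas mul (bas DGHVIdx.CL) (DGHVIdx.L x) DGHVIdx.CL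
      = dd bas mul (bas (DGHVIdx.L x)) DGHVIdx.CL DGHVIdx.CL := by
    intro x
    rw [TcE]; simp
  have rLc : ∀ x y : G, dd bas mul (bas DGHVIdx.CL) (DGHVIdx.L x) (DGHVIdx.L y) = 0 := by
    intro x y
    rw [TcE]; simp
  have psic : dd bas mul (bas DGHVIdx.CL) DGHVIdx.CL DGHVIdx.CL = 0 := by
    have e1 := LLC (bas DGHVIdx.CL) g (-g)
    have e2 := LLC (bas DGHVIdx.CL) (g + g) (-(g + g))
    rw [show g + -g = (0 : G) by abel, if_pos rfl] at e1
    simp only [rLc, r0c, mul_zero, neg_zero, zero_add, add_zero] at e1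
    rw [show (g + g) + -(g + g) = (0 : G) by abel, if_pos rfl] at e2
    simp only [rLc, r0c, mul_zero, neg_zero, zero_add, add_zero] at e2
    push_cast at e1 e2
    have key : (g : ℂ) ^ 3 * dd bas mul (bas DGHVIdx.CL) DGHVIdx.CL DGHVIdx.CL = 0 := by
      linear_combination e2 - 2 * e1
    rcases mul_eq_zero.mp key with h | h
    · exact absurd h (pow_ne_zero 3 hgC)
    · exact h
  have psiE : ∀ s : G, dd bas mul (bas (DGHVIdx.L s)) DGHVIdx.CL DGHVIdx.CL = 0 := by
    intro s
    by_cases hs : s = 0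
    · subst hs
      have e1 := LLC (bas DGHVIdx.CL) g (-g)
      rw [show g + -g = (0 : G) by abel, if_pos rfl] at e1
      simp only [rLc, r0c, psic, mul_zero, neg_zero, zero_add, add_zero] at e1
      push_cast at e1
      have e2 : (4 * (g : ℂ)) *
          dd bas mul (bas (DGHVIdx.L 0)) DGHVIdx.CL DGHVIdx.CL = 0 := by
        linear_combination -e1
      rcases mul_eq_zero.mp e2 with h | h
      · exact absurd (by linear_combination h / 4) hgC
      · exact h
    · obtain ⟨a, ha⟩ := pick {(s : ℂ) / 2}
      simp only [Finset.mem_singleton] at ha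
      have e := LLC (bas DGHVIdx.CL) a (s - a)
      rw [show a + (s - a) = s by abel, if_neg hs, zero_mul, add_zero] at e
      simp only [rLc, r0c, mul_zero, neg_zero, zero_add, add_zero] at e
      push_cast at e
      have e2 : ((s : ℂ) - 2 * a) *
          dd bas mul (bas (DGHVIdx.L s)) DGHVIdx.CL DGHVIdx.CL = 0 := by
        linear_combination e / 2
      rcases mul_eq_zero.mp e2 with h | h
      · exact absurd (by linear_combination -h / 2 : (a : ℂ) = (s : ℂ) / 2) ha
      · exact h
  -- Step K : gamma vanishes for z = L t
  have gamE : ∀ t : G, dd bas mul (bas (DGHVIdx.L t)) (DGHVIdx.L 0) DGHVIdx.CL = 0 := by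
    intro t
    have e := LLC (bas (DGHVIdx.L t)) g (-g)
    rw [show g + -g = (0 : G) by abel, if_pos rfl, neg_neg] at e
    rw [psiE t, mul_zero, add_zero, dLLdiag (bas (DGHVIdx.L t)) g,
      dLLdiag (bas (DGHVIdx.L t)) (-g), alE t, mul_zero, mul_zero,
      neg_zero, zero_add] at e
    push_cast at e
    have e2 : (4 * (g : ℂ)) *
        dd bas mul (bas (DGHVIdx.L t)) (DGHVIdx.L 0) DGHVIdx.CL = 0 := by
      linear_combination -e
    rcases mul_eq_zero.mp e2 with h | h
    · exact absurd (by linear_combination h / 4) hgC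
    · exact h
  -- Step L : I-components of mul (L 0) (L 0)
  have hB : ∀ (z : Lg) (b i : G), (2 * (b : ℂ) - i) * dd bas mul z (DGHVIdx.L b) (DGHVIdx.I i)
      = ((1 + lam) * (b : ℂ) - i) * dd bas mul z (DGHVIdx.L 0) (DGHVIdx.I (i - b)) := by
    intro z b i
    have e := LLI z 0 b i
    rw [show (0 : G) + b = b by abel, show i - (0 : G) = i by abel,
      DcI z i, mul_zero, add_zero] at e
    push_cast at e
    linear_combination e
  have HH : ∀ i : G, dd bas mul (bas (DGHVIdx.L 0)) (DGHVIdx.L 0) (DGHVIdx.I i) = 0 := by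
    intro i
    have E0 := LLI (bas (DGHVIdx.L 0)) g (-g) i
    rw [show g + -g = (0 : G) by abel, if_pos rfl, DcI _ i, mul_zero, add_zero,
      show i - -g = i + g by abel] at E0
    have B1 := hB (bas (DGHVIdx.L 0)) g (i + g)
    rw [show i + g - g = i by abel] at B1
    have B2 := hB (bas (DGHVIdx.L 0)) (-g) (i - g)
    rw [show i - g - -g = i by abel] at B2
    push_cast at E0 B1 B2
    have key : dd bas mul (bas (DGHVIdx.L 0)) (DGHVIdx.L 0) (DGHVIdx.I i)
        * (2 * (g : ℂ) ^ 3 * (lam + 2) * (lam - 1)) = 0 := by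
      linear_combination ((g : ℂ) ^ 2 - (i : ℂ) ^ 2) * E0
        + (-(((i : ℂ) + (1 + lam) * g)) * ((g : ℂ) + i)) * B1
        + (-(((i : ℂ) - (1 + lam) * g)) * ((g : ℂ) - i)) * B2
    rcases mul_eq_zero.mp key with h | h
    · exact h
    · exact absurd h (by
        apply mul_ne_zero (mul_ne_zero (mul_ne_zero two_ne_zero
          (pow_ne_zero 3 hgC)) hl2) hl1)
  -- Step M : I-components of mul (L t) (L b) vanish
  have EIz : ∀ z : Lg, (∀ u : G, dd bas mul z (DGHVIdx.L 0) (DGHVIdx.I u) = 0) →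
      ∀ b i : G, dd bas mul z (DGHVIdx.L b) (DGHVIdx.I i) = 0 := by
    intro z hz
    have gen : ∀ b i : G, (i : ℂ) ≠ 2 * b →
        dd bas mul z (DGHVIdx.L b) (DGHVIdx.I i) = 0 := by
      intro b i hi
      have e := hB z b i
      rw [hz, mul_zero] at e
      rcases mul_eq_zero.mp e with h | h
      · exact absurd (by linear_combination -h) hi
      · exact h
    intro b i
    by_cases hi : (i : ℂ) = 2 * b
    · by_cases hb : b = 0
      · subst hb; exact hz i
      · have hib : i = b + b := hinj _ _ (by push_cast; linear_combination hi)
        subst hib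
        obtain ⟨a, ha⟩ := pick {0, (b : ℂ), (b : ℂ) / 2}
        simp only [Finset.mem_insert, Finset.mem_singleton, not_or] at ha
        obtain ⟨ha0, hab, hab2⟩ := ha
        have e := LLI z a (b - a) (b + b)
        rw [show a + (b - a) = b by abel, if_neg hb, zero_mul, add_zero] at e
        have r1 : dd bas mul z (DGHVIdx.L a) (DGHVIdx.I (b + b - (b - a))) = 0 := by
          rw [show b + b - (b - a) = b + a by abel]
          apply gen
          push_cast
          intro h
          exact hab (by linear_combination -h)
        have r2 : dd bas mul z (DGHVIdx.L (b - a)) (DGHVIdx.I (b + b - a)) = 0 := by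
          apply gen
          push_cast
          intro h
          exact ha0 (by linear_combination h)
        rw [r1, r2, mul_zero, mul_zero, neg_zero, zero_add] at e
        push_cast at e
        have e2 : ((b : ℂ) - 2 * a) *
            dd bas mul z (DGHVIdx.L b) (DGHVIdx.I (b + b)) = 0 := by
          linear_combination e / 2
        rcases mul_eq_zero.mp e2 with h | h
        · exact absurd (by linear_combination -h / 2 : (a : ℂ) = (b : ℂ) / 2) hab2
        · exact h
    · exact gen b i hi
  have base0 : ∀ b i : G, dd bas mul (bas (DGHVIdx.L 0)) (DGHVIdx.L b) (DGHVIdx.I i) = 0 :=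
    EIz (bas (DGHVIdx.L 0)) HH
  have EIt : ∀ t u : G, dd bas mul (bas (DGHVIdx.L t)) (DGHVIdx.L 0) (DGHVIdx.I u) = 0 := by
    intro t u
    show bas.repr (mul (bas (DGHVIdx.L t)) (bas (DGHVIdx.L 0))) (DGHVIdx.I u) = 0
    rw [hcomm]
    exact base0 t u
  have EIfull : ∀ t b i : G,
      dd bas mul (bas (DGHVIdx.L t)) (DGHVIdx.L b) (DGHVIdx.I i) = 0 :=
    fun t b i => EIz (bas (DGHVIdx.L t)) (EIt t) b i
  -- Step N : products of L-basis vectors vanish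
  have mee : ∀ t b : G, mul (bas (DGHVIdx.L t)) (bas (DGHVIdx.L b)) = 0 := by
    intro t b
    apply bas.repr.injective
    rw [map_zero]
    ext j
    rw [Finsupp.zero_apply]
    cases j with
    | L i =>
      by_cases hib : i = b
      · rw [hib]
        show dd bas mul (bas (DGHVIdx.L t)) (DGHVIdx.L b) (DGHVIdx.L b) = 0
        rw [dLLdiag]
        exact alE t
      · exact dLLoff _ b i hib
    | I i => exact EIfull t b i
    | CL =>
      by_cases hb : b = 0
      · subst hb; exact gamE t
      · exact LC0 _ b hb
  -- Final assembly
  apply bas.ext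
  intro j1
  apply bas.ext
  intro j2
  rw [LinearMap.zero_apply, LinearMap.zero_apply]
  cases j1 with
  | L t =>
    cases j2 with
    | L b => exact mee t b
    | I b => rw [Mf, alE t, zero_smul]
    | CL => rw [Mc, psiE t, zero_smul]
  | I t =>
    cases j2 with
    | L b => rw [hcomm, Mf, alE b, zero_smul]
    | I b => rw [Mf, alI t, zero_smul]
    | CL => rw [Mc, psiI t, zero_smul]
  | CL =>
    cases j2 with
    | L b => rw [hcomm, Mc, psiE b, zero_smul]
    | I b => rw [Mf, alc, zero_smul]
    | CL => rw [Mc, psic, zero_smul]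
end

section
/- Let G be an additive subgroup of ℂ which is a free abelian group of rank ν ≥ 1. Then every transposed Poisson structure on the deformed generalized Heisenberg–Virasoro algebra g(G,−2) is trivial: any commutative associative bilinear multiplication · on g(G,−2) satisfying 2 z·[x,y] = [z·x, y] + [x, z·y] for all x, y, z is identically zero. -/
open scoped Classical

/-- Index set for the basis of the deformed generalized Heisenberg–Virasoro
algebra `g(G, -2)`, where `G` is free abelian of rank `ν` with a fixed
`ℤ`-basis `ε_1, …, ε_ν` (indexed here by `Fin ν`).  The central elements
`C_LI^(i)` for `2 ≤ i ≤ ν` are indexed by the elements of `Fin ν` of positive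
value. -/
inductive DGHV2Idx (G : AddSubgroup ℂ) (ν : ℕ) : Type
  | L : G → DGHV2Idx G ν
  | I : G → DGHV2Idx G ν
  | CL : DGHV2Idx G ν
  | CLI : {i : Fin ν // 0 < i.val} → DGHV2Idx G ν

namespace TPaux
open DGHV2Idx

variable {V : Type*} [LieRing V] [LieAlgebra ℂ V]

/-- right bracket as a linear map -/
def rlie (w : V) : V →ₗ[ℂ] V where
  toFun v := ⁅v, w⁆
  map_add' x y := add_lie x y w
  map_smul' c x := smul_lie c x w

@[simp] lemma rlie_apply (w v : V) : rlie w v = ⁅v, w⁆ := rfl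

variable {ν : ℕ} {G : AddSubgroup ℂ}
variable (ε : Module.Basis (Fin ν) ℤ G) (bas : Module.Basis (DGHV2Idx G ν) ℂ V)

lemma reprsum_L (a : G) (c : G) :
    bas.repr (∑ i : {i : Fin ν // 0 < i.val},
      ((ε.repr a i.1 : ℤ) : ℂ) • bas (CLI i)) (L c) = 0 := by
  simp [Finsupp.finset_sum_apply, Finsupp.single_apply]

lemma reprsum_I (a : G) (c : G) :
    bas.repr (∑ i : {i : Fin ν // 0 < i.val},
      ((ε.repr a i.1 : ℤ) : ℂ) • bas (CLI i)) (I c) = 0 := by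
  simp [Finsupp.finset_sum_apply, Finsupp.single_apply]

lemma reprsum_CL (a : G) :
    bas.repr (∑ i : {i : Fin ν // 0 < i.val},
      ((ε.repr a i.1 : ℤ) : ℂ) • bas (CLI i)) CL = 0 := by
  simp [Finsupp.finset_sum_apply, Finsupp.single_apply]

lemma reprsum_CLI (a : G) (i₀ : {i : Fin ν // 0 < i.val}) :
    bas.repr (∑ i : {i : Fin ν // 0 < i.val},
      ((ε.repr a i.1 : ℤ) : ℂ) • bas (CLI i)) (CLI i₀) = ((ε.repr a i₀.1 : ℤ) : ℂ) := by
  simp [Finsupp.finset_sum_apply, Finsupp.single_apply]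

lemma repr_ite (P : Prop) [Decidable P] (w : V) (j : DGHV2Idx G ν) :
    bas.repr (if P then w else 0) j = if P then bas.repr w j else 0 := by
  split_ifs <;> simp

section Fs2
variable
    (hLL : ∀ a b : G, ⁅bas (DGHV2Idx.L a), bas (DGHV2Idx.L b)⁆ =
      ((b : ℂ) - (a : ℂ)) • bas (DGHV2Idx.L (a + b)) +
        (if a + b = 0 then ((a : ℂ) ^ 3 - (a : ℂ)) / 12 else 0) •
          bas DGHV2Idx.CL)
    (hLI : ∀ a b : G, ⁅bas (DGHV2Idx.L a), bas (DGHV2Idx.I b)⁆ =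
      ((b : ℂ) + 2 * (a : ℂ)) • bas (DGHV2Idx.I (a + b)) +
        (if a + b = 0 then
          ∑ i : {i : Fin ν // 0 < i.val},
            ((ε.repr a i.1 : ℤ) : ℂ) • bas (DGHV2Idx.CLI i)
        else 0))
    (hII : ∀ a b : G, ⁅bas (DGHV2Idx.I a), bas (DGHV2Idx.I b)⁆ = 0)
    (hCL : ∀ x : V, ⁅bas DGHV2Idx.CL, x⁆ = 0)
    (hCLI : ∀ (i : {i : Fin ν // 0 < i.val}) (x : V),
      ⁅bas (DGHV2Idx.CLI i), x⁆ = 0)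

set_option linter.unusedSectionVars false

include hLL hLI hII hCL hCLI

lemma F1 (b c : G) (v : V) :
    bas.repr ⁅v, bas (L b)⁆ (L c) = (2*(b:ℂ) - c) * bas.repr v (L (c - b)) := by
  have hmap : (bas.coord (L c)) ∘ₗ rlie (bas (L b))
      = (2*(b:ℂ) - c) • bas.coord (L (c - b)) := by
    refine bas.ext fun i => ?_
    cases i with
    | L e =>
      simp only [LinearMap.comp_apply, rlie_apply, Module.Basis.coord_apply,
        LinearMap.smul_apply, smul_eq_mul, Module.Basis.repr_self]
      rw [hLL]
      simp only [map_add, map_smul, Module.Basis.repr_self, Finsupp.add_apply,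
        Finsupp.smul_apply, Finsupp.single_apply, smul_eq_mul,
        repr_ite, DGHV2Idx.L.injEq, DGHV2Idx.I.injEq, DGHV2Idx.CLI.injEq,
        reduceCtorEq, if_false, mul_zero, zero_mul, zero_add, add_zero, mul_one,
        ite_self, reprsum_L, reprsum_I, reprsum_CL, reprsum_CLI]
      simp only [DGHV2Idx.L.injEq, reduceCtorEq, if_false, mul_zero, add_zero,
        eq_sub_iff_add_eq]
      by_cases h : e + b = c
      · subst h
        simp only [if_pos rfl]
        push_cast
        ring
      · simp only [if_neg h]
        ring
    | I e =>
      simp only [LinearMap.comp_apply, rlie_apply, Module.Basis.coord_apply,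
        LinearMap.smul_apply, smul_eq_mul, Module.Basis.repr_self]
      rw [← lie_skew, hLI b e]
      by_cases h : b + e = 0
      · rw [if_pos h]
        simp [Finsupp.single_apply, reprsum_L, Finsupp.finset_sum_apply]
      · rw [if_neg h]
        simp [Finsupp.single_apply, repr_ite, reprsum_L, reprsum_I, reprsum_CL, reprsum_CLI]
    | CL =>
      simp only [LinearMap.comp_apply, rlie_apply, Module.Basis.coord_apply,
        LinearMap.smul_apply, smul_eq_mul, Module.Basis.repr_self]
      rw [hCL]
      simp [Finsupp.single_apply, repr_ite, reprsum_L, reprsum_I, reprsum_CL, reprsum_CLI]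
    | CLI i =>
      simp only [LinearMap.comp_apply, rlie_apply, Module.Basis.coord_apply,
        LinearMap.smul_apply, smul_eq_mul, Module.Basis.repr_self]
      rw [hCLI]
      simp [Finsupp.single_apply, repr_ite, reprsum_L, reprsum_I, reprsum_CL, reprsum_CLI]
  have := DFunLike.congr_fun hmap v
  simpa [Module.Basis.coord_apply] using this

lemma F2 (b c : G) (v : V) :
    bas.repr ⁅v, bas (L b)⁆ (I c) = -((c:ℂ) + b) * bas.repr v (I (c - b)) := by
  have hmap : (bas.coord (I c)) ∘ₗ rlie (bas (L b))
      = (-((c:ℂ) + b)) • bas.coord (I (c - b)) := by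
    refine bas.ext fun i => ?_
    cases i with
    | L e =>
      simp only [LinearMap.comp_apply, rlie_apply, Module.Basis.coord_apply,
        LinearMap.smul_apply, smul_eq_mul, Module.Basis.repr_self]
      rw [hLL]
      simp [Finsupp.single_apply, repr_ite, reprsum_L, reprsum_I, reprsum_CL, reprsum_CLI]
    | I e =>
      simp only [LinearMap.comp_apply, rlie_apply, Module.Basis.coord_apply,
        LinearMap.smul_apply, smul_eq_mul, Module.Basis.repr_self]
      rw [← lie_skew, hLI b e]
      simp only [map_neg, map_add, map_smul, Module.Basis.repr_self, Finsupp.neg_apply,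
        Finsupp.add_apply, Finsupp.smul_apply, Finsupp.single_apply, smul_eq_mul,
        repr_ite, DGHV2Idx.L.injEq, DGHV2Idx.I.injEq, DGHV2Idx.CLI.injEq,
        reduceCtorEq, if_false, mul_zero, zero_mul, zero_add, add_zero, mul_one,
        ite_self, reprsum_L, reprsum_I, reprsum_CL, reprsum_CLI,
        DGHV2Idx.I.injEq]
      by_cases h : b + e = c
      · have h2 : e = c - b := by rw [← h]; rw [add_sub_cancel_left]
        rw [if_pos h, if_pos h2]
        have hc : (b:ℂ) + e = c := by exact_mod_cast congrArg Subtype.val h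
        linear_combination -hc
      · have h2 : ¬ (e = c - b) := fun hh => h (by rw [hh, add_sub_cancel])
        rw [if_neg h, if_neg h2]
        ring
    | CL =>
      simp only [LinearMap.comp_apply, rlie_apply, Module.Basis.coord_apply,
        LinearMap.smul_apply, smul_eq_mul, Module.Basis.repr_self]
      rw [hCL]
      simp [Finsupp.single_apply, repr_ite, reprsum_L, reprsum_I, reprsum_CL, reprsum_CLI]
    | CLI i =>
      simp only [LinearMap.comp_apply, rlie_apply, Module.Basis.coord_apply,
        LinearMap.smul_apply, smul_eq_mul, Module.Basis.repr_self]
      rw [hCLI]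
      simp [Finsupp.single_apply, repr_ite, reprsum_L, reprsum_I, reprsum_CL, reprsum_CLI]
  have := DFunLike.congr_fun hmap v
  simpa [Module.Basis.coord_apply] using this

lemma F3 (b c : G) (v : V) :
    bas.repr ⁅v, bas (I b)⁆ (I c) = (2*(c:ℂ) - b) * bas.repr v (L (c - b)) := by
  have hmap : (bas.coord (I c)) ∘ₗ rlie (bas (I b))
      = (2*(c:ℂ) - b) • bas.coord (L (c - b)) := by
    refine bas.ext fun i => ?_
    cases i with
    | L e =>
      simp only [LinearMap.comp_apply, rlie_apply, Module.Basis.coord_apply,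
        LinearMap.smul_apply, smul_eq_mul, Module.Basis.repr_self]
      rw [hLI e b]
      simp only [map_add, map_smul, Module.Basis.repr_self, Finsupp.add_apply,
        Finsupp.smul_apply, Finsupp.single_apply, smul_eq_mul,
        repr_ite, DGHV2Idx.L.injEq, DGHV2Idx.I.injEq, DGHV2Idx.CLI.injEq,
        reduceCtorEq, if_false, mul_zero, zero_mul, zero_add, add_zero, mul_one,
        ite_self, reprsum_L, reprsum_I, reprsum_CL, reprsum_CLI, DGHV2Idx.I.injEq]
      simp only [eq_sub_iff_add_eq, add_zero]
      by_cases h : e + b = c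
      · subst h
        simp only [if_pos rfl]
        push_cast
        ring
      · simp only [if_neg h]
        ring
    | I e =>
      simp only [LinearMap.comp_apply, rlie_apply, Module.Basis.coord_apply,
        LinearMap.smul_apply, smul_eq_mul, Module.Basis.repr_self]
      rw [hII]
      simp [Finsupp.single_apply, repr_ite, reprsum_L, reprsum_I, reprsum_CL, reprsum_CLI]
    | CL =>
      simp only [LinearMap.comp_apply, rlie_apply, Module.Basis.coord_apply,
        LinearMap.smul_apply, smul_eq_mul, Module.Basis.repr_self]
      rw [hCL]
      simp [Finsupp.single_apply, repr_ite, reprsum_L, reprsum_I, reprsum_CL, reprsum_CLI]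
    | CLI i =>
      simp only [LinearMap.comp_apply, rlie_apply, Module.Basis.coord_apply,
        LinearMap.smul_apply, smul_eq_mul, Module.Basis.repr_self]
      rw [hCLI]
      simp [Finsupp.single_apply, repr_ite, reprsum_L, reprsum_I, reprsum_CL, reprsum_CLI]
  have := DFunLike.congr_fun hmap v
  simpa [Module.Basis.coord_apply] using this

lemma F4 (b c : G) (v : V) :
    bas.repr ⁅v, bas (I b)⁆ (L c) = 0 := by
  have hmap : (bas.coord (L c)) ∘ₗ rlie (bas (I b)) = 0 := by
    refine bas.ext fun i => ?_
    cases i with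
    | L e =>
      simp only [LinearMap.comp_apply, rlie_apply, Module.Basis.coord_apply,
        LinearMap.zero_apply]
      rw [hLI e b]
      simp only [map_add, map_smul, Module.Basis.repr_self, Finsupp.add_apply,
        Finsupp.smul_apply, Finsupp.single_apply, smul_eq_mul,
        repr_ite, DGHV2Idx.L.injEq, DGHV2Idx.I.injEq, DGHV2Idx.CLI.injEq,
        reduceCtorEq, if_false, mul_zero, zero_mul, zero_add, add_zero, mul_one,
        ite_self, reprsum_L, reprsum_I, reprsum_CL, reprsum_CLI]
    | I e =>
      simp only [LinearMap.comp_apply, rlie_apply, Module.Basis.coord_apply,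
        LinearMap.zero_apply]
      rw [hII]
      simp
    | CL =>
      simp only [LinearMap.comp_apply, rlie_apply, Module.Basis.coord_apply,
        LinearMap.zero_apply]
      rw [hCL]
      simp
    | CLI i =>
      simp only [LinearMap.comp_apply, rlie_apply, Module.Basis.coord_apply,
        LinearMap.zero_apply]
      rw [hCLI]
      simp
  have := DFunLike.congr_fun hmap v
  simpa [Module.Basis.coord_apply] using this

lemma F5 (b : G) (v : V) :
    bas.repr ⁅v, bas (L b)⁆ CL = (((b:ℂ) - (b:ℂ)^3)/12) * bas.repr v (L (-b)) := by
  have hmap : (bas.coord CL) ∘ₗ rlie (bas (L b))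
      = ((((b:ℂ) - (b:ℂ)^3)/12)) • bas.coord (L (-b)) := by
    refine bas.ext fun i => ?_
    cases i with
    | L e =>
      simp only [LinearMap.comp_apply, rlie_apply, Module.Basis.coord_apply,
        LinearMap.smul_apply, smul_eq_mul, Module.Basis.repr_self]
      rw [hLL]
      simp only [map_add, map_smul, Module.Basis.repr_self, Finsupp.add_apply,
        Finsupp.smul_apply, Finsupp.single_apply, smul_eq_mul,
        repr_ite, DGHV2Idx.L.injEq, DGHV2Idx.I.injEq, DGHV2Idx.CLI.injEq,
        reduceCtorEq, if_false, mul_zero, zero_mul, zero_add, add_zero, mul_one,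
        ite_self, reprsum_L, reprsum_I, reprsum_CL, reprsum_CLI,
        DGHV2Idx.L.injEq, reduceCtorEq, if_false, mul_zero, zero_add, if_true,
        mul_one]
      by_cases h : e + b = 0
      · have he : e = -b := by
          rw [← neg_eq_of_add_eq_zero_left h]
        subst he
        simp only [if_pos h, if_pos rfl, mul_one]
        push_cast
        ring
      · have h2 : ¬ (e = -b) := fun hh => h (by rw [hh]; exact neg_add_cancel b)
        simp only [if_neg h, if_neg h2]
        ring
    | I e =>
      simp only [LinearMap.comp_apply, rlie_apply, Module.Basis.coord_apply,
        LinearMap.smul_apply, smul_eq_mul, Module.Basis.repr_self]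
      rw [← lie_skew, hLI b e]
      simp only [map_neg, map_add, map_smul, Module.Basis.repr_self, Finsupp.neg_apply,
        Finsupp.add_apply, Finsupp.smul_apply, Finsupp.single_apply, smul_eq_mul,
        repr_ite, DGHV2Idx.L.injEq, DGHV2Idx.I.injEq, DGHV2Idx.CLI.injEq,
        reduceCtorEq, if_false, mul_zero, zero_mul, zero_add, add_zero, mul_one,
        ite_self, reprsum_L, reprsum_I, reprsum_CL, reprsum_CLI]
      simp [Finsupp.single_apply, repr_ite, reprsum_L, reprsum_I, reprsum_CL, reprsum_CLI]
    | CL =>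
      simp only [LinearMap.comp_apply, rlie_apply, Module.Basis.coord_apply,
        LinearMap.smul_apply, smul_eq_mul, Module.Basis.repr_self]
      rw [hCL]
      simp [Finsupp.single_apply, repr_ite, reprsum_L, reprsum_I, reprsum_CL, reprsum_CLI]
    | CLI i =>
      simp only [LinearMap.comp_apply, rlie_apply, Module.Basis.coord_apply,
        LinearMap.smul_apply, smul_eq_mul, Module.Basis.repr_self]
      rw [hCLI]
      simp [Finsupp.single_apply, repr_ite, reprsum_L, reprsum_I, reprsum_CL, reprsum_CLI]
  have := DFunLike.congr_fun hmap v
  simpa [Module.Basis.coord_apply] using this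

lemma F6 (b : G) (i₀ : {i : Fin ν // 0 < i.val}) (v : V) :
    bas.repr ⁅v, bas (L b)⁆ (CLI i₀)
      = -((ε.repr b i₀.1 : ℤ) : ℂ) * bas.repr v (I (-b)) := by
  have hmap : (bas.coord (CLI i₀)) ∘ₗ rlie (bas (L b))
      = (-((ε.repr b i₀.1 : ℤ) : ℂ)) • bas.coord (I (-b)) := by
    refine bas.ext fun i => ?_
    cases i with
    | L e =>
      simp only [LinearMap.comp_apply, rlie_apply, Module.Basis.coord_apply,
        LinearMap.smul_apply, smul_eq_mul, Module.Basis.repr_self]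
      rw [hLL]
      simp [Finsupp.single_apply, repr_ite, reprsum_L, reprsum_I, reprsum_CL, reprsum_CLI]
    | I e =>
      simp only [LinearMap.comp_apply, rlie_apply, Module.Basis.coord_apply,
        LinearMap.smul_apply, smul_eq_mul, Module.Basis.repr_self]
      rw [← lie_skew, hLI b e]
      simp only [map_neg, map_add, map_smul, Module.Basis.repr_self, Finsupp.neg_apply,
        Finsupp.add_apply, Finsupp.smul_apply, Finsupp.single_apply, smul_eq_mul,
        repr_ite, DGHV2Idx.L.injEq, DGHV2Idx.I.injEq, DGHV2Idx.CLI.injEq,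
        reduceCtorEq, if_false, mul_zero, zero_mul, zero_add, add_zero, mul_one,
        ite_self, reprsum_L, reprsum_I, reprsum_CL, reprsum_CLI,
        DGHV2Idx.I.injEq, reduceCtorEq, if_false, mul_zero, zero_add]
      by_cases h : b + e = 0
      · have he : e = -b := by
          rw [← neg_eq_of_add_eq_zero_right h]
        simp only [if_pos h, if_pos he]
        ring
      · have h2 : ¬ (e = -b) := fun hh => h (by rw [hh]; exact add_neg_cancel b)
        rw [if_neg h, if_neg h2]
        simp
    | CL =>
      simp only [LinearMap.comp_apply, rlie_apply, Module.Basis.coord_apply,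
        LinearMap.smul_apply, smul_eq_mul, Module.Basis.repr_self]
      rw [hCL]
      simp [Finsupp.single_apply, repr_ite, reprsum_L, reprsum_I, reprsum_CL, reprsum_CLI]
    | CLI i =>
      simp only [LinearMap.comp_apply, rlie_apply, Module.Basis.coord_apply,
        LinearMap.smul_apply, smul_eq_mul, Module.Basis.repr_self]
      rw [hCLI]
      simp [Finsupp.single_apply, repr_ite, reprsum_L, reprsum_I, reprsum_CL, reprsum_CLI]
  have := DFunLike.congr_fun hmap v
  simpa [Module.Basis.coord_apply] using this

lemma F7 (b : G) (v : V) :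
    bas.repr ⁅v, bas (I b)⁆ CL = 0 := by
  have hmap : (bas.coord CL) ∘ₗ rlie (bas (I b)) = 0 := by
    refine bas.ext fun i => ?_
    cases i with
    | L e =>
      simp only [LinearMap.comp_apply, rlie_apply, Module.Basis.coord_apply,
        LinearMap.zero_apply]
      rw [hLI e b]
      simp only [map_add, map_smul, Module.Basis.repr_self, Finsupp.add_apply,
        Finsupp.smul_apply, Finsupp.single_apply, smul_eq_mul,
        repr_ite, DGHV2Idx.L.injEq, DGHV2Idx.I.injEq, DGHV2Idx.CLI.injEq,
        reduceCtorEq, if_false, mul_zero, zero_mul, zero_add, add_zero, mul_one,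
        ite_self, reprsum_L, reprsum_I, reprsum_CL, reprsum_CLI]
    | I e =>
      simp only [LinearMap.comp_apply, rlie_apply, Module.Basis.coord_apply,
        LinearMap.zero_apply]
      rw [hII]
      simp
    | CL =>
      simp only [LinearMap.comp_apply, rlie_apply, Module.Basis.coord_apply,
        LinearMap.zero_apply]
      rw [hCL]
      simp
    | CLI i =>
      simp only [LinearMap.comp_apply, rlie_apply, Module.Basis.coord_apply,
        LinearMap.zero_apply]
      rw [hCLI]
      simp
  have := DFunLike.congr_fun hmap v
  simpa [Module.Basis.coord_apply] using this

lemma F8 (b : G) (i₀ : {i : Fin ν // 0 < i.val}) (v : V) :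
    bas.repr ⁅v, bas (I b)⁆ (CLI i₀)
      = -((ε.repr b i₀.1 : ℤ) : ℂ) * bas.repr v (L (-b)) := by
  have hmap : (bas.coord (CLI i₀)) ∘ₗ rlie (bas (I b))
      = (-((ε.repr b i₀.1 : ℤ) : ℂ)) • bas.coord (L (-b)) := by
    refine bas.ext fun i => ?_
    cases i with
    | L e =>
      simp only [LinearMap.comp_apply, rlie_apply, Module.Basis.coord_apply,
        LinearMap.smul_apply, smul_eq_mul, Module.Basis.repr_self]
      rw [hLI e b]
      simp only [map_add, map_smul, Module.Basis.repr_self, Finsupp.add_apply,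
        Finsupp.smul_apply, Finsupp.single_apply, smul_eq_mul,
        repr_ite, DGHV2Idx.L.injEq, DGHV2Idx.I.injEq, DGHV2Idx.CLI.injEq,
        reduceCtorEq, if_false, mul_zero, zero_mul, zero_add, add_zero, mul_one,
        ite_self, reprsum_L, reprsum_I, reprsum_CL, reprsum_CLI,
        reduceCtorEq, if_false, mul_zero, zero_add, DGHV2Idx.L.injEq]
      by_cases h : e + b = 0
      · have he : e = -b := by
          rw [← neg_eq_of_add_eq_zero_left h]
        subst he
        simp only [if_pos h, if_pos rfl, map_neg, Finsupp.neg_apply]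
        push_cast
        ring
      · have h2 : ¬ (e = -b) := fun hh => h (by rw [hh]; exact neg_add_cancel b)
        rw [if_neg h, if_neg h2]
        simp
    | I e =>
      simp only [LinearMap.comp_apply, rlie_apply, Module.Basis.coord_apply,
        LinearMap.smul_apply, smul_eq_mul, Module.Basis.repr_self]
      rw [hII]
      simp [Finsupp.single_apply, repr_ite, reprsum_L, reprsum_I, reprsum_CL, reprsum_CLI]
    | CL =>
      simp only [LinearMap.comp_apply, rlie_apply, Module.Basis.coord_apply,
        LinearMap.smul_apply, smul_eq_mul, Module.Basis.repr_self]
      rw [hCL]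
      simp [Finsupp.single_apply, repr_ite, reprsum_L, reprsum_I, reprsum_CL, reprsum_CLI]
    | CLI i =>
      simp only [LinearMap.comp_apply, rlie_apply, Module.Basis.coord_apply,
        LinearMap.smul_apply, smul_eq_mul, Module.Basis.repr_self]
      rw [hCLI]
      simp [Finsupp.single_apply, repr_ite, reprsum_L, reprsum_I, reprsum_CL, reprsum_CLI]
  have := DFunLike.congr_fun hmap v
  simpa [Module.Basis.coord_apply] using this




variable (D : V →ₗ[ℂ] V)
variable (hhalf : ∀ x y : V, (2:ℂ) • D ⁅x, y⁆ = ⁅D x, y⁆ + ⁅x, D y⁆)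
variable (hDCL : D (bas CL) = 0)
variable (hDCLI : ∀ i, D (bas (CLI i)) = 0)

include hhalf hDCL hDCLI

lemma M1 (a b c : G) :
    2*(((b:ℂ) - a) * bas.repr (D (bas (L (a+b)))) (L c))
      = (2*(b:ℂ) - c) * bas.repr (D (bas (L a))) (L (c - b))
        - (2*(a:ℂ) - c) * bas.repr (D (bas (L b))) (L (c - a)) := by
  have h := hhalf (bas (L a)) (bas (L b))
  rw [hLL a b, map_add, map_smul, map_smul, hDCL, smul_zero, add_zero,
    show ⁅bas (L a), D (bas (L b))⁆ = -⁅D (bas (L b)), bas (L a)⁆ from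
      (lie_skew _ _).symm] at h
  have h2 := congrArg (fun w => bas.repr w (L c)) h
  simp only [map_smul, map_add, map_neg, Finsupp.smul_apply, Finsupp.add_apply,
    Finsupp.neg_apply, smul_eq_mul] at h2
  rw [F1 ε bas hLL hLI hII hCL hCLI b c, F1 ε bas hLL hLI hII hCL hCLI a c] at h2
  linear_combination h2

lemma M2 (a b c : G) :
    2*(((b:ℂ) - a) * bas.repr (D (bas (L (a+b)))) (I c))
      = -((c:ℂ) + b) * bas.repr (D (bas (L a))) (I (c - b))
        + ((c:ℂ) + a) * bas.repr (D (bas (L b))) (I (c - a)) := by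
  have h := hhalf (bas (L a)) (bas (L b))
  rw [hLL a b, map_add, map_smul, map_smul, hDCL, smul_zero, add_zero,
    show ⁅bas (L a), D (bas (L b))⁆ = -⁅D (bas (L b)), bas (L a)⁆ from
      (lie_skew _ _).symm] at h
  have h2 := congrArg (fun w => bas.repr w (I c)) h
  simp only [map_smul, map_add, map_neg, Finsupp.smul_apply, Finsupp.add_apply,
    Finsupp.neg_apply, smul_eq_mul] at h2
  rw [F2 ε bas hLL hLI hII hCL hCLI b c, F2 ε bas hLL hLI hII hCL hCLI a c] at h2
  linear_combination h2

lemma M3 (a b : G) :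
    2*(((b:ℂ) - a) * bas.repr (D (bas (L (a+b)))) CL)
      = (((b:ℂ) - (b:ℂ)^3)/12) * bas.repr (D (bas (L a))) (L (-b))
        - (((a:ℂ) - (a:ℂ)^3)/12) * bas.repr (D (bas (L b))) (L (-a)) := by
  have h := hhalf (bas (L a)) (bas (L b))
  rw [hLL a b, map_add, map_smul, map_smul, hDCL, smul_zero, add_zero,
    show ⁅bas (L a), D (bas (L b))⁆ = -⁅D (bas (L b)), bas (L a)⁆ from
      (lie_skew _ _).symm] at h
  have h2 := congrArg (fun w => bas.repr w CL) h
  simp only [map_smul, map_add, map_neg, Finsupp.smul_apply, Finsupp.add_apply,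
    Finsupp.neg_apply, smul_eq_mul] at h2
  rw [F5 ε bas hLL hLI hII hCL hCLI b, F5 ε bas hLL hLI hII hCL hCLI a] at h2
  linear_combination h2

lemma M4 (a b : G) (i : {i : Fin ν // 0 < i.val}) :
    2*(((b:ℂ) - a) * bas.repr (D (bas (L (a+b)))) (CLI i))
      = -((ε.repr b i.1 : ℤ) : ℂ) * bas.repr (D (bas (L a))) (I (-b))
        + ((ε.repr a i.1 : ℤ) : ℂ) * bas.repr (D (bas (L b))) (I (-a)) := by
  have h := hhalf (bas (L a)) (bas (L b))
  rw [hLL a b, map_add, map_smul, map_smul, hDCL, smul_zero, add_zero,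
    show ⁅bas (L a), D (bas (L b))⁆ = -⁅D (bas (L b)), bas (L a)⁆ from
      (lie_skew _ _).symm] at h
  have h2 := congrArg (fun w => bas.repr w (CLI i)) h
  simp only [map_smul, map_add, map_neg, Finsupp.smul_apply, Finsupp.add_apply,
    Finsupp.neg_apply, smul_eq_mul] at h2
  rw [F6 ε bas hLL hLI hII hCL hCLI b i, F6 ε bas hLL hLI hII hCL hCLI a i] at h2
  linear_combination h2

lemma Dite_zero (a b : G) :
    D (if a + b = 0 then
        ∑ i : {i : Fin ν // 0 < i.val}, ((ε.repr a i.1 : ℤ) : ℂ) • bas (CLI i)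
      else 0) = 0 := by
  split_ifs
  · rw [map_sum]
    simp [hDCLI]
  · exact map_zero D

lemma M5 (a b c : G) :
    2*(((b:ℂ) + 2*a) * bas.repr (D (bas (I (a+b)))) (L c))
      = ((c:ℂ) - 2*a) * bas.repr (D (bas (I b))) (L (c - a)) := by
  have h := hhalf (bas (L a)) (bas (I b))
  rw [hLI a b, map_add, map_smul,
    Dite_zero ε bas hLL hLI hII hCL hCLI D hhalf hDCL hDCLI a b, add_zero,
    show ⁅bas (L a), D (bas (I b))⁆ = -⁅D (bas (I b)), bas (L a)⁆ from
      (lie_skew _ _).symm] at h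
  have h2 := congrArg (fun w => bas.repr w (L c)) h
  simp only [map_smul, map_add, map_neg, Finsupp.smul_apply, Finsupp.add_apply,
    Finsupp.neg_apply, smul_eq_mul] at h2
  rw [F4 ε bas hLL hLI hII hCL hCLI b c, F1 ε bas hLL hLI hII hCL hCLI a c] at h2
  linear_combination h2

lemma M6 (a b c : G) :
    2*(((b:ℂ) + 2*a) * bas.repr (D (bas (I (a+b)))) (I c))
      = (2*(c:ℂ) - b) * bas.repr (D (bas (L a))) (L (c - b))
        + ((c:ℂ) + a) * bas.repr (D (bas (I b))) (I (c - a)) := by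
  have h := hhalf (bas (L a)) (bas (I b))
  rw [hLI a b, map_add, map_smul,
    Dite_zero ε bas hLL hLI hII hCL hCLI D hhalf hDCL hDCLI a b, add_zero,
    show ⁅bas (L a), D (bas (I b))⁆ = -⁅D (bas (I b)), bas (L a)⁆ from
      (lie_skew _ _).symm] at h
  have h2 := congrArg (fun w => bas.repr w (I c)) h
  simp only [map_smul, map_add, map_neg, Finsupp.smul_apply, Finsupp.add_apply,
    Finsupp.neg_apply, smul_eq_mul] at h2
  rw [F3 ε bas hLL hLI hII hCL hCLI b c, F2 ε bas hLL hLI hII hCL hCLI a c] at h2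
  linear_combination h2

lemma M7 (a b : G) :
    2*(((b:ℂ) + 2*a) * bas.repr (D (bas (I (a+b)))) CL)
      = -(((a:ℂ) - (a:ℂ)^3)/12) * bas.repr (D (bas (I b))) (L (-a)) := by
  have h := hhalf (bas (L a)) (bas (I b))
  rw [hLI a b, map_add, map_smul,
    Dite_zero ε bas hLL hLI hII hCL hCLI D hhalf hDCL hDCLI a b, add_zero,
    show ⁅bas (L a), D (bas (I b))⁆ = -⁅D (bas (I b)), bas (L a)⁆ from
      (lie_skew _ _).symm] at h
  have h2 := congrArg (fun w => bas.repr w CL) h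
  simp only [map_smul, map_add, map_neg, Finsupp.smul_apply, Finsupp.add_apply,
    Finsupp.neg_apply, smul_eq_mul] at h2
  rw [F7 ε bas hLL hLI hII hCL hCLI b, F5 ε bas hLL hLI hII hCL hCLI a] at h2
  linear_combination h2

lemma M8 (a b : G) (i : {i : Fin ν // 0 < i.val}) :
    2*(((b:ℂ) + 2*a) * bas.repr (D (bas (I (a+b)))) (CLI i))
      = -((ε.repr b i.1 : ℤ) : ℂ) * bas.repr (D (bas (L a))) (L (-b))
        + ((ε.repr a i.1 : ℤ) : ℂ) * bas.repr (D (bas (I b))) (I (-a)) := by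
  have h := hhalf (bas (L a)) (bas (I b))
  rw [hLI a b, map_add, map_smul,
    Dite_zero ε bas hLL hLI hII hCL hCLI D hhalf hDCL hDCLI a b, add_zero,
    show ⁅bas (L a), D (bas (I b))⁆ = -⁅D (bas (I b)), bas (L a)⁆ from
      (lie_skew _ _).symm] at h
  have h2 := congrArg (fun w => bas.repr w (CLI i)) h
  simp only [map_smul, map_add, map_neg, Finsupp.smul_apply, Finsupp.add_apply,
    Finsupp.neg_apply, smul_eq_mul] at h2
  rw [F8 ε bas hLL hLI hII hCL hCLI b i, F6 ε bas hLL hLI hII hCL hCLI a i] at h2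
  linear_combination h2


lemma halfder_zero (hnu : 1 ≤ ν) : D = 0 := by
  classical
  -- the distinguished nonzero element of G
  set g : G := ε ⟨0, hnu⟩ with hgdef
  have hgG : g ≠ 0 := Module.Basis.ne_zero ε _
  have hg : (g:ℂ) ≠ 0 := by
    simpa [ZeroMemClass.coe_eq_zero] using hgG
  have coeinj : ∀ {x y : G}, (x:ℂ) = (y:ℂ) → x = y := fun h => Subtype.coe_injective h
  -- abstract coefficient functions
  obtain ⟨A, rA⟩ : ∃ f : G → G → ℂ, ∀ a c, bas.repr (D (bas (L a))) (L c) = f a c :=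
    ⟨_, fun _ _ => rfl⟩
  obtain ⟨B, rB⟩ : ∃ f : G → G → ℂ, ∀ a c, bas.repr (D (bas (L a))) (I c) = f a c :=
    ⟨_, fun _ _ => rfl⟩
  obtain ⟨P, rP⟩ : ∃ f : G → G → ℂ, ∀ a c, bas.repr (D (bas (I a))) (L c) = f a c :=
    ⟨_, fun _ _ => rfl⟩
  obtain ⟨Q, rQ⟩ : ∃ f : G → G → ℂ, ∀ a c, bas.repr (D (bas (I a))) (I c) = f a c :=
    ⟨_, fun _ _ => rfl⟩
  obtain ⟨Ph, rPh⟩ : ∃ f : G → ℂ, ∀ a, bas.repr (D (bas (L a))) CL = f a :=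
    ⟨_, fun _ => rfl⟩
  obtain ⟨Ps, rPs⟩ : ∃ f : G → {i : Fin ν // 0 < i.val} → ℂ,
      ∀ a i, bas.repr (D (bas (L a))) (CLI i) = f a i := ⟨_, fun _ _ => rfl⟩
  obtain ⟨PhI, rPhI⟩ : ∃ f : G → ℂ, ∀ a, bas.repr (D (bas (I a))) CL = f a :=
    ⟨_, fun _ => rfl⟩
  obtain ⟨PsI, rPsI⟩ : ∃ f : G → {i : Fin ν // 0 < i.val} → ℂ,
      ∀ a i, bas.repr (D (bas (I a))) (CLI i) = f a i := ⟨_, fun _ _ => rfl⟩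
  have m1 : ∀ a b c : G, 2*(((b:ℂ) - a) * A (a+b) c)
      = (2*(b:ℂ) - c) * A a (c - b) - (2*(a:ℂ) - c) * A b (c - a) := by
    intro a b c
    simpa only [rA] using M1 ε bas hLL hLI hII hCL hCLI D hhalf hDCL hDCLI a b c
  have m2 : ∀ a b c : G, 2*(((b:ℂ) - a) * B (a+b) c)
      = -((c:ℂ) + b) * B a (c - b) + ((c:ℂ) + a) * B b (c - a) := by
    intro a b c
    simpa only [rB] using M2 ε bas hLL hLI hII hCL hCLI D hhalf hDCL hDCLI a b c
  have m3 : ∀ a b : G, 2*(((b:ℂ) - a) * Ph (a+b))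
      = (((b:ℂ) - (b:ℂ)^3)/12) * A a (-b) - (((a:ℂ) - (a:ℂ)^3)/12) * A b (-a) := by
    intro a b
    simpa only [rA, rPh] using M3 ε bas hLL hLI hII hCL hCLI D hhalf hDCL hDCLI a b
  have m4 : ∀ (a b : G) (i : {i : Fin ν // 0 < i.val}), 2*(((b:ℂ) - a) * Ps (a+b) i)
      = -((ε.repr b i.1 : ℤ) : ℂ) * B a (-b) + ((ε.repr a i.1 : ℤ) : ℂ) * B b (-a) := by
    intro a b i
    simpa only [rB, rPs] using M4 ε bas hLL hLI hII hCL hCLI D hhalf hDCL hDCLI a b i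
  have m5 : ∀ a b c : G, 2*(((b:ℂ) + 2*a) * P (a+b) c)
      = ((c:ℂ) - 2*a) * P b (c - a) := by
    intro a b c
    simpa only [rP] using M5 ε bas hLL hLI hII hCL hCLI D hhalf hDCL hDCLI a b c
  have m6 : ∀ a b c : G, 2*(((b:ℂ) + 2*a) * Q (a+b) c)
      = (2*(c:ℂ) - b) * A a (c - b) + ((c:ℂ) + a) * Q b (c - a) := by
    intro a b c
    simpa only [rA, rQ] using M6 ε bas hLL hLI hII hCL hCLI D hhalf hDCL hDCLI a b c
  have m7 : ∀ a b : G, 2*(((b:ℂ) + 2*a) * PhI (a+b))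
      = -(((a:ℂ) - (a:ℂ)^3)/12) * P b (-a) := by
    intro a b
    simpa only [rP, rPhI] using M7 ε bas hLL hLI hII hCL hCLI D hhalf hDCL hDCLI a b
  have m8 : ∀ (a b : G) (i : {i : Fin ν // 0 < i.val}), 2*(((b:ℂ) + 2*a) * PsI (a+b) i)
      = -((ε.repr b i.1 : ℤ) : ℂ) * A a (-b) + ((ε.repr a i.1 : ℤ) : ℂ) * Q b (-a) := by
    intro a b i
    simpa only [rA, rQ, rPsI] using M8 ε bas hLL hLI hII hCL hCLI D hhalf hDCL hDCLI a b i
  -- helper: nonzero coercions of distinct group elements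
  have hne : ∀ {x y : G}, x ≠ y → (x:ℂ) ≠ (y:ℂ) := fun h hh => h (coeinj hh)
  -- Step 1: P vanishes off the exceptional diagonal
  have hPoff : ∀ b c : G, c ≠ b + b → P b c = 0 := by
    intro b c hc
    have h := m5 0 b c
    rw [zero_add, sub_zero] at h
    push_cast at h
    have h3 : (2*(b:ℂ) - c) * P b c = 0 := by linear_combination h
    refine (mul_eq_zero.mp h3).resolve_left ?_
    intro hh
    exact hc (coeinj (by push_cast; linear_combination -hh))
  -- Step 1b: P vanishes everywhere
  have hP : ∀ b c : G, P b c = 0 := by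
    intro b c
    by_cases hc : c = b + b
    · subst hc
      set a : G := if g = -b then g + g else g with hadef
      have ha0 : a ≠ 0 := by
        rw [hadef]; split_ifs
        · intro h
          have h2 := congrArg (Subtype.val) h
          push_cast at h2
          exact hgG (coeinj (by push_cast; linear_combination h2/2))
        · exact hgG
      have hab : a ≠ -b := by
        rw [hadef]; split_ifs with hgb
        · intro h
          have h2 := congrArg (Subtype.val) h
          have h3 := congrArg (Subtype.val) hgb
          push_cast at h2 h3
          exact hgG (coeinj (by push_cast; linear_combination h2 - h3))
        · exact hgb
      have h := m5 a (b - a) (b + b)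
      rw [show a + (b - a) = b by abel] at h
      have hz : P (b - a) (b + b - a) = 0 := by
        refine hPoff _ _ ?_
        intro hh
        apply ha0
        have h2 := congrArg (Subtype.val) hh
        push_cast at h2
        exact coeinj (by push_cast; linear_combination h2)
      rw [hz, mul_zero] at h
      have hcoef : ((b - a : G):ℂ) + 2*a ≠ 0 := by
        push_cast
        intro hh
        exact hab (coeinj (by push_cast; linear_combination hh))
      have h3 : (((b - a : G):ℂ) + 2*a) * P b (b + b) = 0 := by linear_combination h/2
      exact (mul_eq_zero.mp h3).resolve_left hcoef
    · exact hPoff b c hc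
  -- Step 2: off-diagonal transport for A
  have hE1 : ∀ b c : G, c ≠ b + b → A b c = A 0 (c - b) := by
    intro b c hc
    have h := m1 0 b c
    rw [zero_add, sub_zero] at h
    push_cast at h
    have hcoe : (2*(b:ℂ) - c) ≠ 0 := by
      intro hh; exact hc (coeinj (by push_cast; linear_combination -hh))
    have h3 : (2*(b:ℂ) - c) * (A b c - A 0 (c - b)) = 0 := by linear_combination h
    have := (mul_eq_zero.mp h3).resolve_left hcoe
    exact sub_eq_zero.mp this
  -- Step 3: the exact Q-A relation
  have hQE6 : ∀ b c : G, (2*(b:ℂ) - c) * Q b c = (2*(c:ℂ) - b) * A 0 (c - b) := by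
    intro b c
    have h := m6 0 b c
    rw [zero_add, sub_zero] at h
    push_cast at h
    linear_combination h
  -- Step 4: A 0 d = 0 for d ≠ 0
  have hA0 : ∀ d : G, d ≠ 0 → A 0 d = 0 := by
    intro d hd
    have hdc : (d:ℂ) ≠ 0 := by simpa [ZeroMemClass.coe_eq_zero] using hd
    have h1 := hQE6 (d+d) (d+d+d)
    rw [show (d+d+d) - (d+d) = d by abel] at h1
    have h2 := hQE6 0 d
    rw [sub_zero] at h2
    have h3 := m1 0 (d+d) (d+d+d)
    rw [zero_add, sub_zero, show (d+d+d) - (d+d) = d by abel] at h3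
    have h4 := m6 (d+d) 0 (d+d+d)
    rw [add_zero, sub_zero, show (d+d+d) - (d+d) = d by abel] at h4
    push_cast at h1 h2 h3 h4
    have key : (36:ℂ) * (d:ℂ)^2 * A 0 d = 0 := by
      linear_combination (d:ℂ)*h4 - 8*(d:ℂ)*h1 - 5*(d:ℂ)*h2 + 6*(d:ℂ)*h3
    have h36 : (36:ℂ) * (d:ℂ)^2 ≠ 0 := by
      simp [hdc]
    exact (mul_eq_zero.mp key).resolve_left h36
  -- Step 5: A vanishes off the diagonal
  have hAoff : ∀ b c : G, c ≠ b → A b c = 0 := by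
    intro b c hcb
    by_cases hc : c = b + b
    · subst hc
      have hb0 : b ≠ 0 := by
        intro h; subst h; exact hcb (by simp)
      have hbc : (b:ℂ) ≠ 0 := by simpa [ZeroMemClass.coe_eq_zero] using hb0
      have hx : A (-b) 0 = 0 := by
        have h := hE1 (-b) 0 (by
          intro hh
          have h2 := congrArg (Subtype.val) hh
          push_cast at h2
          exact hbc (by linear_combination h2/2))
        rw [zero_sub, neg_neg] at h
        rw [h]
        exact hA0 b hb0
      have hy : A (b+b) (b+b+b) = 0 := by
        have h := hE1 (b+b) (b+b+b) (by
          intro hh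
          have h2 := congrArg (Subtype.val) hh
          push_cast at h2
          exact hbc (by linear_combination -h2))
        rw [show (b+b+b) - (b+b) = b by abel] at h
        rw [h]
        exact hA0 b hb0
      have h := m1 (-b) (b+b) (b+b)
      rw [show -b + (b+b) = b by abel, sub_self,
        show (b+b) - (-b) = b+b+b by abel, hx, hy] at h
      push_cast at h
      have h3 : (6:ℂ) * (b:ℂ) * A b (b+b) = 0 := by linear_combination h
      have h6 : (6:ℂ) * (b:ℂ) ≠ 0 := by simp [hbc]
      exact (mul_eq_zero.mp h3).resolve_left h6
    · have h := hE1 b c hc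
      rw [h]
      refine hA0 _ ?_
      intro hh
      apply hcb
      have h2 := congrArg (Subtype.val) hh
      push_cast at h2
      exact coeinj (by linear_combination h2)
  -- diagonal of A is constant
  have hAdiag : ∀ b : G, b ≠ 0 → A b b = A 0 0 := by
    intro b hb0
    have hbc : (b:ℂ) ≠ 0 := by simpa [ZeroMemClass.coe_eq_zero] using hb0
    have h := hE1 b b (by
      intro hh
      have h2 := congrArg (Subtype.val) hh
      push_cast at h2
      exact hbc (by linear_combination -h2))
    rw [sub_self] at h
    exact h
  -- Step 6: the diagonal constant is zero
  have hk0 : A 0 0 = 0 := by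
    have hgg0 : g + g ≠ 0 := by
      intro h
      have h2 := congrArg (Subtype.val) h
      push_cast at h2
      exact hg (by linear_combination h2/2)
    have i1 := m3 g (-g)
    rw [show g + -g = (0:G) by abel, neg_neg, hAdiag g hgG, hAdiag (-g) (by
      intro hh; exact hgG (by simpa using congrArg Neg.neg hh))] at i1
    have i2 := m3 (g+g) (-(g+g))
    rw [show (g+g) + -(g+g) = (0:G) by abel, neg_neg, hAdiag (g+g) hgg0,
      hAdiag (-(g+g)) (by
        intro hh; exact hgg0 (by simpa using congrArg Neg.neg hh))] at i2
    push_cast at i1 i2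
    have key : (g:ℂ)^3 * A 0 0 = 0 := by linear_combination 2*i1 - i2
    have hg3 : (g:ℂ)^3 ≠ 0 := pow_ne_zero _ hg
    exact (mul_eq_zero.mp key).resolve_left hg3
  -- Step 7: A vanishes identically
  have hA : ∀ b c : G, A b c = 0 := by
    intro b c
    by_cases hcb : c = b
    · subst hcb
      by_cases hb : c = 0
      · subst hb; exact hk0
      · rw [hAdiag c hb]; exact hk0
    · exact hAoff b c hcb
  -- Step 8: Q vanishes identically
  have hQoff : ∀ b c : G, c ≠ b + b → Q b c = 0 := by
    intro b c hc
    have h := hQE6 b c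
    rw [hA 0 (c - b), mul_zero] at h
    have hcoe : (2*(b:ℂ) - c) ≠ 0 := by
      intro hh; exact hc (coeinj (by push_cast; linear_combination -hh))
    exact (mul_eq_zero.mp h).resolve_left hcoe
  have hQ : ∀ b c : G, Q b c = 0 := by
    intro b c
    by_cases hc : c = b + b
    · subst hc
      by_cases hb : b = 0
      · subst hb
        rw [show (0:G) + 0 = 0 by abel]
        have h := m6 g (-g) 0
        rw [show g + -g = (0:G) by abel, show (0:G) - (-g) = g by abel,
          show (0:G) - g = -g by abel, hA g g,
          hQoff (-g) (-g) (by
            intro hh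
            have h2 := congrArg (Subtype.val) hh
            push_cast at h2
            exact hg (by linear_combination h2))] at h
        push_cast at h
        have h3 : (g:ℂ) * Q 0 0 = 0 := by linear_combination h/2
        exact (mul_eq_zero.mp h3).resolve_left hg
      · have hbc : (b:ℂ) ≠ 0 := by simpa [ZeroMemClass.coe_eq_zero] using hb
        have h := m6 b 0 (b+b)
        rw [add_zero, sub_zero, show (b+b) - b = b by abel, hA b (b+b),
          hQoff 0 b (by
            intro hh
            have h2 := congrArg (Subtype.val) hh
            push_cast at h2
            exact hbc (by linear_combination h2))] at h
        push_cast at h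
        have h3 : (b:ℂ) * Q b (b+b) = 0 := by linear_combination h/4
        exact (mul_eq_zero.mp h3).resolve_left hbc
    · exact hQoff b c hc
  -- Step 9: exact B relation
  have hE2 : ∀ b c : G, (2*(b:ℂ) - c) * B b c = -((c:ℂ) + b) * B 0 (c - b) := by
    intro b c
    have h := m2 0 b c
    rw [zero_add, sub_zero] at h
    push_cast at h
    linear_combination h
  -- Step 10: B 0 d = 0 for every d
  have hB0 : ∀ d : G, B 0 d = 0 := by
    intro d
    have H1 := hE2 (-(g+g) + -g) (d + -(g+g) + -g)
    rw [show (d + -(g+g) + -g) - (-(g+g) + -g) = d by abel] at H1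
    have H2 := hE2 (-(g+g)) ((d + -(g+g) + -g) - -g)
    rw [show ((d + -(g+g) + -g) - -g) - (-(g+g)) = d by abel] at H2
    have H3 := hE2 (-g) ((d + -(g+g) + -g) - -(g+g))
    rw [show ((d + -(g+g) + -g) - -(g+g)) - (-g) = d by abel] at H3
    have H4 := m2 (-(g+g)) (-g) (d + -(g+g) + -g)
    push_cast at H1 H2 H3 H4
    have key : (36:ℂ) * (g:ℂ)^4 * B 0 d = 0 := by
      linear_combination (-2*(g:ℂ)*((-2*(g:ℂ) - d))*((-(g:ℂ) - d))) * H1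
        + (-((d:ℂ) - 4*g)*((-3*(g:ℂ) - d))*((-(g:ℂ) - d))) * H2
        + (((d:ℂ) - 5*g)*((-3*(g:ℂ) - d))*((-2*(g:ℂ) - d))) * H3
        + (((-3*(g:ℂ) - d))*((-2*(g:ℂ) - d))*((-(g:ℂ) - d))) * H4
    have h36 : (36:ℂ) * (g:ℂ)^4 ≠ 0 := by simp [hg]
    exact (mul_eq_zero.mp key).resolve_left h36
  -- Step 11: B vanishes identically
  have hBoff : ∀ b c : G, c ≠ b + b → B b c = 0 := by
    intro b c hc
    have h := hE2 b c
    rw [hB0 (c - b), mul_zero] at h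
    have hcoe : (2*(b:ℂ) - c) ≠ 0 := by
      intro hh; exact hc (coeinj (by push_cast; linear_combination -hh))
    exact (mul_eq_zero.mp h).resolve_left hcoe
  have hB : ∀ b c : G, B b c = 0 := by
    intro b c
    by_cases hc : c = b + b
    · subst hc
      by_cases hb : b = 0
      · subst hb
        rw [show (0:G) + 0 = 0 by abel]
        exact hB0 0
      · have hbc : (b:ℂ) ≠ 0 := by simpa [ZeroMemClass.coe_eq_zero] using hb
        have h := m2 (-b) (b+b) (b+b)
        rw [show -b + (b+b) = b by abel, sub_self,
          show (b+b) - (-b) = b+b+b by abel,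
          hBoff (-b) 0 (by
            intro hh
            have h2 := congrArg (Subtype.val) hh
            push_cast at h2
            exact hbc (by linear_combination h2/2)),
          hBoff (b+b) (b+b+b) (by
            intro hh
            have h2 := congrArg (Subtype.val) hh
            push_cast at h2
            exact hbc (by linear_combination -h2))] at h
        push_cast at h
        have h3 : (b:ℂ) * B b (b+b) = 0 := by linear_combination h/6
        exact (mul_eq_zero.mp h3).resolve_left hbc
    · exact hBoff b c hc
  -- Step 12: Ph vanishes
  have hPh : ∀ b : G, Ph b = 0 := by
    intro b
    by_cases hb : b = 0
    · subst hb
      have h := m3 g (-g)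
      rw [show g + -g = (0:G) by abel, neg_neg, hA g g, hA (-g) (-g)] at h
      push_cast at h
      have h3 : (g:ℂ) * Ph 0 = 0 := by linear_combination -h/4
      exact (mul_eq_zero.mp h3).resolve_left hg
    · have hbc : (b:ℂ) ≠ 0 := by simpa [ZeroMemClass.coe_eq_zero] using hb
      have h := m3 0 b
      rw [zero_add, hA 0 (-b), hA b (-0)] at h
      push_cast at h
      have h3 : (b:ℂ) * Ph b = 0 := by linear_combination h/2
      exact (mul_eq_zero.mp h3).resolve_left hbc
  -- Step 13: Ps vanishes
  have hPs : ∀ (e : G) (i : {i : Fin ν // 0 < i.val}), Ps e i = 0 := by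
    intro e i
    set a : G := if e = g + g then g + g else g with hadef
    have hea : e ≠ a + a := by
      rw [hadef]; split_ifs with hgb
      · intro h
        rw [hgb] at h
        have h2 := congrArg (Subtype.val) h
        push_cast at h2
        exact hg (by linear_combination -h2/2)
      · exact hgb
    have h := m4 a (e - a) i
    rw [show a + (e - a) = e by abel, hB a (-(e-a)), hB (e - a) (-a)] at h
    push_cast at h
    have hcoe : ((e:ℂ) - 2*a) ≠ 0 := by
      intro hh; exact hea (coeinj (by push_cast; linear_combination hh))
    have h3 : ((e:ℂ) - 2*a) * Ps e i = 0 := by linear_combination h/2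
    exact (mul_eq_zero.mp h3).resolve_left hcoe
  -- Step 14: PhI vanishes
  have hPhI : ∀ e : G, PhI e = 0 := by
    intro e
    set a : G := if e = -g then g + g else g with hadef
    have hea : e ≠ -a := by
      rw [hadef]; split_ifs with hgb
      · intro h
        rw [hgb] at h
        have h2 := congrArg (Subtype.val) h
        push_cast at h2
        exact hg (by linear_combination h2)
      · exact hgb
    have h := m7 a (e - a)
    rw [show a + (e - a) = e by abel, hP (e - a) (-a)] at h
    push_cast at h
    have hcoe : ((e:ℂ) + a) ≠ 0 := by
      intro hh; exact hea (coeinj (by push_cast; linear_combination hh))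
    have h3 : ((e:ℂ) + a) * PhI e = 0 := by linear_combination h/2
    exact (mul_eq_zero.mp h3).resolve_left hcoe
  -- Step 15: PsI vanishes
  have hPsI : ∀ (e : G) (i : {i : Fin ν // 0 < i.val}), PsI e i = 0 := by
    intro e i
    set a : G := if e = -g then g + g else g with hadef
    have hea : e ≠ -a := by
      rw [hadef]; split_ifs with hgb
      · intro h
        rw [hgb] at h
        have h2 := congrArg (Subtype.val) h
        push_cast at h2
        exact hg (by linear_combination h2)
      · exact hgb
    have h := m8 a (e - a) i
    rw [show a + (e - a) = e by abel, hA a (-(e-a)), hQ (e - a) (-a)] at h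
    push_cast at h
    have hcoe : ((e:ℂ) + a) ≠ 0 := by
      intro hh; exact hea (coeinj (by push_cast; linear_combination hh))
    have h3 : ((e:ℂ) + a) * PsI e i = 0 := by linear_combination h/2
    exact (mul_eq_zero.mp h3).resolve_left hcoe
  -- Conclusion
  have hDL : ∀ a : G, D (bas (L a)) = 0 := by
    intro a
    have h0 : bas.repr (D (bas (L a))) = 0 := by
      ext j
      rcases j with c | c | _ | i
      · rw [rA, hA]; simp
      · rw [rB, hB]; simp
      · rw [rPh, hPh]; simp
      · rw [rPs, hPs]; simp
    exact bas.repr.map_eq_zero_iff.mp h0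
  have hDI : ∀ a : G, D (bas (I a)) = 0 := by
    intro a
    have h0 : bas.repr (D (bas (I a))) = 0 := by
      ext j
      rcases j with c | c | _ | i
      · rw [rP, hP]; simp
      · rw [rQ, hQ]; simp
      · rw [rPhI, hPhI]; simp
      · rw [rPsI, hPsI]; simp
    exact bas.repr.map_eq_zero_iff.mp h0
  refine Module.Basis.ext bas fun j => ?_
  rcases j with a | a | _ | i
  · simpa using hDL a
  · simpa using hDI a
  · simpa using hDCL
  · simpa using hDCLI i


omit hII hCLI hhalf hDCL hDCLI in
lemma brackets_span (hnu : 1 ≤ ν) (f : V →ₗ[ℂ] V)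
    (hf : ∀ x y : V, f ⁅x, y⁆ = 0) : f = 0 := by
  classical
  set g : G := ε ⟨0, hnu⟩ with hgdef
  have hgG : g ≠ 0 := Module.Basis.ne_zero ε _
  have hg : (g:ℂ) ≠ 0 := by simpa [ZeroMemClass.coe_eq_zero] using hgG
  have hfL : ∀ a : G, a ≠ 0 → f (bas (L a)) = 0 := by
    intro a ha
    have h := hf (bas (L 0)) (bas (L a))
    rw [hLL, zero_add, if_neg ha, zero_smul, add_zero, map_smul] at h
    have hcoe : ((a:ℂ) - ((0:G):ℂ)) ≠ 0 := by
      push_cast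
      simpa [sub_zero, ZeroMemClass.coe_eq_zero] using ha
    exact (smul_eq_zero.mp h).resolve_left hcoe
  have e1 : ((g:ℂ) - ((-g : G):ℂ)) • f (bas (L 0))
      + ((((-g:G):ℂ)^3 - ((-g:G):ℂ))/12) • f (bas CL) = 0 := by
    have h := hf (bas (L (-g))) (bas (L g))
    rw [hLL, show -g + g = (0:G) by abel, if_pos rfl, map_add, map_smul, map_smul] at h
    exact h
  have e2 : (((g+g:G):ℂ) - ((-(g+g) : G):ℂ)) • f (bas (L 0))
      + ((((-(g+g):G):ℂ)^3 - ((-(g+g):G):ℂ))/12) • f (bas CL) = 0 := by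
    have h := hf (bas (L (-(g+g)))) (bas (L (g+g)))
    rw [hLL, show -(g+g) + (g+g) = (0:G) by abel, if_pos rfl, map_add, map_smul,
      map_smul] at h
    exact h
  push_cast at e1 e2
  have hfCL : f (bas CL) = 0 := by
    have comb : ((g:ℂ)^3/2) • f (bas CL) = 0 := by
      linear_combination (norm := module) (2:ℂ) • e1 - e2
    exact (smul_eq_zero.mp comb).resolve_left (by simp [hg])
  have hfL0 : f (bas (L 0)) = 0 := by
    have comb : (2*(g:ℂ)) • f (bas (L 0)) = 0 := by
      linear_combination (norm := module) e1 - (((g:ℂ) - (g:ℂ)^3)/12) • hfCL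
    exact (smul_eq_zero.mp comb).resolve_left (by
      simpa using hg)
  have hfI : ∀ b : G, b ≠ 0 → f (bas (I b)) = 0 := by
    intro b hb
    have h := hf (bas (L 0)) (bas (I b))
    rw [hLI, zero_add, if_neg hb, add_zero, map_smul] at h
    have hcoe : ((b:ℂ) + 2*((0:G):ℂ)) ≠ 0 := by
      push_cast
      simpa [ZeroMemClass.coe_eq_zero] using hb
    exact (smul_eq_zero.mp h).resolve_left hcoe
  have hrepr0 : ∀ i : {i : Fin ν // 0 < i.val}, ε.repr g i.1 = 0 := by
    intro i
    rw [hgdef, Module.Basis.repr_self, Finsupp.single_apply, if_neg]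
    intro hh
    simpa [← hh] using i.2
  have hfI0 : f (bas (I 0)) = 0 := by
    have h := hf (bas (L g)) (bas (I (-g)))
    rw [hLI, show g + -g = (0:G) by abel, if_pos rfl, map_add, map_smul] at h
    rw [show (∑ i : {i : Fin ν // 0 < i.val},
        ((ε.repr g i.1 : ℤ) : ℂ) • bas (CLI i)) = 0 from
      Finset.sum_eq_zero fun i _ => by rw [hrepr0 i]; simp, map_zero, add_zero] at h
    have hcoe : (((-g:G):ℂ) + 2*(g:ℂ)) ≠ 0 := by
      push_cast
      intro hh; exact hg (by linear_combination hh)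
    exact (smul_eq_zero.mp h).resolve_left hcoe
  have hfCLI : ∀ i : {i : Fin ν // 0 < i.val}, f (bas (CLI i)) = 0 := by
    intro i
    have h := hf (bas (L (ε i.1))) (bas (I (-(ε i.1))))
    rw [hLI, show (ε i.1) + -(ε i.1) = (0:G) by abel, if_pos rfl, map_add, map_smul] at h
    rw [show (∑ j : {i : Fin ν // 0 < i.val},
        ((ε.repr (ε i.1) j.1 : ℤ) : ℂ) • bas (CLI j)) = bas (CLI i) by
      rw [Finset.sum_eq_single i]
      · rw [Module.Basis.repr_self, Finsupp.single_apply, if_pos rfl]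
        simp
      · intro j _ hji
        rw [Module.Basis.repr_self, Finsupp.single_apply, if_neg (fun hh => hji (Subtype.ext hh.symm))]
        simp
      · intro hh
        exact absurd (Finset.mem_univ i) hh] at h
    rw [hfI0, smul_zero, zero_add] at h
    exact h
  refine Module.Basis.ext bas fun j => ?_
  rcases j with a | a | _ | i
  · by_cases ha : a = 0
    · subst ha; simpa using hfL0
    · simpa using hfL a ha
  · by_cases ha : a = 0
    · subst ha; simpa using hfI0
    · simpa using hfI a ha
  · simpa using hfCL
  · simpa using hfCLI i

end Fs2

end TPaux

/-- every transposed Poisson structure on `g(G, -2)` (with `G`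
free abelian of rank `ν ≥ 1`) is trivial. -/
theorem transposedPoisson_dgHV_neg_two_trivial
    (ν : ℕ) (hν : 1 ≤ ν)
    (G : AddSubgroup ℂ) (ε : Module.Basis (Fin ν) ℤ G)
    (Lg : Type*) [LieRing Lg] [LieAlgebra ℂ Lg]
    (bas : Module.Basis (DGHV2Idx G ν) ℂ Lg)
    (hLL : ∀ a b : G, ⁅bas (DGHV2Idx.L a), bas (DGHV2Idx.L b)⁆ =
      ((b : ℂ) - (a : ℂ)) • bas (DGHV2Idx.L (a + b)) +
        (if a + b = 0 then ((a : ℂ) ^ 3 - (a : ℂ)) / 12 else 0) •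
          bas DGHV2Idx.CL)
    (hLI : ∀ a b : G, ⁅bas (DGHV2Idx.L a), bas (DGHV2Idx.I b)⁆ =
      ((b : ℂ) + 2 * (a : ℂ)) • bas (DGHV2Idx.I (a + b)) +
        (if a + b = 0 then
          ∑ i : {i : Fin ν // 0 < i.val},
            ((ε.repr a i.1 : ℤ) : ℂ) • bas (DGHV2Idx.CLI i)
        else 0))
    (hII : ∀ a b : G, ⁅bas (DGHV2Idx.I a), bas (DGHV2Idx.I b)⁆ = 0)
    (hCL : ∀ x : Lg, ⁅bas DGHV2Idx.CL, x⁆ = 0)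
    (hCLI : ∀ (i : {i : Fin ν // 0 < i.val}) (x : Lg),
      ⁅bas (DGHV2Idx.CLI i), x⁆ = 0)
    (mul : Lg →ₗ[ℂ] Lg →ₗ[ℂ] Lg)
    (hcomm : ∀ x y : Lg, mul x y = mul y x)
    (hassoc : ∀ x y z : Lg, mul (mul x y) z = mul x (mul y z))
    (hcompat : ∀ x y z : Lg,
      (2 : ℂ) • mul z ⁅x, y⁆ = ⁅mul z x, y⁆ + ⁅x, mul z y⁆) :
    mul = 0 := by
  classical
  open TPaux DGHV2Idx in
  -- products with the central elements kill all brackets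
  have hzC : ∀ z y : Lg, ⁅mul z (bas DGHV2Idx.CL), y⁆ = 0 := by
    intro z y
    have h := hcompat (bas DGHV2Idx.CL) y z
    rw [hCL y, hCL (mul z y), map_zero, smul_zero, add_zero] at h
    exact h.symm
  have hzCi : ∀ (i : {i : Fin ν // 0 < i.val}) (z y : Lg),
      ⁅mul z (bas (DGHV2Idx.CLI i)), y⁆ = 0 := by
    intro i z y
    have h := hcompat (bas (DGHV2Idx.CLI i)) y z
    rw [hCLI i y, hCLI i (mul z y), map_zero, smul_zero, add_zero] at h
    exact h.symm
  have hCmul : mul (bas DGHV2Idx.CL) = 0 := by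
    refine TPaux.brackets_span ε bas hLL hLI hCL hν (mul (bas DGHV2Idx.CL)) ?_
    intro x y
    have h := hcompat x y (bas DGHV2Idx.CL)
    rw [hcomm (bas DGHV2Idx.CL) x] at h
    rw [hzC x y] at h
    rw [show ⁅x, mul (bas DGHV2Idx.CL) y⁆ = -⁅mul (bas DGHV2Idx.CL) y, x⁆ from
      (lie_skew _ _).symm, hcomm (bas DGHV2Idx.CL) y, hzC y x, neg_zero,
      add_zero] at h
    have h2 := h
    exact (smul_eq_zero.mp h2).resolve_left two_ne_zero
  have hCimul : ∀ i : {i : Fin ν // 0 < i.val}, mul (bas (DGHV2Idx.CLI i)) = 0 := by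
    intro i
    refine TPaux.brackets_span ε bas hLL hLI hCL hν (mul (bas (DGHV2Idx.CLI i))) ?_
    intro x y
    have h := hcompat x y (bas (DGHV2Idx.CLI i))
    rw [hcomm (bas (DGHV2Idx.CLI i)) x] at h
    rw [hzCi i x y] at h
    rw [show ⁅x, mul (bas (DGHV2Idx.CLI i)) y⁆
        = -⁅mul (bas (DGHV2Idx.CLI i)) y, x⁆ from
      (lie_skew _ _).symm, hcomm (bas (DGHV2Idx.CLI i)) y, hzCi i y x, neg_zero,
      add_zero] at h
    exact (smul_eq_zero.mp h).resolve_left two_ne_zero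
  have hz : ∀ z : Lg, mul z = 0 := by
    intro z
    refine TPaux.halfder_zero ε bas hLL hLI hII hCL hCLI (mul z)
      (fun x y => hcompat x y z) ?_ ?_ hν
    · rw [hcomm z (bas DGHV2Idx.CL), hCmul]
      simp
    · intro i
      rw [hcomm z (bas (DGHV2Idx.CLI i)), hCimul i]
      simp
  exact LinearMap.ext fun z => by rw [hz z]; simp
end

section
/- Let G be a nontrivial additive subgroup of ℂ. Then every transposed Poisson structure on the deformed generalized Heisenberg–Virasoro algebra g(G,1) is trivial: any commutative associative bilinear multiplication · on g(G,1) satisfying 2 z·[x,y] = [z·x, y] + [x, z·y] for all x, y, z is identically zero. -/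
open scoped Classical

set_option linter.unusedSectionVars false

/-- Index set for the basis of the deformed generalized Heisenberg–Virasoro
algebra `g(G, 1)`: vectors `L a`, `I a` for `a ∈ G` together with the two
central elements `C_L` and `C_LI`. -/
inductive DGHV1Idx (G : AddSubgroup ℂ) : Type
  | L : G → DGHV1Idx G
  | I : G → DGHV1Idx G
  | CL : DGHV1Idx G
  | CLI : DGHV1Idx G

namespace DGHVproof

open DGHV1Idx

variable {G : AddSubgroup ℂ} {Lg : Type*} [LieRing Lg] [LieAlgebra ℂ Lg]

noncomputable def rmul (v : Lg) : Lg →ₗ[ℂ] Lg :=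
  { toFun := fun x => ⁅x, v⁆
    map_add' := fun x y => add_lie x y v
    map_smul' := fun t x => smul_lie t x v }

noncomputable def lmul (v : Lg) : Lg →ₗ[ℂ] Lg :=
  { toFun := fun x => ⁅v, x⁆
    map_add' := fun x y => lie_add v x y
    map_smul' := fun t x => lie_smul t v x }

noncomputable def coeff (bas : Module.Basis (DGHV1Idx G) ℂ Lg) (j : DGHV1Idx G) : Lg →ₗ[ℂ] ℂ :=
  (Finsupp.lapply j) ∘ₗ (bas.repr : Lg →ₗ[ℂ] (DGHV1Idx G →₀ ℂ))

variable (bas : Module.Basis (DGHV1Idx G) ℂ Lg)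
variable
    (hLL : ∀ a b : G, ⁅bas (L a), bas (L b)⁆ =
      ((b : ℂ) - (a : ℂ)) • bas (L (a + b)) +
        (if a + b = 0 then ((a : ℂ) ^ 3 - (a : ℂ)) / 12 else 0) • bas CL)
    (hLI : ∀ a b : G, ⁅bas (L a), bas (I b)⁆ =
      ((b : ℂ) - (a : ℂ)) • bas (I (a + b)) +
        (if a + b = 0 then ((a : ℂ) ^ 3 - (a : ℂ)) / 12 else 0) • bas CLI)
    (hII : ∀ a b : G, ⁅bas (I a), bas (I b)⁆ = 0)
    (hCL : ∀ x : Lg, ⁅bas CL, x⁆ = 0)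
    (hCLI : ∀ x : Lg, ⁅bas CLI, x⁆ = 0)

include hLL hLI hII hCL hCLI

theorem xLb_L (b c : G) (x : Lg) :
    bas.repr ⁅x, bas (L b)⁆ (L c) = (2 * (b : ℂ) - c) * bas.repr x (L (c - b)) := by
  have h : coeff bas (L c) ∘ₗ rmul (bas (L b)) = (2 * (b : ℂ) - c) • coeff bas (L (c - b)) := by
    refine Module.Basis.ext bas fun i => ?_
    cases i with
    | L a =>
      show bas.repr ⁅bas (L a), bas (L b)⁆ (L c) = (2 * (b:ℂ) - c) * bas.repr (bas (L a)) (L (c - b))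
      rw [hLL a b]
      simp only [map_neg, map_add, map_smul, Finsupp.neg_apply, Finsupp.add_apply,
        Finsupp.smul_apply, smul_eq_mul, Module.Basis.repr_self, Finsupp.single_apply,
        eq_sub_iff_add_eq, eq_neg_iff_add_eq_zero, L.injEq, I.injEq, reduceCtorEq,
        if_false, if_true, eq_self_iff_true, mul_zero, zero_mul, add_zero, zero_add, mul_one,
        neg_zero]
      split_ifs with h1
      · rw [show ((c:ℂ)) = (a:ℂ) + b from by exact_mod_cast congrArg Subtype.val h1.symm]; ring
      · ring
    | I a =>
      show bas.repr ⁅bas (I a), bas (L b)⁆ (L c) = (2 * (b:ℂ) - c) * bas.repr (bas (I a)) (L (c - b))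
      rw [← lie_skew, hLI b a]
      split_ifs <;> simp [Finsupp.single_apply]
    | CL =>
      show bas.repr ⁅bas CL, bas (L b)⁆ (L c) = (2 * (b:ℂ) - c) * bas.repr (bas CL) (L (c - b))
      rw [hCL]; simp [Finsupp.single_apply]
    | CLI =>
      show bas.repr ⁅bas CLI, bas (L b)⁆ (L c) = (2 * (b:ℂ) - c) * bas.repr (bas CLI) (L (c - b))
      rw [hCLI]; simp [Finsupp.single_apply]
  exact LinearMap.congr_fun h x

theorem xLb_I (b c : G) (x : Lg) :
    bas.repr ⁅x, bas (L b)⁆ (I c) = (2 * (b : ℂ) - c) * bas.repr x (I (c - b)) := by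
  have h : coeff bas (I c) ∘ₗ rmul (bas (L b)) = (2 * (b : ℂ) - c) • coeff bas (I (c - b)) := by
    refine Module.Basis.ext bas fun i => ?_
    cases i with
    | L a =>
      show bas.repr ⁅bas (L a), bas (L b)⁆ (I c) = (2 * (b:ℂ) - c) * bas.repr (bas (L a)) (I (c - b))
      rw [hLL a b]
      split_ifs <;> simp [Finsupp.single_apply]
    | I a =>
      show bas.repr ⁅bas (I a), bas (L b)⁆ (I c) = (2 * (b:ℂ) - c) * bas.repr (bas (I a)) (I (c - b))
      rw [← lie_skew, hLI b a, add_comm b a]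
      simp only [map_neg, map_add, map_smul, Finsupp.neg_apply, Finsupp.add_apply,
        Finsupp.smul_apply, smul_eq_mul, Module.Basis.repr_self, Finsupp.single_apply,
        eq_sub_iff_add_eq, eq_neg_iff_add_eq_zero, L.injEq, I.injEq, reduceCtorEq,
        if_false, if_true, eq_self_iff_true, mul_zero, zero_mul, add_zero, zero_add, mul_one,
        neg_zero]
      split_ifs with h1
      · rw [show ((c:ℂ)) = (a:ℂ) + b from by exact_mod_cast congrArg Subtype.val h1.symm]; ring
      · ring
    | CL =>
      show bas.repr ⁅bas CL, bas (L b)⁆ (I c) = (2 * (b:ℂ) - c) * bas.repr (bas CL) (I (c - b))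
      rw [hCL]; simp [Finsupp.single_apply]
    | CLI =>
      show bas.repr ⁅bas CLI, bas (L b)⁆ (I c) = (2 * (b:ℂ) - c) * bas.repr (bas CLI) (I (c - b))
      rw [hCLI]; simp [Finsupp.single_apply]
  exact LinearMap.congr_fun h x

theorem xLb_C (b : G) (x : Lg) :
    bas.repr ⁅x, bas (L b)⁆ CL = (((b:ℂ)) - (b:ℂ)^3)/12 * bas.repr x (L (-b)) := by
  have h : coeff bas CL ∘ₗ rmul (bas (L b)) = ((((b:ℂ)) - (b:ℂ)^3)/12) • coeff bas (L (-b)) := by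
    refine Module.Basis.ext bas fun i => ?_
    cases i with
    | L a =>
      show bas.repr ⁅bas (L a), bas (L b)⁆ CL = (((b:ℂ)) - (b:ℂ)^3)/12 * bas.repr (bas (L a)) (L (-b))
      rw [hLL a b]
      simp only [map_neg, map_add, map_smul, Finsupp.neg_apply, Finsupp.add_apply,
        Finsupp.smul_apply, smul_eq_mul, Module.Basis.repr_self, Finsupp.single_apply,
        eq_sub_iff_add_eq, eq_neg_iff_add_eq_zero, L.injEq, I.injEq, reduceCtorEq,
        if_false, if_true, eq_self_iff_true, mul_zero, zero_mul, add_zero, zero_add, mul_one,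
        neg_zero]
      split_ifs with h1
      · rw [show ((a:ℂ)) = -(b:ℂ) from by
          exact_mod_cast congrArg Subtype.val (eq_neg_of_add_eq_zero_left h1)]; ring
      · ring
    | I a =>
      show bas.repr ⁅bas (I a), bas (L b)⁆ CL = (((b:ℂ)) - (b:ℂ)^3)/12 * bas.repr (bas (I a)) (L (-b))
      rw [← lie_skew, hLI b a]
      split_ifs <;> simp [Finsupp.single_apply]
    | CL =>
      show bas.repr ⁅bas CL, bas (L b)⁆ CL = (((b:ℂ)) - (b:ℂ)^3)/12 * bas.repr (bas CL) (L (-b))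
      rw [hCL]; simp [Finsupp.single_apply]
    | CLI =>
      show bas.repr ⁅bas CLI, bas (L b)⁆ CL = (((b:ℂ)) - (b:ℂ)^3)/12 * bas.repr (bas CLI) (L (-b))
      rw [hCLI]; simp [Finsupp.single_apply]
  exact LinearMap.congr_fun h x

theorem xLb_K (b : G) (x : Lg) :
    bas.repr ⁅x, bas (L b)⁆ CLI = (((b:ℂ)) - (b:ℂ)^3)/12 * bas.repr x (I (-b)) := by
  have h : coeff bas CLI ∘ₗ rmul (bas (L b)) = ((((b:ℂ)) - (b:ℂ)^3)/12) • coeff bas (I (-b)) := by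
    refine Module.Basis.ext bas fun i => ?_
    cases i with
    | L a =>
      show bas.repr ⁅bas (L a), bas (L b)⁆ CLI = (((b:ℂ)) - (b:ℂ)^3)/12 * bas.repr (bas (L a)) (I (-b))
      rw [hLL a b]
      split_ifs <;> simp [Finsupp.single_apply]
    | I a =>
      show bas.repr ⁅bas (I a), bas (L b)⁆ CLI = (((b:ℂ)) - (b:ℂ)^3)/12 * bas.repr (bas (I a)) (I (-b))
      rw [← lie_skew, hLI b a, add_comm b a]
      simp only [map_neg, map_add, map_smul, Finsupp.neg_apply, Finsupp.add_apply,
        Finsupp.smul_apply, smul_eq_mul, Module.Basis.repr_self, Finsupp.single_apply,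
        eq_sub_iff_add_eq, eq_neg_iff_add_eq_zero, L.injEq, I.injEq, reduceCtorEq,
        if_false, if_true, eq_self_iff_true, mul_zero, zero_mul, add_zero, zero_add, mul_one,
        neg_zero]
      split_ifs with h1
      · ring
      · ring
    | CL =>
      show bas.repr ⁅bas CL, bas (L b)⁆ CLI = (((b:ℂ)) - (b:ℂ)^3)/12 * bas.repr (bas CL) (I (-b))
      rw [hCL]; simp [Finsupp.single_apply]
    | CLI =>
      show bas.repr ⁅bas CLI, bas (L b)⁆ CLI = (((b:ℂ)) - (b:ℂ)^3)/12 * bas.repr (bas CLI) (I (-b))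
      rw [hCLI]; simp [Finsupp.single_apply]
  exact LinearMap.congr_fun h x

theorem xIb_L (b c : G) (x : Lg) :
    bas.repr ⁅x, bas (I b)⁆ (L c) = 0 := by
  have h : coeff bas (L c) ∘ₗ rmul (bas (I b)) = 0 := by
    refine Module.Basis.ext bas fun i => ?_
    cases i with
    | L a =>
      show bas.repr ⁅bas (L a), bas (I b)⁆ (L c) = _
      rw [hLI a b]
      split_ifs <;> simp [Finsupp.single_apply]
    | I a =>
      show bas.repr ⁅bas (I a), bas (I b)⁆ (L c) = _
      rw [← lie_skew, hII b a]; simp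
    | CL => show bas.repr ⁅bas CL, bas (I b)⁆ (L c) = _; rw [hCL]; simp
    | CLI => show bas.repr ⁅bas CLI, bas (I b)⁆ (L c) = _; rw [hCLI]; simp
  exact LinearMap.congr_fun h x

theorem xIb_I (b c : G) (x : Lg) :
    bas.repr ⁅x, bas (I b)⁆ (I c) = (2 * (b : ℂ) - c) * bas.repr x (L (c - b)) := by
  have h : coeff bas (I c) ∘ₗ rmul (bas (I b)) = (2 * (b : ℂ) - c) • coeff bas (L (c - b)) := by
    refine Module.Basis.ext bas fun i => ?_
    cases i with
    | L a =>
      show bas.repr ⁅bas (L a), bas (I b)⁆ (I c) = (2 * (b:ℂ) - c) * bas.repr (bas (L a)) (L (c - b))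
      rw [hLI a b]
      simp only [map_neg, map_add, map_smul, Finsupp.neg_apply, Finsupp.add_apply,
        Finsupp.smul_apply, smul_eq_mul, Module.Basis.repr_self, Finsupp.single_apply,
        eq_sub_iff_add_eq, eq_neg_iff_add_eq_zero, L.injEq, I.injEq, reduceCtorEq,
        if_false, if_true, eq_self_iff_true, mul_zero, zero_mul, add_zero, zero_add, mul_one,
        neg_zero]
      split_ifs with h1
      · rw [show ((c:ℂ)) = (a:ℂ) + b from by exact_mod_cast congrArg Subtype.val h1.symm]; ring
      · ring
    | I a =>
      show bas.repr ⁅bas (I a), bas (I b)⁆ (I c) = (2 * (b:ℂ) - c) * bas.repr (bas (I a)) (L (c - b))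
      rw [← lie_skew, hII b a]; simp [Finsupp.single_apply]
    | CL =>
      show bas.repr ⁅bas CL, bas (I b)⁆ (I c) = (2 * (b:ℂ) - c) * bas.repr (bas CL) (L (c - b))
      rw [hCL]; simp [Finsupp.single_apply]
    | CLI =>
      show bas.repr ⁅bas CLI, bas (I b)⁆ (I c) = (2 * (b:ℂ) - c) * bas.repr (bas CLI) (L (c - b))
      rw [hCLI]; simp [Finsupp.single_apply]
  exact LinearMap.congr_fun h x

theorem xIb_C (b : G) (x : Lg) :
    bas.repr ⁅x, bas (I b)⁆ CL = 0 := by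
  have h : coeff bas CL ∘ₗ rmul (bas (I b)) = 0 := by
    refine Module.Basis.ext bas fun i => ?_
    cases i with
    | L a =>
      show bas.repr ⁅bas (L a), bas (I b)⁆ CL = _
      rw [hLI a b]
      split_ifs <;> simp [Finsupp.single_apply]
    | I a =>
      show bas.repr ⁅bas (I a), bas (I b)⁆ CL = _
      rw [← lie_skew, hII b a]; simp
    | CL => show bas.repr ⁅bas CL, bas (I b)⁆ CL = _; rw [hCL]; simp
    | CLI => show bas.repr ⁅bas CLI, bas (I b)⁆ CL = _; rw [hCLI]; simp
  exact LinearMap.congr_fun h x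

theorem xIb_K (b : G) (x : Lg) :
    bas.repr ⁅x, bas (I b)⁆ CLI = (((b:ℂ)) - (b:ℂ)^3)/12 * bas.repr x (L (-b)) := by
  have h : coeff bas CLI ∘ₗ rmul (bas (I b)) = ((((b:ℂ)) - (b:ℂ)^3)/12) • coeff bas (L (-b)) := by
    refine Module.Basis.ext bas fun i => ?_
    cases i with
    | L a =>
      show bas.repr ⁅bas (L a), bas (I b)⁆ CLI = (((b:ℂ)) - (b:ℂ)^3)/12 * bas.repr (bas (L a)) (L (-b))
      rw [hLI a b]
      simp only [map_neg, map_add, map_smul, Finsupp.neg_apply, Finsupp.add_apply,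
        Finsupp.smul_apply, smul_eq_mul, Module.Basis.repr_self, Finsupp.single_apply,
        eq_sub_iff_add_eq, eq_neg_iff_add_eq_zero, L.injEq, I.injEq, reduceCtorEq,
        if_false, if_true, eq_self_iff_true, mul_zero, zero_mul, add_zero, zero_add, mul_one,
        neg_zero]
      split_ifs with h1
      · rw [show ((a:ℂ)) = -(b:ℂ) from by
          exact_mod_cast congrArg Subtype.val (eq_neg_of_add_eq_zero_left h1)]; ring
      · ring
    | I a =>
      show bas.repr ⁅bas (I a), bas (I b)⁆ CLI = (((b:ℂ)) - (b:ℂ)^3)/12 * bas.repr (bas (I a)) (L (-b))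
      rw [← lie_skew, hII b a]; simp [Finsupp.single_apply]
    | CL =>
      show bas.repr ⁅bas CL, bas (I b)⁆ CLI = (((b:ℂ)) - (b:ℂ)^3)/12 * bas.repr (bas CL) (L (-b))
      rw [hCL]; simp [Finsupp.single_apply]
    | CLI =>
      show bas.repr ⁅bas CLI, bas (I b)⁆ CLI = (((b:ℂ)) - (b:ℂ)^3)/12 * bas.repr (bas CLI) (L (-b))
      rw [hCLI]; simp [Finsupp.single_apply]
  exact LinearMap.congr_fun h x

theorem Lax_L (a c : G) (x : Lg) :
    bas.repr ⁅bas (L a), x⁆ (L c) = ((c:ℂ) - 2 * a) * bas.repr x (L (c - a)) := by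
  have h : coeff bas (L c) ∘ₗ lmul (bas (L a)) = (((c:ℂ) - 2 * a)) • coeff bas (L (c - a)) := by
    refine Module.Basis.ext bas fun i => ?_
    cases i with
    | L b =>
      show bas.repr ⁅bas (L a), bas (L b)⁆ (L c) = ((c:ℂ) - 2 * a) * bas.repr (bas (L b)) (L (c - a))
      rw [hLL a b, add_comm a b]
      simp only [map_neg, map_add, map_smul, Finsupp.neg_apply, Finsupp.add_apply,
        Finsupp.smul_apply, smul_eq_mul, Module.Basis.repr_self, Finsupp.single_apply,
        eq_sub_iff_add_eq, eq_neg_iff_add_eq_zero, L.injEq, I.injEq, reduceCtorEq,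
        if_false, if_true, eq_self_iff_true, mul_zero, zero_mul, add_zero, zero_add, mul_one,
        neg_zero]
      split_ifs with h1
      · rw [show ((c:ℂ)) = (b:ℂ) + a from by exact_mod_cast congrArg Subtype.val h1.symm]; ring
      · ring
    | I b =>
      show bas.repr ⁅bas (L a), bas (I b)⁆ (L c) = ((c:ℂ) - 2 * a) * bas.repr (bas (I b)) (L (c - a))
      rw [hLI a b]
      split_ifs <;> simp [Finsupp.single_apply]
    | CL =>
      show bas.repr ⁅bas (L a), bas CL⁆ (L c) = ((c:ℂ) - 2 * a) * bas.repr (bas CL) (L (c - a))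
      rw [← lie_skew, hCL]; simp [Finsupp.single_apply]
    | CLI =>
      show bas.repr ⁅bas (L a), bas CLI⁆ (L c) = ((c:ℂ) - 2 * a) * bas.repr (bas CLI) (L (c - a))
      rw [← lie_skew, hCLI]; simp [Finsupp.single_apply]
  exact LinearMap.congr_fun h x

theorem Lax_I (a c : G) (x : Lg) :
    bas.repr ⁅bas (L a), x⁆ (I c) = ((c:ℂ) - 2 * a) * bas.repr x (I (c - a)) := by
  have h : coeff bas (I c) ∘ₗ lmul (bas (L a)) = (((c:ℂ) - 2 * a)) • coeff bas (I (c - a)) := by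
    refine Module.Basis.ext bas fun i => ?_
    cases i with
    | L b =>
      show bas.repr ⁅bas (L a), bas (L b)⁆ (I c) = ((c:ℂ) - 2 * a) * bas.repr (bas (L b)) (I (c - a))
      rw [hLL a b]
      split_ifs <;> simp [Finsupp.single_apply]
    | I b =>
      show bas.repr ⁅bas (L a), bas (I b)⁆ (I c) = ((c:ℂ) - 2 * a) * bas.repr (bas (I b)) (I (c - a))
      rw [hLI a b, add_comm a b]
      simp only [map_neg, map_add, map_smul, Finsupp.neg_apply, Finsupp.add_apply,
        Finsupp.smul_apply, smul_eq_mul, Module.Basis.repr_self, Finsupp.single_apply,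
        eq_sub_iff_add_eq, eq_neg_iff_add_eq_zero, L.injEq, I.injEq, reduceCtorEq,
        if_false, if_true, eq_self_iff_true, mul_zero, zero_mul, add_zero, zero_add, mul_one,
        neg_zero]
      split_ifs with h1
      · rw [show ((c:ℂ)) = (b:ℂ) + a from by exact_mod_cast congrArg Subtype.val h1.symm]; ring
      · ring
    | CL =>
      show bas.repr ⁅bas (L a), bas CL⁆ (I c) = ((c:ℂ) - 2 * a) * bas.repr (bas CL) (I (c - a))
      rw [← lie_skew, hCL]; simp [Finsupp.single_apply]
    | CLI =>
      show bas.repr ⁅bas (L a), bas CLI⁆ (I c) = ((c:ℂ) - 2 * a) * bas.repr (bas CLI) (I (c - a))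
      rw [← lie_skew, hCLI]; simp [Finsupp.single_apply]
  exact LinearMap.congr_fun h x

theorem Lax_C (a : G) (x : Lg) :
    bas.repr ⁅bas (L a), x⁆ CL = (((a:ℂ))^3 - a)/12 * bas.repr x (L (-a)) := by
  have h : coeff bas CL ∘ₗ lmul (bas (L a)) = ((((a:ℂ))^3 - a)/12) • coeff bas (L (-a)) := by
    refine Module.Basis.ext bas fun i => ?_
    cases i with
    | L b =>
      show bas.repr ⁅bas (L a), bas (L b)⁆ CL = (((a:ℂ))^3 - a)/12 * bas.repr (bas (L b)) (L (-a))
      rw [hLL a b, add_comm a b]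
      simp only [map_neg, map_add, map_smul, Finsupp.neg_apply, Finsupp.add_apply,
        Finsupp.smul_apply, smul_eq_mul, Module.Basis.repr_self, Finsupp.single_apply,
        eq_sub_iff_add_eq, eq_neg_iff_add_eq_zero, L.injEq, I.injEq, reduceCtorEq,
        if_false, if_true, eq_self_iff_true, mul_zero, zero_mul, add_zero, zero_add, mul_one,
        neg_zero]
      split_ifs with h1
      · ring
      · ring
    | I b =>
      show bas.repr ⁅bas (L a), bas (I b)⁆ CL = (((a:ℂ))^3 - a)/12 * bas.repr (bas (I b)) (L (-a))
      rw [hLI a b]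
      split_ifs <;> simp [Finsupp.single_apply]
    | CL =>
      show bas.repr ⁅bas (L a), bas CL⁆ CL = (((a:ℂ))^3 - a)/12 * bas.repr (bas CL) (L (-a))
      rw [← lie_skew, hCL]; simp [Finsupp.single_apply]
    | CLI =>
      show bas.repr ⁅bas (L a), bas CLI⁆ CL = (((a:ℂ))^3 - a)/12 * bas.repr (bas CLI) (L (-a))
      rw [← lie_skew, hCLI]; simp [Finsupp.single_apply]
  exact LinearMap.congr_fun h x

theorem Lax_K (a : G) (x : Lg) :
    bas.repr ⁅bas (L a), x⁆ CLI = (((a:ℂ))^3 - a)/12 * bas.repr x (I (-a)) := by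
  have h : coeff bas CLI ∘ₗ lmul (bas (L a)) = ((((a:ℂ))^3 - a)/12) • coeff bas (I (-a)) := by
    refine Module.Basis.ext bas fun i => ?_
    cases i with
    | L b =>
      show bas.repr ⁅bas (L a), bas (L b)⁆ CLI = (((a:ℂ))^3 - a)/12 * bas.repr (bas (L b)) (I (-a))
      rw [hLL a b]
      split_ifs <;> simp [Finsupp.single_apply]
    | I b =>
      show bas.repr ⁅bas (L a), bas (I b)⁆ CLI = (((a:ℂ))^3 - a)/12 * bas.repr (bas (I b)) (I (-a))
      rw [hLI a b, add_comm a b]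
      simp only [map_neg, map_add, map_smul, Finsupp.neg_apply, Finsupp.add_apply,
        Finsupp.smul_apply, smul_eq_mul, Module.Basis.repr_self, Finsupp.single_apply,
        eq_sub_iff_add_eq, eq_neg_iff_add_eq_zero, L.injEq, I.injEq, reduceCtorEq,
        if_false, if_true, eq_self_iff_true, mul_zero, zero_mul, add_zero, zero_add, mul_one,
        neg_zero]
      split_ifs with h1
      · ring
      · ring
    | CL =>
      show bas.repr ⁅bas (L a), bas CL⁆ CLI = (((a:ℂ))^3 - a)/12 * bas.repr (bas CL) (I (-a))
      rw [← lie_skew, hCL]; simp [Finsupp.single_apply]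
    | CLI =>
      show bas.repr ⁅bas (L a), bas CLI⁆ CLI = (((a:ℂ))^3 - a)/12 * bas.repr (bas CLI) (I (-a))
      rw [← lie_skew, hCLI]; simp [Finsupp.single_apply]
  exact LinearMap.congr_fun h x

theorem Iax_I (a c : G) (x : Lg) :
    bas.repr ⁅bas (I a), x⁆ (I c) = ((c:ℂ) - 2 * a) * bas.repr x (L (c - a)) := by
  have h : coeff bas (I c) ∘ₗ lmul (bas (I a)) = (((c:ℂ) - 2 * a)) • coeff bas (L (c - a)) := by
    refine Module.Basis.ext bas fun i => ?_
    cases i with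
    | L b =>
      show bas.repr ⁅bas (I a), bas (L b)⁆ (I c) = ((c:ℂ) - 2 * a) * bas.repr (bas (L b)) (L (c - a))
      rw [← lie_skew, hLI b a]
      simp only [map_neg, map_add, map_smul, Finsupp.neg_apply, Finsupp.add_apply,
        Finsupp.smul_apply, smul_eq_mul, Module.Basis.repr_self, Finsupp.single_apply,
        eq_sub_iff_add_eq, eq_neg_iff_add_eq_zero, L.injEq, I.injEq, reduceCtorEq,
        if_false, if_true, eq_self_iff_true, mul_zero, zero_mul, add_zero, zero_add, mul_one,
        neg_zero]
      split_ifs with h1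
      · rw [show ((c:ℂ)) = (b:ℂ) + a from by exact_mod_cast congrArg Subtype.val h1.symm]; ring
      · ring
    | I b =>
      show bas.repr ⁅bas (I a), bas (I b)⁆ (I c) = ((c:ℂ) - 2 * a) * bas.repr (bas (I b)) (L (c - a))
      rw [hII a b]; simp [Finsupp.single_apply]
    | CL =>
      show bas.repr ⁅bas (I a), bas CL⁆ (I c) = ((c:ℂ) - 2 * a) * bas.repr (bas CL) (L (c - a))
      rw [← lie_skew, hCL]; simp [Finsupp.single_apply]
    | CLI =>
      show bas.repr ⁅bas (I a), bas CLI⁆ (I c) = ((c:ℂ) - 2 * a) * bas.repr (bas CLI) (L (c - a))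
      rw [← lie_skew, hCLI]; simp [Finsupp.single_apply]
  exact LinearMap.congr_fun h x

theorem Iax_K (a : G) (x : Lg) :
    bas.repr ⁅bas (I a), x⁆ CLI = (((a:ℂ))^3 - a)/12 * bas.repr x (L (-a)) := by
  have h : coeff bas CLI ∘ₗ lmul (bas (I a)) = ((((a:ℂ))^3 - a)/12) • coeff bas (L (-a)) := by
    refine Module.Basis.ext bas fun i => ?_
    cases i with
    | L b =>
      show bas.repr ⁅bas (I a), bas (L b)⁆ CLI = (((a:ℂ))^3 - a)/12 * bas.repr (bas (L b)) (L (-a))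
      rw [← lie_skew, hLI b a]
      simp only [map_neg, map_add, map_smul, Finsupp.neg_apply, Finsupp.add_apply,
        Finsupp.smul_apply, smul_eq_mul, Module.Basis.repr_self, Finsupp.single_apply,
        eq_sub_iff_add_eq, eq_neg_iff_add_eq_zero, L.injEq, I.injEq, reduceCtorEq,
        if_false, if_true, eq_self_iff_true, mul_zero, zero_mul, add_zero, zero_add, mul_one,
        neg_zero]
      split_ifs with h1
      · rw [show ((b:ℂ)) = -(a:ℂ) from by
          exact_mod_cast congrArg Subtype.val (eq_neg_of_add_eq_zero_left h1)]; ring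
      · ring
    | I b =>
      show bas.repr ⁅bas (I a), bas (I b)⁆ CLI = (((a:ℂ))^3 - a)/12 * bas.repr (bas (I b)) (L (-a))
      rw [hII a b]; simp [Finsupp.single_apply]
    | CL =>
      show bas.repr ⁅bas (I a), bas CL⁆ CLI = (((a:ℂ))^3 - a)/12 * bas.repr (bas CL) (L (-a))
      rw [← lie_skew, hCL]; simp [Finsupp.single_apply]
    | CLI =>
      show bas.repr ⁅bas (I a), bas CLI⁆ CLI = (((a:ℂ))^3 - a)/12 * bas.repr (bas CLI) (L (-a))
      rw [← lie_skew, hCLI]; simp [Finsupp.single_apply]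
  exact LinearMap.congr_fun h x


theorem exists_avoid (a0 : G) (ha0 : (a0:ℂ) ≠ 0) (s : Finset ℂ) :
    ∃ b : G, (b:ℂ) ≠ 0 ∧ ∀ u ∈ s, (b:ℂ) ≠ u := by
  by_contra hcon
  push_neg at hcon
  have hmem : ∀ n : ℕ, ((n+1 : ℕ) : ℂ) * a0 ∈ s := by
    intro n
    have hb : (((n+1) • a0 : G) : ℂ) = ((n+1 : ℕ) : ℂ) * a0 := by
      push_cast [AddSubmonoidClass.coe_nsmul]
      ring
    have hne : (((n+1) • a0 : G) : ℂ) ≠ 0 := by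
      rw [hb]; exact mul_ne_zero (Nat.cast_ne_zero.mpr n.succ_ne_zero) ha0
    obtain ⟨u, hu, he⟩ := hcon _ hne
    rw [hb] at he
    exact he ▸ hu
  have hinj : Set.InjOn (fun n : ℕ => ((n+1 : ℕ) : ℂ) * a0) ↑(Finset.range (s.card + 1)) := by
    intro m _ n _ h
    have h2 : ((m+1:ℕ):ℂ) = ((n+1:ℕ):ℂ) := mul_right_cancel₀ ha0 h
    have h3 : m + 1 = n + 1 := by exact_mod_cast h2
    omega
  have hcard := Finset.card_le_card_of_injOn _ (fun n _ => hmem n) hinj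
  simp only [Finset.card_range] at hcard
  omega

set_option maxHeartbeats 4000000 in
theorem half (a0 : G) (ha0 : (a0:ℂ) ≠ 0)
    (φ : Lg →ₗ[ℂ] Lg)
    (hφ : ∀ x y : Lg, (2:ℂ) • φ ⁅x, y⁆ = ⁅φ x, y⁆ + ⁅x, φ y⁆) :
    ∃ lam mu : ℂ,
      (∀ a : G, φ (bas (L a)) = lam • bas (L a) + mu • bas (I a)) ∧
      (∀ a : G, φ (bas (I a)) = lam • bas (I a)) ∧
      φ (bas CL) = lam • bas CL + mu • bas CLI ∧
      φ (bas CLI) = lam • bas CLI := by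
  classical
  -- coercion helper
  have coeinj : ∀ u v : G, (u:ℂ) = v → u = v := fun u v h => Subtype.coe_injective h
  have coe0 : ∀ u : G, (u:ℂ) = 0 → u = 0 := fun u h => coeinj u 0 (by simpa using h)
  -- Step 0: centrality of φ C, φ K
  have hφCL : ∀ y : Lg, ⁅φ (bas CL), y⁆ = 0 := by
    intro y
    have h := hφ (bas CL) y
    rw [hCL y, hCL (φ y)] at h
    simpa using h.symm
  have hφCLI : ∀ y : Lg, ⁅φ (bas CLI), y⁆ = 0 := by
    intro y
    have h := hφ (bas CLI) y
    rw [hCLI y, hCLI (φ y)] at h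
    simpa using h.symm
  have cen : ∀ v : Lg, (∀ y : Lg, ⁅v, y⁆ = 0) →
      (∀ c : G, bas.repr v (L c) = 0) ∧ (∀ c : G, bas.repr v (I c) = 0) := by
    intro v hv
    constructor
    · intro c
      obtain ⟨b, hb0, hbs⟩ := exists_avoid bas hLL hLI hII hCL hCLI a0 ha0 {(c:ℂ)}
      have hbc : (b:ℂ) ≠ (c:ℂ) := hbs _ (Finset.mem_singleton_self _)
      have h := xLb_L bas hLL hLI hII hCL hCLI b (c+b) v
      rw [hv (bas (L b)), show c + b - b = c from by abel] at h
      simp only [map_zero, Finsupp.coe_zero, Pi.zero_apply] at h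
      have h2 : (2*(b:ℂ) - ((c+b : G):ℂ)) ≠ 0 := by
        push_cast
        intro hh
        exact hbc (by linear_combination hh)
      exact ((mul_eq_zero.mp h.symm).resolve_left h2)
    · intro c
      obtain ⟨b, hb0, hbs⟩ := exists_avoid bas hLL hLI hII hCL hCLI a0 ha0 {(c:ℂ)}
      have hbc : (b:ℂ) ≠ (c:ℂ) := hbs _ (Finset.mem_singleton_self _)
      have h := xLb_I bas hLL hLI hII hCL hCLI b (c+b) v
      rw [hv (bas (L b)), show c + b - b = c from by abel] at h
      simp only [map_zero, Finsupp.coe_zero, Pi.zero_apply] at h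
      have h2 : (2*(b:ℂ) - ((c+b : G):ℂ)) ≠ 0 := by
        push_cast
        intro hh
        exact hbc (by linear_combination hh)
      exact ((mul_eq_zero.mp h.symm).resolve_left h2)
  obtain ⟨PCLL, PCLI'⟩ := cen (φ (bas CL)) hφCL
  obtain ⟨PKL, PKI⟩ := cen (φ (bas CLI)) hφCLI

  -- master equations
  have E1L : ∀ a b c : G,
      2*(((b:ℂ) - a) * bas.repr (φ (bas (L (a+b)))) (L c)) =
        (2*(b:ℂ) - c) * bas.repr (φ (bas (L a))) (L (c - b)) +
        ((c:ℂ) - 2*a) * bas.repr (φ (bas (L b))) (L (c - a)) := by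
    intro a b c
    have h0 := hφ (bas (L a)) (bas (L b))
    rw [hLL a b] at h0
    have h := congrArg (fun v => bas.repr v (L c)) h0
    simp only [map_smul, map_add, Finsupp.smul_apply, Finsupp.add_apply, smul_eq_mul] at h
    rw [xLb_L bas hLL hLI hII hCL hCLI b c (φ (bas (L a))),
        Lax_L bas hLL hLI hII hCL hCLI a c (φ (bas (L b))), PCLL c] at h
    linear_combination h
  have E1I : ∀ a b c : G,
      2*(((b:ℂ) - a) * bas.repr (φ (bas (L (a+b)))) (I c)) =
        (2*(b:ℂ) - c) * bas.repr (φ (bas (L a))) (I (c - b)) +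
        ((c:ℂ) - 2*a) * bas.repr (φ (bas (L b))) (I (c - a)) := by
    intro a b c
    have h0 := hφ (bas (L a)) (bas (L b))
    rw [hLL a b] at h0
    have h := congrArg (fun v => bas.repr v (I c)) h0
    simp only [map_smul, map_add, Finsupp.smul_apply, Finsupp.add_apply, smul_eq_mul] at h
    rw [xLb_I bas hLL hLI hII hCL hCLI b c (φ (bas (L a))),
        Lax_I bas hLL hLI hII hCL hCLI a c (φ (bas (L b))), PCLI' c] at h
    linear_combination h
  have E1C : ∀ a b : G,
      2*(((b:ℂ) - a) * bas.repr (φ (bas (L (a+b)))) CL +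
        (if a + b = 0 then ((a:ℂ)^3 - a)/12 else 0) * bas.repr (φ (bas CL)) CL) =
        ((b:ℂ) - (b:ℂ)^3)/12 * bas.repr (φ (bas (L a))) (L (-b)) +
        ((a:ℂ)^3 - a)/12 * bas.repr (φ (bas (L b))) (L (-a)) := by
    intro a b
    have h0 := hφ (bas (L a)) (bas (L b))
    rw [hLL a b] at h0
    have h := congrArg (fun v => bas.repr v CL) h0
    simp only [map_smul, map_add, Finsupp.smul_apply, Finsupp.add_apply, smul_eq_mul] at h
    rw [xLb_C bas hLL hLI hII hCL hCLI b (φ (bas (L a))),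
        Lax_C bas hLL hLI hII hCL hCLI a (φ (bas (L b)))] at h
    linear_combination h
  have E1K : ∀ a b : G,
      2*(((b:ℂ) - a) * bas.repr (φ (bas (L (a+b)))) CLI +
        (if a + b = 0 then ((a:ℂ)^3 - a)/12 else 0) * bas.repr (φ (bas CL)) CLI) =
        ((b:ℂ) - (b:ℂ)^3)/12 * bas.repr (φ (bas (L a))) (I (-b)) +
        ((a:ℂ)^3 - a)/12 * bas.repr (φ (bas (L b))) (I (-a)) := by
    intro a b
    have h0 := hφ (bas (L a)) (bas (L b))
    rw [hLL a b] at h0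
    have h := congrArg (fun v => bas.repr v CLI) h0
    simp only [map_smul, map_add, Finsupp.smul_apply, Finsupp.add_apply, smul_eq_mul] at h
    rw [xLb_K bas hLL hLI hII hCL hCLI b (φ (bas (L a))),
        Lax_K bas hLL hLI hII hCL hCLI a (φ (bas (L b)))] at h
    linear_combination h
  have E2L : ∀ a b c : G,
      2*(((b:ℂ) - a) * bas.repr (φ (bas (I (a+b)))) (L c)) =
        ((c:ℂ) - 2*a) * bas.repr (φ (bas (I b))) (L (c - a)) := by
    intro a b c
    have h0 := hφ (bas (L a)) (bas (I b))
    rw [hLI a b] at h0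
    have h := congrArg (fun v => bas.repr v (L c)) h0
    simp only [map_smul, map_add, Finsupp.smul_apply, Finsupp.add_apply, smul_eq_mul] at h
    rw [xIb_L bas hLL hLI hII hCL hCLI b c (φ (bas (L a))),
        Lax_L bas hLL hLI hII hCL hCLI a c (φ (bas (I b))), PKL c] at h
    linear_combination h
  have E2I : ∀ a b c : G,
      2*(((b:ℂ) - a) * bas.repr (φ (bas (I (a+b)))) (I c)) =
        (2*(b:ℂ) - c) * bas.repr (φ (bas (L a))) (L (c - b)) +
        ((c:ℂ) - 2*a) * bas.repr (φ (bas (I b))) (I (c - a)) := by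
    intro a b c
    have h0 := hφ (bas (L a)) (bas (I b))
    rw [hLI a b] at h0
    have h := congrArg (fun v => bas.repr v (I c)) h0
    simp only [map_smul, map_add, Finsupp.smul_apply, Finsupp.add_apply, smul_eq_mul] at h
    rw [xIb_I bas hLL hLI hII hCL hCLI b c (φ (bas (L a))),
        Lax_I bas hLL hLI hII hCL hCLI a c (φ (bas (I b))), PKI c] at h
    linear_combination h
  have E2C : ∀ a b : G,
      2*(((b:ℂ) - a) * bas.repr (φ (bas (I (a+b)))) CL +
        (if a + b = 0 then ((a:ℂ)^3 - a)/12 else 0) * bas.repr (φ (bas CLI)) CL) =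
        ((a:ℂ)^3 - a)/12 * bas.repr (φ (bas (I b))) (L (-a)) := by
    intro a b
    have h0 := hφ (bas (L a)) (bas (I b))
    rw [hLI a b] at h0
    have h := congrArg (fun v => bas.repr v CL) h0
    simp only [map_smul, map_add, Finsupp.smul_apply, Finsupp.add_apply, smul_eq_mul] at h
    rw [xIb_C bas hLL hLI hII hCL hCLI b (φ (bas (L a))),
        Lax_C bas hLL hLI hII hCL hCLI a (φ (bas (I b)))] at h
    linear_combination h
  have E2K : ∀ a b : G,
      2*(((b:ℂ) - a) * bas.repr (φ (bas (I (a+b)))) CLI +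
        (if a + b = 0 then ((a:ℂ)^3 - a)/12 else 0) * bas.repr (φ (bas CLI)) CLI) =
        ((b:ℂ) - (b:ℂ)^3)/12 * bas.repr (φ (bas (L a))) (L (-b)) +
        ((a:ℂ)^3 - a)/12 * bas.repr (φ (bas (I b))) (I (-a)) := by
    intro a b
    have h0 := hφ (bas (L a)) (bas (I b))
    rw [hLI a b] at h0
    have h := congrArg (fun v => bas.repr v CLI) h0
    simp only [map_smul, map_add, Finsupp.smul_apply, Finsupp.add_apply, smul_eq_mul] at h
    rw [xIb_K bas hLL hLI hII hCL hCLI b (φ (bas (L a))),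
        Lax_K bas hLL hLI hII hCL hCLI a (φ (bas (I b)))] at h
    linear_combination h
  have E3I : ∀ a b c : G,
      0 = (2*(b:ℂ) - c) * bas.repr (φ (bas (I a))) (L (c - b)) +
        ((c:ℂ) - 2*a) * bas.repr (φ (bas (I b))) (L (c - a)) := by
    intro a b c
    have h0 := hφ (bas (I a)) (bas (I b))
    rw [hII a b] at h0
    have h := congrArg (fun v => bas.repr v (I c)) h0
    simp only [map_smul, map_add, map_zero, smul_zero, Finsupp.add_apply,
      Finsupp.coe_zero, Pi.zero_apply] at h
    rw [xIb_I bas hLL hLI hII hCL hCLI b c (φ (bas (I a))),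
        Iax_I bas hLL hLI hII hCL hCLI a c (φ (bas (I b)))] at h
    linear_combination h
  have E3K : ∀ a b : G,
      0 = ((b:ℂ) - (b:ℂ)^3)/12 * bas.repr (φ (bas (I a))) (L (-b)) +
        ((a:ℂ)^3 - a)/12 * bas.repr (φ (bas (I b))) (L (-a)) := by
    intro a b
    have h0 := hφ (bas (I a)) (bas (I b))
    rw [hII a b] at h0
    have h := congrArg (fun v => bas.repr v CLI) h0
    simp only [map_smul, map_add, map_zero, smul_zero, Finsupp.add_apply,
      Finsupp.coe_zero, Pi.zero_apply] at h
    rw [xIb_K bas hLL hLI hII hCL hCLI b (φ (bas (I a))),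
        Iax_K bas hLL hLI hII hCL hCLI a (φ (bas (I b)))] at h
    linear_combination h

  -- a = 0 specializations
  have hA : ∀ b c : G, (c:ℂ) ≠ 2*b → bas.repr (φ (bas (L b))) (L c)
      = bas.repr (φ (bas (L 0))) (L (c - b)) := by
    intro b c hc
    have e := E1L 0 b c
    rw [zero_add, sub_zero] at e
    push_cast at e
    have h2 : 2*(b:ℂ) - c ≠ 0 := sub_ne_zero.mpr (fun hh => hc hh.symm)
    apply mul_left_cancel₀ h2
    linear_combination e
  have hB : ∀ b c : G, (c:ℂ) ≠ 2*b → bas.repr (φ (bas (L b))) (I c)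
      = bas.repr (φ (bas (L 0))) (I (c - b)) := by
    intro b c hc
    have e := E1I 0 b c
    rw [zero_add, sub_zero] at e
    push_cast at e
    have h2 : 2*(b:ℂ) - c ≠ 0 := sub_ne_zero.mpr (fun hh => hc hh.symm)
    apply mul_left_cancel₀ h2
    linear_combination e
  have hA' : ∀ b c : G, (c:ℂ) ≠ 2*b → bas.repr (φ (bas (I b))) (L c) = 0 := by
    intro b c hc
    have e := E2L 0 b c
    rw [zero_add, sub_zero] at e
    push_cast at e
    have h2 : 2*(b:ℂ) - c ≠ 0 := sub_ne_zero.mpr (fun hh => hc hh.symm)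
    have h3 : (2*(b:ℂ) - c) * bas.repr (φ (bas (I b))) (L c) = 0 := by linear_combination e
    exact (mul_eq_zero.mp h3).resolve_left h2
  have hB' : ∀ b c : G, (c:ℂ) ≠ 2*b → bas.repr (φ (bas (I b))) (I c)
      = bas.repr (φ (bas (L 0))) (L (c - b)) := by
    intro b c hc
    have e := E2I 0 b c
    rw [zero_add, sub_zero] at e
    push_cast at e
    have h2 : 2*(b:ℂ) - c ≠ 0 := sub_ne_zero.mpr (fun hh => hc hh.symm)
    apply mul_left_cancel₀ h2
    linear_combination e
  have hcL : ∀ b : G, 2*(b:ℂ) * bas.repr (φ (bas (L b))) CL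
      = ((b:ℂ) - (b:ℂ)^3)/12 * bas.repr (φ (bas (L 0))) (L (-b)) := by
    intro b
    by_cases hb : b = (0:G)
    · subst hb; push_cast; norm_num
    · have e := E1C 0 b
      rw [zero_add, if_neg hb] at e
      push_cast at e
      linear_combination e
  have hcK : ∀ b : G, 2*(b:ℂ) * bas.repr (φ (bas (L b))) CLI
      = ((b:ℂ) - (b:ℂ)^3)/12 * bas.repr (φ (bas (L 0))) (I (-b)) := by
    intro b
    by_cases hb : b = (0:G)
    · subst hb; push_cast; norm_num
    · have e := E1K 0 b
      rw [zero_add, if_neg hb] at e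
      push_cast at e
      linear_combination e
  have hdL : ∀ b : G, 2*(b:ℂ) * bas.repr (φ (bas (I b))) CL = 0 := by
    intro b
    by_cases hb : b = (0:G)
    · subst hb; push_cast; norm_num
    · have e := E2C 0 b
      rw [zero_add, if_neg hb] at e
      push_cast at e
      linear_combination e
  have hdK : ∀ b : G, 2*(b:ℂ) * bas.repr (φ (bas (I b))) CLI
      = ((b:ℂ) - (b:ℂ)^3)/12 * bas.repr (φ (bas (L 0))) (L (-b)) := by
    intro b
    by_cases hb : b = (0:G)
    · subst hb; push_cast; norm_num
    · have e := E2K 0 b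
      rw [zero_add, if_neg hb] at e
      push_cast at e
      linear_combination e
  -- no L-components in φ(I a)
  have hA'full : ∀ a c : G, bas.repr (φ (bas (I a))) (L c) = 0 := by
    intro a c
    by_cases hc : (c:ℂ) = 2*a
    · have hc' : c = a + a := coeinj _ _ (by push_cast; linear_combination hc)
      subst hc'
      obtain ⟨b, hb0, hbs⟩ := exists_avoid bas hLL hLI hII hCL hCLI a0 ha0 {(a:ℂ), 2*(a:ℂ)}
      have hba : (b:ℂ) ≠ a := hbs _ (by simp)
      have hb2a : (b:ℂ) ≠ 2*a := hbs _ (by simp)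
      have e := E3I a b (a+a+b)
      rw [show a+a+b-b = a+a from by abel, show a+a+b-a = a+b from by abel] at e
      rw [hA' b (a+b) (by push_cast; intro hh; exact hba (by linear_combination -hh))] at e
      push_cast at e
      have h3 : (2*(b:ℂ) - ((a:ℂ)+a+b)) * bas.repr (φ (bas (I a))) (L (a+a)) = 0 := by
        linear_combination -e
      have h2 : (2*(b:ℂ) - ((a:ℂ)+a+b)) ≠ 0 := fun hh => hb2a (by linear_combination hh)
      exact (mul_eq_zero.mp h3).resolve_left h2
    · exact hA' a c hc
  -- vanishing of p_e, e ≠ 0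
  have hp : ∀ e : G, (e:ℂ) ≠ 0 → bas.repr (φ (bas (L 0))) (L e) = 0 := by
    intro e he
    obtain ⟨a, hA0, has⟩ := exists_avoid bas hLL hLI hII hCL hCLI a0 ha0
      {-(e:ℂ), -(e:ℂ)/2, (e:ℂ), -2*(e:ℂ)}
    set b : G := -e - a with hbdef
    have hcoeb : (b:ℂ) = -(e:ℂ) - a := by rw [hbdef]; push_cast; ring
    have hane : (a:ℂ) ≠ -(e:ℂ) := has _ (by simp)
    have ha2 : (a:ℂ) ≠ -(e:ℂ)/2 := has _ (by simp)
    have ha3 : (a:ℂ) ≠ (e:ℂ) := has _ (by simp)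
    have ha4 : (a:ℂ) ≠ -2*(e:ℂ) := has _ (by simp)
    have hab : a + b = -e := by rw [hbdef]; abel
    have hnab : ¬ (a + b = 0) := by
      intro hh
      rw [hab] at hh
      have := congrArg (Subtype.val) hh
      push_cast at this
      exact he (by linear_combination -this)
    have e1 := E1C a b
    rw [if_neg hnab] at e1
    rw [hA a (-b) (by push_cast; rw [hcoeb]; intro hh; exact ha3 (by linear_combination -hh))] at e1
    rw [hA b (-a) (by push_cast; rw [hcoeb]; intro hh; exact ha4 (by linear_combination hh))] at e1
    rw [show -b - a = e from by rw [hbdef]; abel, show -a - b = e from by rw [hbdef]; abel] at e1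
    have e2 := hcL (a + b)
    rw [show -(a+b) = e from by rw [hab]; abel] at e2
    push_cast at e1 e2
    have hfin : ((a:ℂ)*b*((b:ℂ)-a)*((a:ℂ)+b))/12 * bas.repr (φ (bas (L 0))) (L e) = 0 := by
      linear_combination ((b:ℂ)-a) * e2 - ((a:ℂ)+b) * e1
    have hbne : (b:ℂ) ≠ 0 := by rw [hcoeb]; intro hh; exact hane (by linear_combination -hh)
    have hdiff : (b:ℂ) - a ≠ 0 := by
      rw [hcoeb]; intro hh; exact ha2 (by linear_combination -hh/2)
    have hsum : (a:ℂ) + b ≠ 0 := by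
      rw [hcoeb]; intro hh; exact he (by linear_combination -hh)
    have hne2 : ((a:ℂ)*b*((b:ℂ)-a)*((a:ℂ)+b))/12 ≠ 0 := by
      apply div_ne_zero _ (by norm_num)
      exact mul_ne_zero (mul_ne_zero (mul_ne_zero hA0 hbne) hdiff) hsum
    exact (mul_eq_zero.mp hfin).resolve_left hne2
  have hq : ∀ e : G, (e:ℂ) ≠ 0 → bas.repr (φ (bas (L 0))) (I e) = 0 := by
    intro e he
    obtain ⟨a, hA0, has⟩ := exists_avoid bas hLL hLI hII hCL hCLI a0 ha0
      {-(e:ℂ), -(e:ℂ)/2, (e:ℂ), -2*(e:ℂ)}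
    set b : G := -e - a with hbdef
    have hcoeb : (b:ℂ) = -(e:ℂ) - a := by rw [hbdef]; push_cast; ring
    have hane : (a:ℂ) ≠ -(e:ℂ) := has _ (by simp)
    have ha2 : (a:ℂ) ≠ -(e:ℂ)/2 := has _ (by simp)
    have ha3 : (a:ℂ) ≠ (e:ℂ) := has _ (by simp)
    have ha4 : (a:ℂ) ≠ -2*(e:ℂ) := has _ (by simp)
    have hab : a + b = -e := by rw [hbdef]; abel
    have hnab : ¬ (a + b = 0) := by
      intro hh
      rw [hab] at hh
      have := congrArg (Subtype.val) hh
      push_cast at this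
      exact he (by linear_combination -this)
    have e1 := E1K a b
    rw [if_neg hnab] at e1
    rw [hB a (-b) (by push_cast; rw [hcoeb]; intro hh; exact ha3 (by linear_combination -hh))] at e1
    rw [hB b (-a) (by push_cast; rw [hcoeb]; intro hh; exact ha4 (by linear_combination hh))] at e1
    rw [show -b - a = e from by rw [hbdef]; abel, show -a - b = e from by rw [hbdef]; abel] at e1
    have e2 := hcK (a + b)
    rw [show -(a+b) = e from by rw [hab]; abel] at e2
    push_cast at e1 e2
    have hfin : ((a:ℂ)*b*((b:ℂ)-a)*((a:ℂ)+b))/12 * bas.repr (φ (bas (L 0))) (I e) = 0 := by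
      linear_combination ((b:ℂ)-a) * e2 - ((a:ℂ)+b) * e1
    have hbne : (b:ℂ) ≠ 0 := by rw [hcoeb]; intro hh; exact hane (by linear_combination -hh)
    have hdiff : (b:ℂ) - a ≠ 0 := by
      rw [hcoeb]; intro hh; exact ha2 (by linear_combination -hh/2)
    have hsum : (a:ℂ) + b ≠ 0 := by
      rw [hcoeb]; intro hh; exact he (by linear_combination -hh)
    have hne2 : ((a:ℂ)*b*((b:ℂ)-a)*((a:ℂ)+b))/12 ≠ 0 := by
      apply div_ne_zero _ (by norm_num)
      exact mul_ne_zero (mul_ne_zero (mul_ne_zero hA0 hbne) hdiff) hsum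
    exact (mul_eq_zero.mp hfin).resolve_left hne2

  set lam : ℂ := bas.repr (φ (bas (L 0))) (L 0) with hlam
  set mu : ℂ := bas.repr (φ (bas (L 0))) (I 0) with hmu
  have hA2b : ∀ b : G, (b:ℂ) ≠ 0 → bas.repr (φ (bas (L b))) (L (b+b)) = 0 := by
    intro b hb
    obtain ⟨t, ht0, hts⟩ := exists_avoid bas hLL hLI hII hCL hCLI a0 ha0 {(b:ℂ), 2*(b:ℂ)}
    have htb : (t:ℂ) ≠ b := hts _ (by simp)
    have ht2b : (t:ℂ) ≠ 2*b := hts _ (by simp)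
    have e := E1L t b (t+b+b)
    rw [show t+b+b-b = t+b from by abel, show t+b+b-t = b+b from by abel] at e
    rw [hA (t+b) (t+b+b) (by push_cast; intro hh; exact ht0 (by linear_combination -hh))] at e
    rw [show t+b+b - (t+b) = b from by abel] at e
    rw [hA t (t+b) (by push_cast; intro hh; exact htb (by linear_combination -hh))] at e
    rw [show t+b - t = b from by abel] at e
    rw [hp b hb] at e
    push_cast at e
    have h3 : (((t:ℂ)+b+b) - 2*t) * bas.repr (φ (bas (L b))) (L (b+b)) = 0 := by
      linear_combination -e
    have h2 : (((t:ℂ)+b+b) - 2*t) ≠ 0 := fun hh => ht2b (by linear_combination -hh)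
    exact (mul_eq_zero.mp h3).resolve_left h2
  have hB2b : ∀ b : G, (b:ℂ) ≠ 0 → bas.repr (φ (bas (L b))) (I (b+b)) = 0 := by
    intro b hb
    obtain ⟨t, ht0, hts⟩ := exists_avoid bas hLL hLI hII hCL hCLI a0 ha0 {(b:ℂ), 2*(b:ℂ)}
    have htb : (t:ℂ) ≠ b := hts _ (by simp)
    have ht2b : (t:ℂ) ≠ 2*b := hts _ (by simp)
    have e := E1I t b (t+b+b)
    rw [show t+b+b-b = t+b from by abel, show t+b+b-t = b+b from by abel] at e
    rw [hB (t+b) (t+b+b) (by push_cast; intro hh; exact ht0 (by linear_combination -hh))] at e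
    rw [show t+b+b - (t+b) = b from by abel] at e
    rw [hB t (t+b) (by push_cast; intro hh; exact htb (by linear_combination -hh))] at e
    rw [show t+b - t = b from by abel] at e
    rw [hq b hb] at e
    push_cast at e
    have h3 : (((t:ℂ)+b+b) - 2*t) * bas.repr (φ (bas (L b))) (I (b+b)) = 0 := by
      linear_combination -e
    have h2 : (((t:ℂ)+b+b) - 2*t) ≠ 0 := fun hh => ht2b (by linear_combination -hh)
    exact (mul_eq_zero.mp h3).resolve_left h2
  have hB'2b : ∀ b : G, (b:ℂ) ≠ 0 → bas.repr (φ (bas (I b))) (I (b+b)) = 0 := by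
    intro b hb
    obtain ⟨t, ht0, hts⟩ := exists_avoid bas hLL hLI hII hCL hCLI a0 ha0 {(b:ℂ), 2*(b:ℂ)}
    have htb : (t:ℂ) ≠ b := hts _ (by simp)
    have ht2b : (t:ℂ) ≠ 2*b := hts _ (by simp)
    have e := E2I t b (t+b+b)
    rw [show t+b+b-b = t+b from by abel, show t+b+b-t = b+b from by abel] at e
    rw [hB' (t+b) (t+b+b) (by push_cast; intro hh; exact ht0 (by linear_combination -hh))] at e
    rw [show t+b+b - (t+b) = b from by abel] at e
    rw [hA t (t+b) (by push_cast; intro hh; exact htb (by linear_combination -hh))] at e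
    rw [show t+b - t = b from by abel] at e
    rw [hp b hb] at e
    push_cast at e
    have h3 : (((t:ℂ)+b+b) - 2*t) * bas.repr (φ (bas (I b))) (I (b+b)) = 0 := by
      linear_combination -e
    have h2 : (((t:ℂ)+b+b) - 2*t) ≠ 0 := fun hh => ht2b (by linear_combination -hh)
    exact (mul_eq_zero.mp h3).resolve_left h2
  have hAeqd : ∀ a c : G, a ≠ c → bas.repr (φ (bas (L a))) (L c) = 0 := by
    intro a c hac
    by_cases hc : (c:ℂ) = 2*a
    · have ha' : (a:ℂ) ≠ 0 := by
        intro h0; exact hac (coeinj a c (by rw [hc, h0]; ring))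
      have hc' : c = a + a := coeinj _ _ (by push_cast; linear_combination hc)
      subst hc'
      exact hA2b a ha'
    · rw [hA a c hc]
      apply hp
      intro h0; apply hac; apply coeinj
      push_cast at h0
      linear_combination -h0
  have hAeq : ∀ a : G, bas.repr (φ (bas (L a))) (L a) = lam := by
    intro a
    by_cases ha' : (a:ℂ) = 0
    · rw [coe0 a ha']
    · rw [hA a a (fun hh => ha' (by linear_combination -hh)), sub_self]
  have hBeqd : ∀ a c : G, a ≠ c → bas.repr (φ (bas (L a))) (I c) = 0 := by
    intro a c hac
    by_cases hc : (c:ℂ) = 2*a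
    · have ha' : (a:ℂ) ≠ 0 := by
        intro h0; exact hac (coeinj a c (by rw [hc, h0]; ring))
      have hc' : c = a + a := coeinj _ _ (by push_cast; linear_combination hc)
      subst hc'
      exact hB2b a ha'
    · rw [hB a c hc]
      apply hq
      intro h0; apply hac; apply coeinj
      push_cast at h0
      linear_combination -h0
  have hBeq : ∀ a : G, bas.repr (φ (bas (L a))) (I a) = mu := by
    intro a
    by_cases ha' : (a:ℂ) = 0
    · rw [coe0 a ha']
    · rw [hB a a (fun hh => ha' (by linear_combination -hh)), sub_self]
  have hB'eqd : ∀ a c : G, a ≠ c → bas.repr (φ (bas (I a))) (I c) = 0 := by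
    intro a c hac
    by_cases hc : (c:ℂ) = 2*a
    · have ha' : (a:ℂ) ≠ 0 := by
        intro h0; exact hac (coeinj a c (by rw [hc, h0]; ring))
      have hc' : c = a + a := coeinj _ _ (by push_cast; linear_combination hc)
      subst hc'
      exact hB'2b a ha'
    · rw [hB' a c hc]
      apply hp
      intro h0; apply hac; apply coeinj
      push_cast at h0
      linear_combination -h0
  have hB'ne : ∀ b : G, (b:ℂ) ≠ 0 → bas.repr (φ (bas (I b))) (I b) = lam := by
    intro b hb
    rw [hB' b b (fun hh => hb (by linear_combination -hh)), sub_self]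
  have hB'eq : ∀ a : G, bas.repr (φ (bas (I a))) (I a) = lam := by
    intro a
    by_cases ha' : (a:ℂ) = 0
    · rw [coe0 a ha']
      have e := E2I (-a0) a0 0
      rw [show -a0 + a0 = (0:G) from by abel, show (0:G) - a0 = -a0 from by abel,
          show (0:G) - -a0 = a0 from by abel] at e
      rw [hAeq (-a0), hB'ne a0 ha0] at e
      push_cast at e
      have h4 : (4*(a0:ℂ)) * (bas.repr (φ (bas (I 0))) (I 0) - lam) = 0 := by
        linear_combination e
      have h5 := (mul_eq_zero.mp h4).resolve_left
        (by intro hh; exact ha0 (by linear_combination hh/4))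
      exact sub_eq_zero.mp h5
    · exact hB'ne a ha'

  -- central columns
  have eC : ∀ u : G, (u:ℂ) ≠ 0 →
      2*((-(u:ℂ) - u) * bas.repr (φ (bas (L 0))) CL
        + ((u:ℂ)^3 - u)/12 * bas.repr (φ (bas CL)) CL)
      = ((u:ℂ)^3 - u)/6 * lam := by
    intro u hu
    have e := E1C u (-u)
    rw [show u + -u = (0:G) from by abel, if_pos rfl, neg_neg] at e
    rw [hAeq u, hAeq (-u)] at e
    push_cast at e
    linear_combination e
  have hg1 : bas.repr (φ (bas CL)) CL = lam := by
    have e1 := eC a0 ha0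
    have e2 := eC (a0+a0) (by push_cast; intro hh; exact ha0 (by linear_combination hh/2))
    push_cast at e2
    have h4 : ((a0:ℂ)^3) * (bas.repr (φ (bas CL)) CL - lam) = 0 := by
      linear_combination (-2)*e1 + e2
    exact sub_eq_zero.mp ((mul_eq_zero.mp h4).resolve_left (pow_ne_zero 3 ha0))
  have hL0CL : bas.repr (φ (bas (L 0))) CL = 0 := by
    have e1 := eC a0 ha0
    have h4 : (-4*(a0:ℂ)) * bas.repr (φ (bas (L 0))) CL = 0 := by
      linear_combination e1 - (((a0:ℂ)^3 - a0)/6) * hg1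
    exact (mul_eq_zero.mp h4).resolve_left
      (by intro hh; exact ha0 (by linear_combination -hh/4))
  have PLaCL : ∀ a : G, bas.repr (φ (bas (L a))) CL = 0 := by
    intro a
    by_cases ha' : (a:ℂ) = 0
    · rw [coe0 a ha']; exact hL0CL
    · have e := hcL a
      rw [hp (-a) (by push_cast; intro hh; exact ha' (by linear_combination -hh))] at e
      have h4 : (2*(a:ℂ)) * bas.repr (φ (bas (L a))) CL = 0 := by linear_combination e
      exact (mul_eq_zero.mp h4).resolve_left
        (by intro hh; exact ha' (by linear_combination hh/2))
  have eK : ∀ u : G, (u:ℂ) ≠ 0 →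
      2*((-(u:ℂ) - u) * bas.repr (φ (bas (L 0))) CLI
        + ((u:ℂ)^3 - u)/12 * bas.repr (φ (bas CL)) CLI)
      = ((u:ℂ)^3 - u)/6 * mu := by
    intro u hu
    have e := E1K u (-u)
    rw [show u + -u = (0:G) from by abel, if_pos rfl, neg_neg] at e
    rw [hBeq u, hBeq (-u)] at e
    push_cast at e
    linear_combination e
  have hg2 : bas.repr (φ (bas CL)) CLI = mu := by
    have e1 := eK a0 ha0
    have e2 := eK (a0+a0) (by push_cast; intro hh; exact ha0 (by linear_combination hh/2))
    push_cast at e2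
    have h4 : ((a0:ℂ)^3) * (bas.repr (φ (bas CL)) CLI - mu) = 0 := by
      linear_combination (-2)*e1 + e2
    exact sub_eq_zero.mp ((mul_eq_zero.mp h4).resolve_left (pow_ne_zero 3 ha0))
  have hL0CLI : bas.repr (φ (bas (L 0))) CLI = 0 := by
    have e1 := eK a0 ha0
    have h4 : (-4*(a0:ℂ)) * bas.repr (φ (bas (L 0))) CLI = 0 := by
      linear_combination e1 - (((a0:ℂ)^3 - a0)/6) * hg2
    exact (mul_eq_zero.mp h4).resolve_left
      (by intro hh; exact ha0 (by linear_combination -hh/4))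
  have PLaCLI : ∀ a : G, bas.repr (φ (bas (L a))) CLI = 0 := by
    intro a
    by_cases ha' : (a:ℂ) = 0
    · rw [coe0 a ha']; exact hL0CLI
    · have e := hcK a
      rw [hq (-a) (by push_cast; intro hh; exact ha' (by linear_combination -hh))] at e
      have h4 : (2*(a:ℂ)) * bas.repr (φ (bas (L a))) CLI = 0 := by linear_combination e
      exact (mul_eq_zero.mp h4).resolve_left
        (by intro hh; exact ha' (by linear_combination hh/2))
  have eCI : ∀ u : G, (u:ℂ) ≠ 0 →
      2*((-(u:ℂ) - u) * bas.repr (φ (bas (I 0))) CL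
        + ((u:ℂ)^3 - u)/12 * bas.repr (φ (bas CLI)) CL) = 0 := by
    intro u hu
    have e := E2C u (-u)
    rw [show u + -u = (0:G) from by abel, if_pos rfl] at e
    rw [hA'full (-u) (-u)] at e
    push_cast at e
    linear_combination e
  have hg3 : bas.repr (φ (bas CLI)) CL = 0 := by
    have e1 := eCI a0 ha0
    have e2 := eCI (a0+a0) (by push_cast; intro hh; exact ha0 (by linear_combination hh/2))
    push_cast at e2
    have h4 : ((a0:ℂ)^3) * bas.repr (φ (bas CLI)) CL = 0 := by
      linear_combination (-2)*e1 + e2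
    exact (mul_eq_zero.mp h4).resolve_left (pow_ne_zero 3 ha0)
  have hI0CL : bas.repr (φ (bas (I 0))) CL = 0 := by
    have e1 := eCI a0 ha0
    rw [hg3] at e1
    have h4 : (-4*(a0:ℂ)) * bas.repr (φ (bas (I 0))) CL = 0 := by linear_combination e1
    exact (mul_eq_zero.mp h4).resolve_left
      (by intro hh; exact ha0 (by linear_combination -hh/4))
  have PIaCL : ∀ a : G, bas.repr (φ (bas (I a))) CL = 0 := by
    intro a
    by_cases ha' : (a:ℂ) = 0
    · rw [coe0 a ha']; exact hI0CL
    · have e := hdL a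
      have h4 : (2*(a:ℂ)) * bas.repr (φ (bas (I a))) CL = 0 := by linear_combination e
      exact (mul_eq_zero.mp h4).resolve_left
        (by intro hh; exact ha' (by linear_combination hh/2))
  have eKI : ∀ u : G, (u:ℂ) ≠ 0 →
      2*((-(u:ℂ) - u) * bas.repr (φ (bas (I 0))) CLI
        + ((u:ℂ)^3 - u)/12 * bas.repr (φ (bas CLI)) CLI)
      = ((u:ℂ)^3 - u)/6 * lam := by
    intro u hu
    have e := E2K u (-u)
    rw [show u + -u = (0:G) from by abel, if_pos rfl, neg_neg] at e
    rw [hAeq u, hB'eq (-u)] at e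
    push_cast at e
    linear_combination e
  have hg4 : bas.repr (φ (bas CLI)) CLI = lam := by
    have e1 := eKI a0 ha0
    have e2 := eKI (a0+a0) (by push_cast; intro hh; exact ha0 (by linear_combination hh/2))
    push_cast at e2
    have h4 : ((a0:ℂ)^3) * (bas.repr (φ (bas CLI)) CLI - lam) = 0 := by
      linear_combination (-2)*e1 + e2
    exact sub_eq_zero.mp ((mul_eq_zero.mp h4).resolve_left (pow_ne_zero 3 ha0))
  have hI0CLI : bas.repr (φ (bas (I 0))) CLI = 0 := by
    have e1 := eKI a0 ha0
    have h4 : (-4*(a0:ℂ)) * bas.repr (φ (bas (I 0))) CLI = 0 := by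
      linear_combination e1 - (((a0:ℂ)^3 - a0)/6) * hg4
    exact (mul_eq_zero.mp h4).resolve_left
      (by intro hh; exact ha0 (by linear_combination -hh/4))
  have PIaCLI : ∀ a : G, bas.repr (φ (bas (I a))) CLI = 0 := by
    intro a
    by_cases ha' : (a:ℂ) = 0
    · rw [coe0 a ha']; exact hI0CLI
    · have e := hdK a
      rw [hp (-a) (by push_cast; intro hh; exact ha' (by linear_combination -hh))] at e
      have h4 : (2*(a:ℂ)) * bas.repr (φ (bas (I a))) CLI = 0 := by linear_combination e
      exact (mul_eq_zero.mp h4).resolve_left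
        (by intro hh; exact ha' (by linear_combination hh/2))
  -- assembly
  refine ⟨lam, mu, ?_, ?_, ?_, ?_⟩
  · intro a
    apply bas.repr.injective
    ext j
    simp only [map_add, map_smul, Module.Basis.repr_self, Finsupp.add_apply, Finsupp.smul_apply,
      smul_eq_mul, Finsupp.single_apply]
    cases j with
    | L c =>
      by_cases hac : a = c
      · subst hac; rw [hAeq a]; simp
      · rw [hAeqd a c hac]; simp [hac]
    | I c =>
      by_cases hac : a = c
      · subst hac; rw [hBeq a]; simp
      · rw [hBeqd a c hac]; simp [hac]
    | CL => rw [PLaCL a]; simp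
    | CLI => rw [PLaCLI a]; simp
  · intro a
    apply bas.repr.injective
    ext j
    simp only [map_smul, Module.Basis.repr_self, Finsupp.smul_apply, smul_eq_mul, Finsupp.single_apply]
    cases j with
    | L c => rw [hA'full a c]; simp
    | I c =>
      by_cases hac : a = c
      · subst hac; rw [hB'eq a]; simp
      · rw [hB'eqd a c hac]; simp [hac]
    | CL => rw [PIaCL a]; simp
    | CLI => rw [PIaCLI a]; simp
  · apply bas.repr.injective
    ext j
    simp only [map_add, map_smul, Module.Basis.repr_self, Finsupp.add_apply, Finsupp.smul_apply,
      smul_eq_mul, Finsupp.single_apply]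
    cases j with
    | L c => rw [PCLL c]; simp
    | I c => rw [PCLI' c]; simp
    | CL => rw [hg1]; simp
    | CLI => rw [hg2]; simp
  · apply bas.repr.injective
    ext j
    simp only [map_smul, Module.Basis.repr_self, Finsupp.smul_apply, smul_eq_mul, Finsupp.single_apply]
    cases j with
    | L c => rw [PKL c]; simp
    | I c => rw [PKI c]; simp
    | CL => rw [hg3]; simp
    | CLI => rw [hg4]; simp

end DGHVproof

/-- every transposed Poisson structure on `g(G, 1)` is
trivial. -/
theorem transposedPoisson_dgHV_one_trivial
    (G : AddSubgroup ℂ) [Nontrivial G]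
    (Lg : Type*) [LieRing Lg] [LieAlgebra ℂ Lg]
    (bas : Module.Basis (DGHV1Idx G) ℂ Lg)
    (hLL : ∀ a b : G, ⁅bas (DGHV1Idx.L a), bas (DGHV1Idx.L b)⁆ =
      ((b : ℂ) - (a : ℂ)) • bas (DGHV1Idx.L (a + b)) +
        (if a + b = 0 then ((a : ℂ) ^ 3 - (a : ℂ)) / 12 else 0) •
          bas DGHV1Idx.CL)
    (hLI : ∀ a b : G, ⁅bas (DGHV1Idx.L a), bas (DGHV1Idx.I b)⁆ =
      ((b : ℂ) - (a : ℂ)) • bas (DGHV1Idx.I (a + b)) +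
        (if a + b = 0 then ((a : ℂ) ^ 3 - (a : ℂ)) / 12 else 0) •
          bas DGHV1Idx.CLI)
    (hII : ∀ a b : G, ⁅bas (DGHV1Idx.I a), bas (DGHV1Idx.I b)⁆ = 0)
    (hCL : ∀ x : Lg, ⁅bas DGHV1Idx.CL, x⁆ = 0)
    (hCLI : ∀ x : Lg, ⁅bas DGHV1Idx.CLI, x⁆ = 0)
    (mul : Lg →ₗ[ℂ] Lg →ₗ[ℂ] Lg)
    (hcomm : ∀ x y : Lg, mul x y = mul y x)
    (hassoc : ∀ x y z : Lg, mul (mul x y) z = mul x (mul y z))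
    (hcompat : ∀ x y z : Lg,
      (2 : ℂ) • mul z ⁅x, y⁆ = ⁅mul z x, y⁆ + ⁅x, mul z y⁆) :
    mul = 0 := by
  classical
  obtain ⟨g0, hg0⟩ := exists_ne (0 : G)
  have ha0 : ((g0:ℂ)) ≠ 0 := fun h => hg0 (Subtype.coe_injective (by simpa using h))
  have H : ∀ k : DGHV1Idx G, ∃ lam mu : ℂ,
      (∀ a : G, mul (bas k) (bas (DGHV1Idx.L a))
        = lam • bas (DGHV1Idx.L a) + mu • bas (DGHV1Idx.I a)) ∧
      (∀ a : G, mul (bas k) (bas (DGHV1Idx.I a)) = lam • bas (DGHV1Idx.I a)) ∧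
      mul (bas k) (bas DGHV1Idx.CL) = lam • bas DGHV1Idx.CL + mu • bas DGHV1Idx.CLI ∧
      mul (bas k) (bas DGHV1Idx.CLI) = lam • bas DGHV1Idx.CLI :=
    fun k => DGHVproof.half bas hLL hLI hII hCL hCLI g0 ha0 (mul (bas k))
      (fun x y => hcompat x y (bas k))
  choose lam mu hL hI hC hK using H
  have hlamL : ∀ a : G, lam (DGHV1Idx.L a) = 0 := by
    intro a
    have h := hcomm (bas (DGHV1Idx.L a)) (bas DGHV1Idx.CL)
    rw [hC (DGHV1Idx.L a), hL DGHV1Idx.CL a] at h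
    have h1 := congrArg (fun v => bas.repr v DGHV1Idx.CL) h
    simpa [Finsupp.single_apply] using h1
  have hmuL : ∀ a : G, mu (DGHV1Idx.L a) = 0 := by
    intro a
    have h := hcomm (bas (DGHV1Idx.L a)) (bas DGHV1Idx.CL)
    rw [hC (DGHV1Idx.L a), hL DGHV1Idx.CL a] at h
    have h1 := congrArg (fun v => bas.repr v DGHV1Idx.CLI) h
    simpa [Finsupp.single_apply] using h1
  have hlamCL : lam DGHV1Idx.CL = 0 := by
    have h := hcomm (bas (DGHV1Idx.L 0)) (bas DGHV1Idx.CL)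
    rw [hC (DGHV1Idx.L 0), hL DGHV1Idx.CL 0] at h
    have h1 := congrArg (fun v => bas.repr v (DGHV1Idx.L 0)) h
    simpa [Finsupp.single_apply] using h1.symm
  have hmuCL : mu DGHV1Idx.CL = 0 := by
    have h := hcomm (bas (DGHV1Idx.L 0)) (bas DGHV1Idx.CL)
    rw [hC (DGHV1Idx.L 0), hL DGHV1Idx.CL 0] at h
    have h1 := congrArg (fun v => bas.repr v (DGHV1Idx.I 0)) h
    simpa [Finsupp.single_apply] using h1.symm
  have hlamI : ∀ a : G, lam (DGHV1Idx.I a) = 0 := by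
    intro a
    have h := hcomm (bas (DGHV1Idx.I a)) (bas DGHV1Idx.CL)
    rw [hC (DGHV1Idx.I a), hI DGHV1Idx.CL a] at h
    have h1 := congrArg (fun v => bas.repr v DGHV1Idx.CL) h
    simpa [Finsupp.single_apply] using h1
  have hmuI : ∀ a : G, mu (DGHV1Idx.I a) = 0 := by
    intro a
    have h := hcomm (bas (DGHV1Idx.I a)) (bas DGHV1Idx.CL)
    rw [hC (DGHV1Idx.I a), hI DGHV1Idx.CL a] at h
    have h1 := congrArg (fun v => bas.repr v DGHV1Idx.CLI) h
    simpa [Finsupp.single_apply] using h1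
  have hlamCLI : lam DGHV1Idx.CLI = 0 := by
    have h := hcomm (bas DGHV1Idx.CLI) (bas (DGHV1Idx.L 0))
    rw [hL DGHV1Idx.CLI 0, hK (DGHV1Idx.L 0)] at h
    have h1 := congrArg (fun v => bas.repr v (DGHV1Idx.L 0)) h
    simpa [Finsupp.single_apply] using h1
  have hmuCLI : mu DGHV1Idx.CLI = 0 := by
    have h := hcomm (bas DGHV1Idx.CLI) (bas (DGHV1Idx.L 0))
    rw [hL DGHV1Idx.CLI 0, hK (DGHV1Idx.L 0)] at h
    have h1 := congrArg (fun v => bas.repr v (DGHV1Idx.I 0)) h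
    simpa [Finsupp.single_apply] using h1
  have hz : ∀ k i : DGHV1Idx G, mul (bas k) (bas i) = 0 := by
    intro k i
    have hlam : lam k = 0 := by cases k <;> simp [hlamL, hlamI, hlamCL, hlamCLI]
    have hmu : mu k = 0 := by cases k <;> simp [hmuL, hmuI, hmuCL, hmuCLI]
    cases i with
    | L a => rw [hL k a, hlam, hmu]; simp
    | I a => rw [hI k a, hlam]; simp
    | CL => rw [hC k, hlam, hmu]; simp
    | CLI => rw [hK k, hlam]; simp
  refine Module.Basis.ext bas fun k => ?_
  rw [LinearMap.zero_apply]
  refine Module.Basis.ext bas fun i => ?_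
  rw [LinearMap.zero_apply]
  exact hz k i
end
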